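/- arXiv:2504.01808 — 4 statements merged into one kernel-verified Lean document; each statement's English description precedes it below -/
import Mathlib

section
/- Let G be a simple graph of girth at least 5 with no odd hole of length at least 9, let C = v_1 v_2 ⋯ v_7 v_1 be a 7-hole of G, and let u be a vertex of G not on C that has a neighbor on C. Then either u has exactly one neighbor on C, or the set of neighbors of u on C equals {v_i, v_{i+3}} for some 1 ≤ i ≤ 7 (indices taken modulo 7). -/
open SimpleGraph

/-- `G` has an induced cycle of length `n` (a hole, when `n ≥ 4`). -/

lemma noTriangle' {V : Type*} (G : SimpleGraph V) (hgirth : (5 : ℕ∞) ≤ G.egirth)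
    {a b c : V} (hab : G.Adj a b) (hbc : G.Adj b c) (hca : G.Adj c a) : False := by
  let w : G.Walk a a := .cons hab (.cons hbc (.cons hca .nil))
  have hc : w.IsCycle := by
    simp [w, Walk.isCycle_def, Walk.isTrail_def, hab.ne, hbc.ne, hca.ne, hab.ne',
      hbc.ne', hca.ne', Sym2.eq, Sym2.rel_iff']
  have := le_egirth.mp hgirth a w hc
  simp only [w, Walk.length_cons, Walk.length_nil] at this
  norm_num at this

lemma noSquare' {V : Type*} (G : SimpleGraph V) (hgirth : (5 : ℕ∞) ≤ G.egirth)
    {a b c d : V} (hac : a ≠ c) (hbd : b ≠ d) (hab : G.Adj a b) (hbc : G.Adj b c)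
    (hcd : G.Adj c d) (hda : G.Adj d a) : False := by
  let w : G.Walk a a := .cons hab (.cons hbc (.cons hcd (.cons hda .nil)))
  have hc : w.IsCycle := by
    simp [w, Walk.isCycle_def, Walk.isTrail_def, hab.ne, hbc.ne, hcd.ne, hda.ne, hab.ne',
      hbc.ne', hcd.ne', hda.ne', hac, hbd, hac.symm, hbd.symm, Sym2.eq, Sym2.rel_iff']
  have := le_egirth.mp hgirth a w hc
  simp only [w, Walk.length_cons, Walk.length_nil] at this
  norm_num at this

lemma key {V : Type*} (G : SimpleGraph V) (hgirth : (5 : ℕ∞) ≤ G.egirth)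
    (v : Fin 7 → V) (hinj : Function.Injective v)
    (hcyc : ∀ i : Fin 7, G.Adj (v i) (v (i + 1)))
    (u : V) (hu : ∀ i : Fin 7, u ≠ v i)
    {i j : Fin 7} (hi : G.Adj u (v i)) (hj : G.Adj u (v j)) (hij : i ≠ j) :
    j = i + 3 ∨ i = j + 3 := by
  obtain ⟨d, rfl⟩ : ∃ d, j = i + d := ⟨j - i, by abel⟩
  have hd : ∀ e : Fin 7, e = 0 ∨ e = 1 ∨ e = 2 ∨ e = 3 ∨ e = 4 ∨ e = 5 ∨ e = 6 := by decide
  rcases hd d with rfl | rfl | rfl | rfl | rfl | rfl | rfl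
  · exact absurd (add_zero i).symm hij
  · exact absurd (noTriangle' G hgirth hi (hcyc i) hj.symm) not_false
  · exact absurd (noSquare' G hgirth (hu (i+1)) (fun h => by
      simpa using hinj h) hi (hcyc i) (by simpa [add_assoc] using hcyc (i+1)) hj.symm) not_false
  · exact Or.inl rfl
  · exact Or.inr (by rw [add_assoc, show (4:Fin 7)+3 = 0 from rfl, add_zero])
  · exact absurd (noSquare' G hgirth (hu (i+6)) (fun h => by
      simpa using hinj h) hj (by simpa [add_assoc] using hcyc (i+5))
      (by simpa [add_assoc, show (5:Fin 7)+1+1 = 0 from rfl] using hcyc (i+6)) hi.symm)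
      not_false
  · exact absurd (noTriangle' G hgirth hj
      (by simpa [add_assoc, show (6:Fin 7)+1 = 0 from rfl] using hcyc (i+6)) hi.symm) not_false

lemma pair {V : Type*} (G : SimpleGraph V) (hgirth : (5 : ℕ∞) ≤ G.egirth)
    (v : Fin 7 → V) (hinj : Function.Injective v)
    (hcyc : ∀ i : Fin 7, G.Adj (v i) (v (i + 1)))
    (u : V) (hu : ∀ i : Fin 7, u ≠ v i)
    {i : Fin 7} (hi : G.Adj u (v i)) (hj : G.Adj u (v (i + 3))) :
    {k : Fin 7 | G.Adj u (v k)} = ({i, i + 3} : Set (Fin 7)) := by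
  apply Set.eq_of_subset_of_subset
  · intro k hk
    simp only [Set.mem_setOf_eq] at hk
    simp only [Set.mem_insert_iff, Set.mem_singleton_iff]
    by_contra hc
    push_neg at hc
    obtain ⟨hk1, hk2⟩ := hc
    obtain h4 | h4 := key G hgirth v hinj hcyc u hu hi hk (Ne.symm hk1)
    · exact hk2 h4
    have hk4 : k = i + 4 := by
      rw [h4, add_assoc, show (3:Fin 7)+4 = 0 from rfl, add_zero]
    obtain h5 | h5 := key G hgirth v hinj hcyc u hu hj hk (Ne.symm hk2)
    · rw [hk4, add_assoc] at h5
      exact absurd (add_left_cancel h5) (by decide)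
    · exact hk1 (add_right_cancel h5.symm)
  · rintro k (rfl | rfl)
    · exact hi
    · exact hj

def SimpleGraph.HasInducedCycle {V : Type*} (G : SimpleGraph V) (n : ℕ) : Prop :=
  ∃ (v : V) (w : G.Walk v v), w.IsCycle ∧ w.length = n ∧ w.toSubgraph.IsInduced

/-- In a graph of girth at least 5 with no odd hole of length at least 9, a vertex `u` not
on a 7-hole `v_0 v_1 ⋯ v_6 v_0` with a neighbour on the hole either has exactly one
neighbour on the hole, or its neighbours on the hole are exactly `{v_i, v_{i+3}}`
for some `i` (indices modulo 7). -/
theorem stmt_4 {V : Type*} [Fintype V] (G : SimpleGraph V)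
    (hgirth : (5 : ℕ∞) ≤ G.egirth)
    (hodd : ∀ n : ℕ, Odd n → 9 ≤ n → ¬ G.HasInducedCycle n)
    (v : Fin 7 → V) (hinj : Function.Injective v)
    (hcyc : ∀ i : Fin 7, G.Adj (v i) (v (i + 1)))
    (hind : ∀ i j : Fin 7, G.Adj (v i) (v j) → j = i + 1 ∨ i = j + 1)
    (u : V) (hu : ∀ i : Fin 7, u ≠ v i) (hadj : ∃ i : Fin 7, G.Adj u (v i)) :
    (∃! i : Fin 7, G.Adj u (v i)) ∨
      (∃ i : Fin 7, {j : Fin 7 | G.Adj u (v j)} = ({i, i + 3} : Set (Fin 7))) := by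
  obtain ⟨i, hi⟩ := hadj
  by_cases h : ∀ j : Fin 7, G.Adj u (v j) → j = i
  · exact Or.inl ⟨i, hi, h⟩
  push_neg at h
  obtain ⟨j, hj, hji⟩ := h
  obtain h3 | h3 := key G hgirth v hinj hcyc u hu hi hj (Ne.symm hji)
  · exact Or.inr ⟨i, pair G hgirth v hinj hcyc u hu hi (h3 ▸ hj)⟩
  · exact Or.inr ⟨j, pair G hgirth v hinj hcyc u hu hj (h3 ▸ hi)⟩
end

section
/- Let G be a simple graph of girth at least 5 with no odd hole of length at least 9, let (L_0, …, L_k) be a stable levelling of G, and let H be an induced subgraph of G[L_k]. Then for every z ∈ V(H), χ(H[N_H^2(z)]) ≤ 2. -/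
open SimpleGraph

namespace StmtAux

def listFn {V : Type*} (l : List V) (d : V) : ℕ → V := fun i => l.getD i d


variable {V : Type*} {G : SimpleGraph V}

def chainWalk (G : SimpleGraph V) (f : ℕ → V) :
    (n : ℕ) → (∀ i, i < n → G.Adj (f i) (f (i+1))) → G.Walk (f 0) (f n)
  | 0, _ => Walk.nil
  | (n+1), h => (chainWalk G f n (fun i hi => h i (Nat.lt_succ_of_lt hi))).concat
      (h n n.lt_succ_self)

lemma chainWalk_length (f : ℕ → V) (n : ℕ) (h) : (chainWalk G f n h).length = n := by
  induction n with
  | zero => rfl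
  | succ n ih => simp [chainWalk, ih]

lemma chainWalk_support (f : ℕ → V) (n : ℕ) (h) :
    (chainWalk G f n h).support = (List.range (n+1)).map f := by
  induction n with
  | zero => rfl
  | succ n ih =>
    simp only [chainWalk, Walk.support_concat, ih, List.range_succ (n := n+1)]
    simp

lemma chainWalk_edges (f : ℕ → V) (n : ℕ) (h) :
    (chainWalk G f n h).edges = (List.range n).map (fun i => s(f i, f (i+1))) := by
  induction n with
  | zero => rfl
  | succ n ih =>
    simp only [chainWalk, Walk.edges_concat, ih, List.range_succ (n := n)]
    simp

lemma exists_cycle_of_fn (f : ℕ → V) (n : ℕ) (hn : 3 ≤ n)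
    (hadj : ∀ i, i < n → G.Adj (f i) (f (i+1)))
    (hcl : f n = f 0)
    (hinj : ∀ a, a < n → ∀ b, b < n → f a = f b → a = b) :
    ∃ (w : G.Walk (f 0) (f 0)), w.IsCycle ∧ w.length = n ∧
      w.support = (List.range (n+1)).map f ∧
      w.edges = (List.range n).map (fun i => s(f i, f (i+1))) := by
  have key : ∀ a, a ≤ n → ∀ b, b ≤ n → f a = f b →
      a = b ∨ (a = 0 ∧ b = n) ∨ (a = n ∧ b = 0) := by
    intro a ha b hb hab
    rcases Nat.lt_or_ge a n with ha' | ha'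
    · rcases Nat.lt_or_ge b n with hb' | hb'
      · exact Or.inl (hinj a ha' b hb' hab)
      · have hbn : b = n := le_antisymm hb hb'
        have : a = 0 := hinj a ha' 0 (by omega) (by rw [hab, hbn, hcl])
        exact Or.inr (Or.inl ⟨this, hbn⟩)
    · have han : a = n := le_antisymm ha ha'
      rcases Nat.lt_or_ge b n with hb' | hb'
      · have : b = 0 := hinj b hb' 0 (by omega) (by rw [← hab, han, hcl])
        exact Or.inr (Or.inr ⟨han, this⟩)
      · exact Or.inl (by omega)
  refine ⟨(chainWalk G f n hadj).copy rfl hcl, ?_, ?_, ?_, ?_⟩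
  · constructor
    · constructor
      · constructor
        rw [Walk.edges_copy, chainWalk_edges]
        refine List.Nodup.map_on ?_ List.nodup_range
        intro a hha b hhb hab
        simp only [List.mem_range] at hha hhb
        rw [Sym2.eq_iff] at hab
        rcases hab with ⟨h1, h2⟩ | ⟨h1, h2⟩
        · rcases key a (by omega) b (by omega) h1 with h | h | h <;> omega
        · rcases key a (by omega) (b+1) (by omega) h1 with h | h | h <;>
            rcases key (a+1) (by omega) b (by omega) h2 with h' | h' | h' <;> omega
      · intro hnil
        have : ((chainWalk G f n hadj).copy rfl hcl).length = 0 := by rw [hnil]; rfl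
        rw [Walk.length_copy, chainWalk_length] at this
        omega
    · rw [Walk.support_copy, chainWalk_support]
      have : (List.range (n+1)).tail = List.map (· + 1) (List.range n) := by
        rw [List.range_succ_eq_map]
        rfl
      rw [← List.map_tail, this, List.map_map]
      refine List.Nodup.map_on ?_ List.nodup_range
      intro a hha b hhb hab
      simp only [List.mem_range] at hha hhb
      simp only [Function.comp] at hab
      rcases key (a+1) (by omega) (b+1) (by omega) hab with h | h | h <;> omega
  · rw [Walk.length_copy, chainWalk_length]
  · rw [Walk.support_copy, chainWalk_support]
  · rw [Walk.edges_copy, chainWalk_edges]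

lemma cycle_length_ge (hg : (5:ℕ∞) ≤ G.egirth) {u : V} (w : G.Walk u u)
    (hc : w.IsCycle) : 5 ≤ w.length := by
  have h := le_egirth.mp hg _ w hc
  exact_mod_cast h

lemma no_tri (hg : (5:ℕ∞) ≤ G.egirth) {a b c : V}
    (hab : G.Adj a b) (hbc : G.Adj b c) (hca : G.Adj c a) : False := by
  classical
  have hab' := hab.ne
  have hbc' := hbc.ne
  have hca' := hca.ne
  let f : ℕ → V := listFn [a, b, c] a
  have hadj : ∀ i, i < 3 → G.Adj (f i) (f (i+1)) := by
    intro i hi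
    interval_cases i
    · exact hab
    · exact hbc
    · exact hca
  have hcl : f 3 = f 0 := rfl
  have hinj : ∀ x, x < 3 → ∀ y, y < 3 → f x = f y → x = y := by
    intro x hx y hy hxy
    interval_cases x <;> interval_cases y <;>
      first
      | rfl
      | (exfalso; revert hxy; simp [f, listFn]; tauto)
  obtain ⟨w, hcyc, hlen, -, -⟩ := exists_cycle_of_fn f 3 (by norm_num) hadj hcl hinj
  have := cycle_length_ge hg w hcyc
  omega

lemma no_c4 (hg : (5:ℕ∞) ≤ G.egirth) {a b c d : V}
    (hab : G.Adj a b) (hbc : G.Adj b c) (hcd : G.Adj c d) (hda : G.Adj d a)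
    (hac : a ≠ c) (hbd : b ≠ d) : False := by
  classical
  have hab' := hab.ne
  have hbc' := hbc.ne
  have hcd' := hcd.ne
  have hda' := hda.ne
  let f : ℕ → V := listFn [a, b, c, d] a
  have hadj : ∀ i, i < 4 → G.Adj (f i) (f (i+1)) := by
    intro i hi
    interval_cases i
    · exact hab
    · exact hbc
    · exact hcd
    · exact hda
  have hcl : f 4 = f 0 := rfl
  have hinj : ∀ x, x < 4 → ∀ y, y < 4 → f x = f y → x = y := by
    intro x hx y hy hxy
    interval_cases x <;> interval_cases y <;>
      first
      | rfl
      | (exfalso; revert hxy; simp [f, listFn]; tauto)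
  obtain ⟨w, hcyc, hlen, -, -⟩ := exists_cycle_of_fn f 4 (by norm_num) hadj hcl hinj
  have := cycle_length_ge hg w hcyc
  omega

lemma hasInducedCycle_of_fn (f : ℕ → V) (n : ℕ) (hn : 3 ≤ n)
    (hadj : ∀ i, i < n → G.Adj (f i) (f (i+1)))
    (hcl : f n = f 0)
    (hinj : ∀ a, a < n → ∀ b, b < n → f a = f b → a = b)
    (hind : ∀ a, a < n → ∀ b, b < n → G.Adj (f a) (f b) →
      b = a + 1 ∨ a = b + 1 ∨ (a = 0 ∧ b = n - 1) ∨ (b = 0 ∧ a = n - 1)) :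
    G.HasInducedCycle n := by
  obtain ⟨w, hcyc, hlen, hsupp, hedges⟩ := exists_cycle_of_fn f n hn hadj hcl hinj
  refine ⟨f 0, w, hcyc, hlen, ?_⟩
  intro u hu v hv huv
  rw [Walk.mem_verts_toSubgraph, hsupp, List.mem_map] at hu hv
  obtain ⟨a, ha, rfl⟩ := hu
  obtain ⟨b, hb, rfl⟩ := hv
  rw [List.mem_range] at ha hb
  have norm : ∀ x, x < n + 1 → ∃ x', x' < n ∧ f x' = f x := by
    intro x hx
    by_cases h : x = n
    · exact ⟨0, by omega, by rw [h, hcl]⟩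
    · exact ⟨x, by omega, rfl⟩
  obtain ⟨a', ha', hfa⟩ := norm a ha
  obtain ⟨b', hb', hfb⟩ := norm b hb
  rw [← hfa, ← hfb] at huv ⊢
  have hmem : ∀ i, i < n → w.toSubgraph.Adj (f i) (f (i+1)) := by
    intro i hi
    rw [← Subgraph.mem_edgeSet, Walk.mem_edges_toSubgraph, hedges, List.mem_map]
    exact ⟨i, List.mem_range.mpr hi, rfl⟩
  have hn1 : n - 1 + 1 = n := by omega
  rcases hind a' ha' b' hb' huv with h | h | ⟨h1, h2⟩ | ⟨h1, h2⟩
  · rw [h]; exact hmem a' ha'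
  · rw [h]; exact (hmem b' hb').symm
  · subst h1; subst h2
    have := hmem (n-1) (by omega)
    rw [hn1, hcl] at this
    exact this.symm
  · subst h1; subst h2
    have := hmem (n-1) (by omega)
    rw [hn1, hcl] at this
    exact this

section CW

variable {W : Type*} (Γ : SimpleGraph W)

/-- a closed walk given as a function -/
def IsCW (f : ℕ → W) (n : ℕ) : Prop :=
  (∀ i, i < n → Γ.Adj (f i) (f (i+1))) ∧ f n = f 0

lemma colorable_of_no_odd_cw (h : ∀ (f : ℕ → W) (n : ℕ), IsCW Γ f n → ¬ Odd n) :
    Γ.Colorable 2 := by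
  classical
  refine ⟨Coloring.mk
    (fun v => ⟨Γ.dist (Γ.connectedComponentMk v).out v % 2, Nat.mod_lt _ two_pos⟩) ?_⟩
  intro u v huv hcol
  have hcomp : Γ.connectedComponentMk u = Γ.connectedComponentMk v :=
    ConnectedComponent.sound huv.reachable
  set r := (Γ.connectedComponentMk u).out with hr
  have hru : Γ.Reachable r u := by
    have := (Γ.connectedComponentMk u).out_eq
    exact (ConnectedComponent.eq.mp this)
  have hrv : Γ.Reachable r v := hru.trans huv.reachable
  obtain ⟨w1, hw1⟩ := hru.exists_walk_length_eq_dist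
  obtain ⟨w2, hw2⟩ := hrv.exists_walk_length_eq_dist
  set d1 := Γ.dist r u with hd1
  set d2 := Γ.dist r v with hd2
  set D := d1 + 1 + d2 with hD
  set F : ℕ → W := fun i => if i ≤ d1 then w1.getVert i else w2.getVert (D - i) with hF
  have hcw : IsCW Γ F D := by
    constructor
    · intro i hi
      rcases Nat.lt_trichotomy i d1 with h1 | h1 | h1
      · have e1 : F i = w1.getVert i := if_pos (by omega)
        have e2 : F (i+1) = w1.getVert (i+1) := if_pos (by omega)
        rw [e1, e2]
        exact w1.adj_getVert_succ (by omega)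
      · have e1 : F i = w1.getVert w1.length := by
          rw [hF]; simp only [if_pos (le_of_eq h1)]; rw [h1, hw1]
        have e2 : F (i+1) = w2.getVert w2.length := by
          rw [hF]; simp only [if_neg (by omega : ¬ i + 1 ≤ d1)]
          congr 1
          omega
        rw [e1, e2, Walk.getVert_length, Walk.getVert_length]
        exact huv
      · have e1 : F i = w2.getVert (D - i) := if_neg (by omega)
        have e2 : F (i+1) = w2.getVert (D - (i+1)) := if_neg (by omega)
        rw [e1, e2]
        have hlt : D - (i+1) < w2.length := by omega
        have := w2.adj_getVert_succ hlt
        have e3 : D - (i+1) + 1 = D - i := by omega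
        rw [e3] at this
        exact this.symm
    · have e1 : F D = w2.getVert 0 := by
        rw [hF]; simp only [if_neg (by omega : ¬ D ≤ d1)]
        congr 1
        omega
      have e2 : F 0 = w1.getVert 0 := if_pos (by omega)
      rw [e1, e2, Walk.getVert_zero, Walk.getVert_zero]
  have hpar : ¬ Odd D := h F D hcw
  have : d1 % 2 = d2 % 2 := by
    have : (⟨d1 % 2, Nat.mod_lt _ two_pos⟩ : Fin 2) = ⟨d2 % 2, Nat.mod_lt _ two_pos⟩ := by
      convert hcol using 2
      rw [hd2, hr, hcomp]
    exact congrArg Fin.val this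
  simp only [Nat.odd_iff] at hpar
  omega

lemma exists_min_odd_cw (hnc : ¬ Γ.Colorable 2) :
    ∃ (m : ℕ) (F : ℕ → W), IsCW Γ F m ∧ Odd m ∧
      (∀ (m' : ℕ) (F' : ℕ → W), IsCW Γ F' m' → Odd m' → m ≤ m') := by
  classical
  have hex : ∃ m : ℕ, ∃ F : ℕ → W, IsCW Γ F m ∧ Odd m := by
    by_contra hcon
    push_neg at hcon
    exact hnc (colorable_of_no_odd_cw Γ (fun f n hf ho => hcon n f hf ho))
  haveI : DecidablePred (fun m : ℕ => ∃ F : ℕ → W, IsCW Γ F m ∧ Odd m) :=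
    Classical.decPred _
  obtain ⟨F, hF, hodd⟩ := Nat.find_spec hex
  refine ⟨Nat.find hex, F, hF, hodd, ?_⟩
  intro m' F' h1 h2
  exact Nat.find_min' hex ⟨F', h1, h2⟩

variable {Γ}

lemma min_cw_inj {F : ℕ → W} {m : ℕ} (hcw : IsCW Γ F m) (hodd : Odd m)
    (hmin : ∀ (m' : ℕ) (F' : ℕ → W), IsCW Γ F' m' → Odd m' → m ≤ m')
    {a b : ℕ} (hab : a < b) (hbm : b ≤ m) (hne : ¬(a = 0 ∧ b = m)) : F a ≠ F b := by
  intro heq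
  obtain ⟨hadj, hcl⟩ := hcw
  have hcw1 : IsCW Γ (fun i => F (a + i)) (b - a) := by
    constructor
    · intro i hi
      show Γ.Adj (F (a + i)) (F (a + (i+1)))
      have e : a + (i+1) = (a+i)+1 := by omega
      rw [e]
      exact hadj (a+i) (by omega)
    · show F (a + (b-a)) = F (a+0)
      have e : a + (b-a) = b := by omega
      have e2 : a + 0 = a := by omega
      rw [e, e2, ← heq]
  have hcw2 : IsCW Γ (fun i => if i ≤ a then F i else F (i + (b-a))) (m - (b-a)) := by
    constructor
    · intro i hi
      show Γ.Adj (if i ≤ a then F i else F (i + (b-a)))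
        (if i + 1 ≤ a then F (i+1) else F (i+1 + (b-a)))
      split_ifs with h1 h2 h2
      · exact hadj i (by omega)
      · have h1' : i = a := by omega
        rw [h1']
        have e : a + 1 + (b - a) = b + 1 := by omega
        rw [e, heq]
        exact hadj b (by omega)
      · omega
      · have e : i + 1 + (b-a) = (i + (b-a)) + 1 := by omega
        rw [e]
        exact hadj (i + (b-a)) (by omega)
    · show (if m - (b-a) ≤ a then F (m - (b-a)) else F (m - (b-a) + (b-a))) =
        (if 0 ≤ a then F 0 else F (0 + (b-a)))
      split_ifs with h1 h2 h2
      · have hbm' : b = m := by omega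
        have e : m - (b - a) = a := by omega
        rw [e, heq, hbm', hcl]
      · omega
      · have e : m - (b-a) + (b-a) = m := by omega
        rw [e, hcl]
      · omega
  have hpar : Odd (b - a) ∨ Odd (m - (b - a)) := by
    rw [Nat.odd_iff] at hodd ⊢
    rw [Nat.odd_iff]
    omega
  rcases hpar with hp | hp
  · have := hmin _ _ hcw1 hp
    omega
  · have := hmin _ _ hcw2 hp
    omega

lemma min_cw_chord {F : ℕ → W} {m : ℕ} (hcw : IsCW Γ F m) (hodd : Odd m)
    (hmin : ∀ (m' : ℕ) (F' : ℕ → W), IsCW Γ F' m' → Odd m' → m ≤ m')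
    {a b : ℕ} (hab : a < b) (hbm : b < m) (hadj2 : Γ.Adj (F a) (F b)) :
    b = a + 1 ∨ (a = 0 ∧ b = m - 1) := by
  by_contra hcon
  have hge : a + 2 ≤ b := by omega
  have hne2 : ¬ (a = 0 ∧ b = m - 1) := by omega
  obtain ⟨hadj, hcl⟩ := hcw
  have hcw1 : IsCW Γ (fun i => if i ≤ b - a then F (a + i) else F a) (b - a + 1) := by
    constructor
    · intro i hi
      show Γ.Adj (if i ≤ b - a then F (a + i) else F a)
        (if i + 1 ≤ b - a then F (a + (i+1)) else F a)
      rcases Nat.lt_or_ge i (b - a) with h1 | h1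
      · rw [if_pos (show i ≤ b - a by omega), if_pos (show i + 1 ≤ b - a by omega)]
        have e : a + (i+1) = (a+i) + 1 := by omega
        rw [e]
        exact hadj (a + i) (by omega)
      · have h1' : i = b - a := by omega
        rw [if_pos (show i ≤ b - a by omega), if_neg (show ¬ i + 1 ≤ b - a by omega), h1']
        have e : a + (b - a) = b := by omega
        rw [e]
        exact hadj2.symm
    · show (if b - a + 1 ≤ b - a then F (a + (b-a+1)) else F a) =
        (if 0 ≤ b - a then F (a + 0) else F a)
      rw [if_neg (show ¬ b - a + 1 ≤ b - a by omega), if_pos (show 0 ≤ b - a by omega)]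
      rfl
  have hcw2 : IsCW Γ (fun i => if i = 0 then F a else if b + (i-1) ≤ m then F (b + (i-1))
      else F (b + (i-1) - m)) (m - b + a + 1) := by
    constructor
    · intro i hi
      show Γ.Adj (if i = 0 then F a else if b + (i-1) ≤ m then F (b + (i-1)) else F (b + (i-1) - m))
        (if i + 1 = 0 then F a else if b + (i+1-1) ≤ m then F (b + (i+1-1)) else F (b + (i+1-1) - m))
      rcases Nat.eq_zero_or_pos i with h0 | h0
      · subst h0
        rw [if_pos rfl, if_neg (show ¬ (0:ℕ) + 1 = 0 by omega),
          if_pos (show b + (0+1-1) ≤ m by omega)]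
        exact hadj2
      · rw [if_neg (show ¬ i = 0 by omega), if_neg (show ¬ i + 1 = 0 by omega)]
        rcases Nat.lt_trichotomy (b + i) (m + 1) with h1 | h1 | h1
        · rw [if_pos (show b + (i-1) ≤ m by omega), if_pos (show b + (i+1-1) ≤ m by omega)]
          have e : b + (i+1-1) = (b + (i-1)) + 1 := by omega
          rw [e]
          exact hadj (b + (i-1)) (by omega)
        · rw [if_pos (show b + (i-1) ≤ m by omega), if_neg (show ¬ b + (i+1-1) ≤ m by omega)]
          have e1 : b + (i-1) = m := by omega
          have e2 : b + (i+1-1) - m = 1 := by omega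
          rw [e1, e2, hcl]
          exact hadj 0 (by omega)
        · rw [if_neg (show ¬ b + (i-1) ≤ m by omega), if_neg (show ¬ b + (i+1-1) ≤ m by omega)]
          have e : b + (i+1-1) - m = (b + (i-1) - m) + 1 := by omega
          rw [e]
          exact hadj (b + (i-1) - m) (by omega)
    · show (if m - b + a + 1 = 0 then F a else if b + (m - b + a + 1 - 1) ≤ m
          then F (b + (m - b + a + 1 - 1)) else F (b + (m - b + a + 1 - 1) - m)) =
        (if (0:ℕ) = 0 then F a else if b + (0-1) ≤ m then F (b + (0-1)) else F (b + (0-1) - m))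
      rw [if_pos (show (0:ℕ) = 0 from rfl), if_neg (show ¬ m - b + a + 1 = 0 by omega)]
      by_cases ha0 : a = 0
      · rw [if_pos (show b + (m - b + a + 1 - 1) ≤ m by omega)]
        have e : b + (m - b + a + 1 - 1) = m := by omega
        rw [e, hcl, ha0]
      · rw [if_neg (show ¬ b + (m - b + a + 1 - 1) ≤ m by omega)]
        have e : b + (m - b + a + 1 - 1) - m = a := by omega
        rw [e]
  have hpar : Odd (b - a + 1) ∨ Odd (m - b + a + 1) := by
    rw [Nat.odd_iff] at hodd ⊢
    rw [Nat.odd_iff]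
    omega
  rcases hpar with hp | hp
  · have := hmin _ _ hcw1 hp
    omega
  · have := hmin _ _ hcw2 hp
    omega

end CW

end StmtAux

/-- `(L 0, …, L k)` is a levelling of `G`: disjoint vertex subsets, `L 0` a singleton,
every vertex of `L i` (for `1 ≤ i ≤ k`) has a neighbour in `L (i-1)` and no neighbour
in `L h` for `h ≤ i - 2`. -/
def SimpleGraph.IsLevelling {V : Type*} (G : SimpleGraph V) (L : ℕ → Set V) (k : ℕ) : Prop :=
  (∀ i, i ≤ k → ∀ j, j ≤ k → i ≠ j → Disjoint (L i) (L j)) ∧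
  (∃ v₀ : V, L 0 = {v₀}) ∧
  (∀ i, 1 ≤ i → i ≤ k → ∀ v ∈ L i,
    (∃ u ∈ L (i - 1), G.Adj u v) ∧ (∀ h, h + 2 ≤ i → ∀ u ∈ L h, ¬ G.Adj u v))

/-- A levelling is stable if `L i` is a stable (independent) set for `0 ≤ i ≤ k - 1`. -/
def SimpleGraph.IsStableLevelling {V : Type*} (G : SimpleGraph V) (L : ℕ → Set V) (k : ℕ) :
    Prop :=
  G.IsLevelling L k ∧ ∀ i, i < k → ∀ u ∈ L i, ∀ v ∈ L i, ¬ G.Adj u v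

/-- If `(L 0, …, L k)` is a stable levelling of a graph `G` of girth at least 5 with no odd
hole of length at least 9, and `H` is an induced subgraph of `G[L k]`, then for every
`z ∈ V(H)` the subgraph of `H` induced on the vertices at distance exactly 2 from `z` in `H`
is 2-colorable. -/
theorem stmt_6 {V : Type*} [Fintype V] (G : SimpleGraph V)
    (hgirth : (5 : ℕ∞) ≤ G.egirth)
    (hodd : ∀ n : ℕ, Odd n → 9 ≤ n → ¬ G.HasInducedCycle n)
    (L : ℕ → Set V) (k : ℕ) (hL : G.IsStableLevelling L k)
    (S : Set V) (hS : S ⊆ L k) (z : ↥S) :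
    ((G.induce S).induce {w : ↥S | (G.induce S).dist z w = 2}).chromaticNumber ≤ 2 := by
  classical
  obtain ⟨⟨hdisj, ⟨v0, hv0⟩, hlev⟩, hstab⟩ := hL
  suffices hcol : ((G.induce S).induce {w : ↥S | (G.induce S).dist z w = 2}).Colorable 2 by
    exact_mod_cast hcol.chromaticNumber_le
  by_contra hnc
  obtain ⟨m, F, hcw, hoddm, hmin⟩ := StmtAux.exists_min_odd_cw _ hnc
  obtain ⟨hFadj, hFcl⟩ := hcw
  set zV : V := (z : V) with hzV
  have hzS : zV ∈ S := z.2
  set cV : ℕ → V := fun i => (((F i : ↥S) : V)) with hcVdef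
  have hcS : ∀ i, cV i ∈ S := fun i => (F i : ↥S).2
  have hcT : ∀ i, (G.induce S).dist z (F i : ↥S) = 2 := fun i => (F i).2
  have hCadj : ∀ i, i < m → G.Adj (cV i) (cV (i+1)) := fun i hi => hFadj i hi
  have hCcl : cV m = cV 0 := congrArg (fun x => x.1.1) hFcl
  have hzne : ∀ i, zV ≠ cV i := by
    intro i he
    have h2 := hcT i
    have he' : (z : ↥S) = (F i : ↥S) := Subtype.ext he
    rw [← he', SimpleGraph.dist_self] at h2
    omega
  have hznadj : ∀ i, ¬ G.Adj zV (cV i) := by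
    intro i hadj
    have h2 := hcT i
    have hadj' : (G.induce S).Adj z (F i : ↥S) := hadj
    have hle := SimpleGraph.dist_le (Walk.cons hadj' Walk.nil)
    rw [h2] at hle
    simp at hle
  have hCinj : ∀ a, a < m → ∀ b, b < m → cV a = cV b → a = b := by
    intro a ha b hb he
    by_contra hne
    rcases Nat.lt_or_ge a b with h | h
    · exact StmtAux.min_cw_inj ⟨hFadj, hFcl⟩ hoddm hmin h (by omega) (by omega)
        (Subtype.ext (Subtype.ext he))
    · exact StmtAux.min_cw_inj ⟨hFadj, hFcl⟩ hoddm hmin (show b < a by omega) (by omega)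
        (by omega) (Subtype.ext (Subtype.ext he.symm))
  have hCchord : ∀ a, a < m → ∀ b, b < m → G.Adj (cV a) (cV b) →
      (b = a + 1 ∨ a = b + 1 ∨ (a = 0 ∧ b = m - 1) ∨ (b = 0 ∧ a = m - 1)) := by
    intro a ha b hb hadj
    have hΓ : ((G.induce S).induce {w : ↥S | (G.induce S).dist z w = 2}).Adj (F a) (F b) := hadj
    rcases Nat.lt_trichotomy a b with h | h | h
    · rcases StmtAux.min_cw_chord ⟨hFadj, hFcl⟩ hoddm hmin h hb hΓ with h' | h'
      · exact Or.inl h'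
      · exact Or.inr (Or.inr (Or.inl h'))
    · subst h
      exact absurd hadj (G.irrefl)
    · rcases StmtAux.min_cw_chord ⟨hFadj, hFcl⟩ hoddm hmin h ha hΓ.symm with h' | h'
      · exact Or.inr (Or.inl h')
      · exact Or.inr (Or.inr (Or.inr h'))
  have hm1 : 1 ≤ m := by
    rcases hoddm with ⟨t, ht⟩
    omega
  have hmne1 : m ≠ 1 := by
    intro h1
    have hA := hCadj 0 (by omega)
    rw [show (0:ℕ)+1 = m by omega, hCcl] at hA
    exact G.irrefl hA
  have hmne3 : m ≠ 3 := by
    intro h3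
    have hA := hCadj 2 (by omega)
    rw [show (2:ℕ)+1 = m by omega, hCcl] at hA
    exact StmtAux.no_tri hgirth (hCadj 0 (by omega)) (hCadj 1 (by omega)) hA
  have hm9 : m < 9 := by
    by_contra h9
    refine hodd m hoddm (by omega) ?_
    refine StmtAux.hasInducedCycle_of_fn cV m (by omega) hCadj hCcl hCinj ?_
    intro a ha b hb hadj
    exact hCchord a ha b hb hadj
  have hm57 : m = 5 ∨ m = 7 := by
    rcases hoddm with ⟨t, ht⟩
    omega
  -- level helpers
  have hLk : ∀ v, v ∈ S → v ∈ L k := fun v hv => hS hv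
  have hdisj' : ∀ {u : V} {a b : ℕ}, u ∈ L a → u ∈ L b → a ≤ k → b ≤ k → a = b := by
    intro u a b ha hb hak hbk
    by_contra hne
    exact Set.disjoint_left.mp (hdisj a hak b hbk hne) ha hb
  have hne_lv : ∀ {u v : V} {a b : ℕ}, u ∈ L a → v ∈ L b → a ≠ b → a ≤ k → b ≤ k → u ≠ v := by
    intro u v a b ha hb hne hak hbk he
    exact hne (hdisj' (he ▸ ha) hb hak hbk)
  have hnoskip : ∀ {u v : V} {a b : ℕ}, u ∈ L a → v ∈ L b → 1 ≤ b → b ≤ k → a + 2 ≤ b →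
      ¬ G.Adj u v := by
    intro u v a b hu hv h1 h2 h3
    exact (hlev b h1 h2 v hv).2 a h3 u hu
  have hstab' : ∀ {u v : V} {j : ℕ}, j < k → u ∈ L j → v ∈ L j → ¬ G.Adj u v :=
    fun hj hu hv => hstab _ hj _ hu _ hv
  have hk1 : 1 ≤ k := by
    by_contra hk
    have hk0 : k = 0 := by omega
    have h1 : zV ∈ L k := hLk _ hzS
    have h2 : cV 0 ∈ L k := hLk _ (hcS 0)
    rw [hk0, hv0, Set.mem_singleton_iff] at h1 h2
    exact hzne 0 (h1.trans h2.symm)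
  -- choose common neighbours y
  have hyex : ∀ i, ∃ y : V, y ∈ S ∧ G.Adj zV y ∧ G.Adj y (cV i) := by
    intro i
    have h2 := hcT i
    have hr : (G.induce S).Reachable z (F i : ↥S) := by
      by_contra hnr
      have h0 := SimpleGraph.dist_eq_zero_iff_eq_or_not_reachable.mpr
        (Or.inr hnr : _ ∨ ¬ (G.induce S).Reachable z (F i : ↥S))
      omega
    obtain ⟨w, hw⟩ := hr.exists_walk_length_eq_dist
    rw [h2] at hw
    refine ⟨((w.getVert 1 : ↥S) : V), (w.getVert 1).2, ?_, ?_⟩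
    · have ha := w.adj_getVert_succ (i := 0) (by omega)
      rw [Walk.getVert_zero] at ha
      exact ha
    · have ha := w.adj_getVert_succ (i := 1) (by omega)
      have he : w.getVert 2 = (F i : ↥S) := by
        have h3 := w.getVert_length
        rw [hw] at h3
        exact h3
      rw [he] at ha
      exact ha
  choose Yv hYS hYz hYc using hyex
  -- choose parents
  have hpex : ∀ v : V, v ∈ L k → ∃ p, p ∈ L (k-1) ∧ G.Adj p v := by
    intro v hv
    obtain ⟨u, hu, hadj⟩ := (hlev k hk1 (le_refl k) v hv).1
    exact ⟨u, hu, hadj⟩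
  obtain ⟨q, hqL, hqadj⟩ := hpex zV (hLk _ hzS)
  have hpexc : ∀ i : ℕ, ∃ p, p ∈ L (k-1) ∧ G.Adj p (cV i) :=
    fun i => hpex (cV i) (hLk _ (hcS i))
  choose Pv hPL hPadj using hpexc
  -- periodic versions
  set c : ℕ → V := fun i => cV (i % m) with hcdef
  set yv : ℕ → V := fun i => Yv (i % m) with hyvdef
  set pv : ℕ → V := fun i => Pv (i % m) with hpvdef
  have hmodlt : ∀ i : ℕ, i % m < m := fun i => Nat.mod_lt _ (by omega)
  have hcper : ∀ a b, a % m = b % m → c a = c b := by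
    intro a b h
    show cV (a % m) = cV (b % m)
    rw [h]
  have hyper : ∀ a b, a % m = b % m → yv a = yv b := by
    intro a b h
    show Yv (a % m) = Yv (b % m)
    rw [h]
  have hpper : ∀ a b, a % m = b % m → pv a = pv b := by
    intro a b h
    show Pv (a % m) = Pv (b % m)
    rw [h]
  have hcadj : ∀ i, G.Adj (c i) (c (i+1)) := by
    intro i
    show G.Adj (cV (i % m)) (cV ((i+1) % m))
    rcases Nat.lt_or_ge (i % m + 1) m with h | h
    · have e : (i+1) % m = i % m + 1 := by
        rcases hm57 with h5 | h5 <;> subst h5 <;> omega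
      rw [e]
      exact hCadj _ (by omega)
    · have e1 : i % m = m - 1 := by
        have := hmodlt i
        omega
      have e2 : (i+1) % m = 0 := by
        rcases hm57 with h5 | h5 <;> subst h5 <;> omega
      rw [e1, e2, ← hCcl]
      have e3 : m - 1 + 1 = m := by omega
      rw [← e3]
      exact hCadj _ (by omega)
  have hcadjm : ∀ i, G.Adj (c (i+m-1)) (c i) := by
    intro i
    have h1 := hcadj (i+m-1)
    have e : i + m - 1 + 1 = i + m := by omega
    rw [e] at h1
    have e2 : c (i+m) = c i := hcper _ _ (by rcases hm57 with h5 | h5 <;> subst h5 <;> omega)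
    rw [e2] at h1
    exact h1
  have hcS' : ∀ i, c i ∈ S := fun i => hcS (i % m)
  have hcLk : ∀ i, c i ∈ L k := fun i => hLk _ (hcS' i)
  have hyLk : ∀ i, yv i ∈ L k := fun i => hLk _ (hYS (i % m))
  have hzLk : zV ∈ L k := hLk _ hzS
  have hyadjz : ∀ i, G.Adj zV (yv i) := fun i => hYz (i % m)
  have hyadjc : ∀ i, G.Adj (yv i) (c i) := fun i => hYc (i % m)
  have hpL : ∀ i, pv i ∈ L (k-1) := fun i => hPL (i % m)
  have hpadj : ∀ i, G.Adj (pv i) (c i) := fun i => hPadj (i % m)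
  have hzne' : ∀ i, zV ≠ c i := fun i => hzne (i % m)
  have hznadj' : ∀ i, ¬ G.Adj zV (c i) := fun i => hznadj (i % m)
  have hcne : ∀ a b, a % m ≠ b % m → c a ≠ c b := by
    intro a b h he
    exact h (hCinj _ (hmodlt a) _ (hmodlt b) he)
  have hLkne : ∀ (u v : V), u ∈ L k → v ∈ L (k-1) → u ≠ v :=
    fun u v hu hv => hne_lv hu hv (by omega) (le_refl k) (by omega)
  -- uniqueness of common neighbour
  have huniq : ∀ (i : ℕ) (w : V), G.Adj zV w → G.Adj w (c i) → w = yv i := by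
    intro i w h1 h2
    by_contra hne
    exact StmtAux.no_c4 hgirth h1 h2 (hyadjc i).symm (hyadjz i).symm (hzne' i) hne
  have ynec : ∀ i j, yv i ≠ c j := fun i j he => hznadj' j (he ▸ hyadjz i)
  have hyne_adj : ∀ i j, G.Adj (c i) (c j) → yv i ≠ yv j := by
    intro i j hadj he
    exact StmtAux.no_tri hgirth (hyadjc i) hadj (he ▸ hyadjc j).symm
  -- q and p facts
  have hqnc : ∀ i, ¬ G.Adj q (c i) := by
    intro i h
    exact StmtAux.no_c4 hgirth hqadj.symm h (hyadjc i).symm (hyadjz i).symm (hzne' i)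
      (hLkne _ _ (hyLk i) hqL).symm
  have hqny : ∀ i, ¬ G.Adj q (yv i) := by
    intro i h
    exact StmtAux.no_tri hgirth h (hyadjz i).symm hqadj.symm
  have hpnz : ∀ i, ¬ G.Adj (pv i) zV := by
    intro i h
    exact StmtAux.no_c4 hgirth h.symm (hpadj i) (hyadjc i).symm (hyadjz i).symm (hzne' i)
      (hLkne _ _ (hyLk i) (hpL i)).symm
  have hpnez : ∀ i, pv i ≠ zV := fun i => (hLkne _ _ hzLk (hpL i)).symm
  have hpq : ∀ i, pv i ≠ q := fun i he => hqnc i (he ▸ hpadj i)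
  have hpnq : ∀ i, ¬ G.Adj (pv i) q := fun i => hstab' (by omega) (hpL i) hqL
  -- p-c nonadjacency
  have hpc1 : ∀ i, ¬ G.Adj (pv i) (c (i+1)) := by
    intro i h
    exact StmtAux.no_tri hgirth (hpadj i) (hcadj i) h.symm
  have hpc2 : ∀ i, ¬ G.Adj (pv i) (c (i+2)) := by
    intro i h
    exact StmtAux.no_c4 hgirth (hpadj i) (hcadj i) (hcadj (i+1)) h.symm
      (hLkne _ _ (hcLk (i+1)) (hpL i)).symm
      (hcne i (i+2) (by rcases hm57 with h5 | h5 <;> subst h5 <;> omega))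
  have hpc1' : ∀ i, ¬ G.Adj (pv i) (c (i+m-1)) := by
    intro i h
    exact StmtAux.no_tri hgirth (hpadj i) (hcadjm i).symm h.symm
  have hpc2' : ∀ i, ¬ G.Adj (pv i) (c (i+m-2)) := by
    intro i h
    have hadj2 : G.Adj (c (i+m-1)) (c (i+m-2)) := by
      have h1 := hcadj (i+m-2)
      have e : i + m - 2 + 1 = i + m - 1 := by omega
      rw [e] at h1
      exact h1.symm
    exact StmtAux.no_c4 hgirth (hpadj i) (hcadjm i).symm hadj2 h.symm
      (hLkne _ _ (hcLk (i+m-1)) (hpL i)).symm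
      (hcne i (i+m-2) (by rcases hm57 with h5 | h5 <;> subst h5 <;> omega))
  -- y-c nonadjacency
  have hyc1 : ∀ i, ¬ G.Adj (yv i) (c (i+1)) := by
    intro i h
    exact StmtAux.no_tri hgirth (hyadjc i) (hcadj i) h.symm
  have hyc2 : ∀ i, ¬ G.Adj (yv i) (c (i+2)) := by
    intro i h
    exact StmtAux.no_c4 hgirth (hyadjc i) (hcadj i) (hcadj (i+1)) h.symm
      (ynec i (i+1)) (hcne i (i+2) (by rcases hm57 with h5 | h5 <;> subst h5 <;> omega))
  have hyc1' : ∀ i, ¬ G.Adj (yv i) (c (i+m-1)) := by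
    intro i h
    exact StmtAux.no_tri hgirth (hyadjc i) (hcadjm i).symm h.symm
  have hyc2' : ∀ i, ¬ G.Adj (yv i) (c (i+m-2)) := by
    intro i h
    have hadj2 : G.Adj (c (i+m-1)) (c (i+m-2)) := by
      have h1 := hcadj (i+m-2)
      have e : i + m - 2 + 1 = i + m - 1 := by omega
      rw [e] at h1
      exact h1.symm
    exact StmtAux.no_c4 hgirth (hyadjc i) (hcadjm i).symm hadj2 h.symm
      (ynec i (i+m-1)) (hcne i (i+m-2) (by rcases hm57 with h5 | h5 <;> subst h5 <;> omega))
  -- general c-c nonadjacency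
  have hcnadj : ∀ a b, (a+1) % m ≠ b % m → (b+1) % m ≠ a % m → ¬ G.Adj (c a) (c b) := by
    intro a b h1 h2 hadj
    have hc := hCchord (a % m) (hmodlt a) (b % m) (hmodlt b) hadj
    rcases hm57 with h5 | h5 <;> subst h5 <;> omega
  -- k ≥ 2
  have hk2 : 2 ≤ k := by
    by_contra hklt
    have hk1' : k - 1 = 0 := by omega
    have h1 : q ∈ L (k-1) := hqL
    have h2 : pv 0 ∈ L (k-1) := hpL 0
    rw [hk1', hv0, Set.mem_singleton_iff] at h1 h2
    exact hpq 0 (h2.trans h1.symm)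
  -- adjacent vertices at levels < k are at consecutive levels
  have hadjlv : ∀ (u v : V) (a b : ℕ), u ∈ L a → v ∈ L b → a ≤ k - 1 → b ≤ k - 1 →
      G.Adj u v → (a = b + 1 ∨ b = a + 1) := by
    intro u v a b hu hv hak hbk hadj
    rcases Nat.lt_trichotomy a b with h | h | h
    · by_contra hcon
      exact hnoskip hu hv (by omega) (by omega) (by omega) hadj
    · subst h
      exact absurd hadj (hstab' (by omega) hu hv)
    · by_contra hcon
      exact hnoskip hv hu (by omega) (by omega) (by omega) hadj.symm
  -- parity of walks below level k
  have hparity : ∀ (t : ℕ) (g : ℕ → V), (∀ i, i < t → G.Adj (g i) (g (i+1))) →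
      (∀ i, i ≤ t → ∃ h, h ≤ k - 1 ∧ g i ∈ L h) →
      ∀ a b, a ≤ k-1 → g 0 ∈ L a → b ≤ k-1 → g t ∈ L b → (t + a + b) % 2 = 0 := by
    intro t
    induction t with
    | zero =>
      intro g _ _ a b hak h0 hbk ht
      have : a = b := hdisj' h0 ht (by omega) (by omega)
      omega
    | succ t ih =>
      intro g hadjg hmem a b hak h0 hbk ht
      obtain ⟨a1, ha1k, hg1⟩ := hmem 1 (by omega)
      have hd : a = a1 + 1 ∨ a1 = a + 1 :=
        hadjlv _ _ _ _ h0 hg1 hak ha1k (hadjg 0 (by omega))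
      have hrec := ih (fun i => g (i+1)) (fun i hi => hadjg (i+1) (by omega))
        (fun i hi => hmem (i+1) (by omega)) a1 b ha1k hg1 hbk ht
      omega
  -- descending walks
  have hdescend : ∀ j, j ≤ k - 1 → ∀ v, v ∈ L j → ∃ (t : ℕ) (g : ℕ → V),
      g 0 = v ∧ g t = v0 ∧ (∀ i, i < t → G.Adj (g i) (g (i+1))) ∧
      (∀ i, 1 ≤ i → i ≤ t → ∃ h, h + 1 ≤ j ∧ g i ∈ L h) := by
    intro j
    induction j with
    | zero =>
      intro _ v hv
      rw [hv0, Set.mem_singleton_iff] at hv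
      exact ⟨0, fun _ => v, rfl, hv, fun i hi => absurd hi (by omega),
        fun i h1 h2 => absurd (h1.trans h2) (by omega)⟩
    | succ j ih =>
      intro hj v hv
      obtain ⟨u, huL, huadj⟩ := (hlev (j+1) (by omega) (by omega) v hv).1
      have huL' : u ∈ L j := by
        have e : j + 1 - 1 = j := by omega
        rw [← e]
        exact huL
      obtain ⟨t, g, hg0, hgt, hgadj, hgmem⟩ := ih (by omega) u huL'
      refine ⟨t+1, fun i => if i = 0 then v else g (i-1), by simp, ?_, ?_, ?_⟩
      · show (if t + 1 = 0 then v else g (t+1-1)) = v0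
        rw [if_neg (by omega)]
        have e : t + 1 - 1 = t := by omega
        rw [e, hgt]
      · intro i hi
        show G.Adj (if i = 0 then v else g (i-1)) (if i + 1 = 0 then v else g (i+1-1))
        rcases Nat.eq_zero_or_pos i with h0 | h0
        · subst h0
          rw [if_pos rfl, if_neg (show ¬ (0:ℕ) + 1 = 0 by omega)]
          have e : (0:ℕ) + 1 - 1 = 0 := by omega
          rw [e, hg0]
          exact huadj.symm
        · rw [if_neg (show ¬ i = 0 by omega), if_neg (show ¬ i + 1 = 0 by omega)]
          have e : i + 1 - 1 = (i - 1) + 1 := by omega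
          rw [e]
          exact hgadj (i-1) (by omega)
      · intro i h1 h2
        show ∃ h, h + 1 ≤ j + 1 ∧ (if i = 0 then v else g (i-1)) ∈ L h
        rw [if_neg (show ¬ i = 0 by omega)]
        rcases Nat.eq_or_lt_of_le h1 with h0 | h0
        · refine ⟨j, by omega, ?_⟩
          have e : i - 1 = 0 := by omega
          rw [e, hg0]
          exact huL'
        · obtain ⟨h, hh, hmem'⟩ := hgmem (i-1) (by omega) (by omega)
          exact ⟨h, by omega, hmem'⟩
  -- connecting two vertices of L (k-1) through lower levels
  have hconnect : ∀ p', p' ∈ L (k-1) → ∀ q', q' ∈ L (k-1) → ∃ (t : ℕ) (g : ℕ → V),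
      g 0 = p' ∧ g t = q' ∧ (∀ i, i < t → G.Adj (g i) (g (i+1))) ∧
      (∀ i, 1 ≤ i → i < t → ∃ h, h ≤ k - 2 ∧ g i ∈ L h) := by
    intro p' hp' q' hq'
    obtain ⟨tp, gp, hgp0, hgpt, hgpadj, hgpmem⟩ := hdescend (k-1) (le_refl _) p' hp'
    obtain ⟨tq, gq, hgq0, hgqt, hgqadj, hgqmem⟩ := hdescend (k-1) (le_refl _) q' hq'
    have hv0L : v0 ∈ L 0 := by rw [hv0]; exact rfl
    have hpv0 : p' ≠ v0 := hne_lv hp' hv0L (by omega) (by omega) (by omega)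
    have hqv0 : q' ≠ v0 := hne_lv hq' hv0L (by omega) (by omega) (by omega)
    have htp1 : 1 ≤ tp := by
      rcases Nat.eq_zero_or_pos tp with h0 | h0
      · exact absurd (by rw [← hgp0, ← hgpt, h0] : p' = v0) hpv0
      · exact h0
    have htq1 : 1 ≤ tq := by
      rcases Nat.eq_zero_or_pos tq with h0 | h0
      · exact absurd (by rw [← hgq0, ← hgqt, h0] : q' = v0) hqv0
      · exact h0
    refine ⟨tp + tq, fun i => if i ≤ tp then gp i else gq (tp + tq - i), ?_, ?_, ?_, ?_⟩
    · show (if 0 ≤ tp then gp 0 else gq (tp + tq - 0)) = p'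
      rw [if_pos (by omega)]
      exact hgp0
    · show (if tp + tq ≤ tp then gp (tp+tq) else gq (tp + tq - (tp + tq))) = q'
      rw [if_neg (by omega)]
      have e : tp + tq - (tp + tq) = 0 := by omega
      rw [e]
      exact hgq0
    · intro i hi
      show G.Adj (if i ≤ tp then gp i else gq (tp + tq - i))
        (if i + 1 ≤ tp then gp (i+1) else gq (tp + tq - (i+1)))
      rcases Nat.lt_trichotomy i tp with h1 | h1 | h1
      · rw [if_pos (by omega), if_pos (by omega)]
        exact hgpadj i (by omega)
      · subst h1
        rw [if_pos (by omega), if_neg (by omega)]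
        have e : i + tq - (i+1) = tq - 1 := by omega
        rw [e, hgpt]
        have h2 := hgqadj (tq - 1) (by omega)
        have e2 : tq - 1 + 1 = tq := by omega
        rw [e2, hgqt] at h2
        exact h2.symm
      · rw [if_neg (by omega), if_neg (by omega)]
        have h2 := hgqadj (tp + tq - i - 1) (by omega)
        have e2 : tp + tq - i - 1 + 1 = tp + tq - i := by omega
        rw [e2] at h2
        have e3 : tp + tq - (i + 1) = tp + tq - i - 1 := by omega
        rw [e3]
        exact h2.symm
    · intro i h1 h2
      show ∃ h, h ≤ k - 2 ∧ (if i ≤ tp then gp i else gq (tp + tq - i)) ∈ L h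
      by_cases hc : i ≤ tp
      · rw [if_pos hc]
        obtain ⟨h, hh, hmem'⟩ := hgpmem i h1 hc
        exact ⟨h, by omega, hmem'⟩
      · rw [if_neg hc]
        obtain ⟨h, hh, hmem'⟩ := hgqmem (tp + tq - i) (by omega) (by omega)
        exact ⟨h, by omega, hmem'⟩
  -- minimal connecting path
  have hQ : ∀ p', p' ∈ L (k-1) → p' ≠ q → ¬ G.Adj p' q → ∃ (t : ℕ) (g : ℕ → V),
      g 0 = p' ∧ g t = q ∧ 2 ≤ t ∧ t % 2 = 0 ∧
      (∀ i, i < t → G.Adj (g i) (g (i+1))) ∧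
      (∀ i, 1 ≤ i → i < t → ∃ h, h ≤ k - 2 ∧ g i ∈ L h) ∧
      (∀ a b, a < b → b ≤ t → g a ≠ g b) ∧
      (∀ a b, a + 2 ≤ b → b ≤ t → ¬ G.Adj (g a) (g b)) := by
    intro p' hp'L hp'ne hp'nadj
    have hex : ∃ t : ℕ, ∃ g : ℕ → V,
        g 0 = p' ∧ g t = q ∧ (∀ i, i < t → G.Adj (g i) (g (i+1))) ∧
        (∀ i, 1 ≤ i → i < t → ∃ h, h ≤ k - 2 ∧ g i ∈ L h) := by
      obtain ⟨t, g, h1, h2, h3, h4⟩ := hconnect p' hp'L q hqL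
      exact ⟨t, g, h1, h2, h3, h4⟩
    haveI : DecidablePred (fun t : ℕ => ∃ g : ℕ → V,
        g 0 = p' ∧ g t = q ∧ (∀ i, i < t → G.Adj (g i) (g (i+1))) ∧
        (∀ i, 1 ≤ i → i < t → ∃ h, h ≤ k - 2 ∧ g i ∈ L h)) := Classical.decPred _
    obtain ⟨g, hg0, hgt, hgadj, hgmem⟩ := Nat.find_spec hex
    set t := Nat.find hex with htdef
    have hminQ : ∀ t', t' < t → ¬ ∃ g : ℕ → V,
        g 0 = p' ∧ g t' = q ∧ (∀ i, i < t' → G.Adj (g i) (g (i+1))) ∧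
        (∀ i, 1 ≤ i → i < t' → ∃ h, h ≤ k - 2 ∧ g i ∈ L h) := fun t' ht' => Nat.find_min hex ht'
    have ht0 : t ≠ 0 := by
      intro h0
      rw [h0] at hgt
      exact hp'ne (hg0 ▸ hgt ▸ rfl : p' = q)
    have ht1 : t ≠ 1 := by
      intro h0
      have := hgadj 0 (by omega)
      rw [hg0] at this
      rw [show (0:ℕ)+1 = t by omega, hgt] at this
      exact hp'nadj this
    have hginj : ∀ a b, a < b → b ≤ t → g a ≠ g b := by
      intro a b hab hbt heq
      refine hminQ (t - (b - a)) (by omega) ?_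
      refine ⟨fun i => if i ≤ a then g i else g (i + (b-a)), ?_, ?_, ?_, ?_⟩
      · show (if 0 ≤ a then g 0 else g (0 + (b-a))) = p'
        rw [if_pos (by omega)]
        exact hg0
      · show (if t - (b-a) ≤ a then g (t - (b-a)) else g (t - (b-a) + (b-a))) = q
        by_cases hc : t - (b-a) ≤ a
        · rw [if_pos hc]
          have e : t - (b-a) = a := by omega
          have e2 : b = t := by omega
          rw [e, heq, e2, hgt]
        · rw [if_neg hc]
          have e : t - (b-a) + (b-a) = t := by omega
          rw [e, hgt]
      · intro i hi
        show G.Adj (if i ≤ a then g i else g (i + (b-a)))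
          (if i + 1 ≤ a then g (i+1) else g (i+1 + (b-a)))
        rcases Nat.lt_trichotomy i a with h1 | h1 | h1
        · rw [if_pos (by omega), if_pos (by omega)]
          exact hgadj i (by omega)
        · rw [if_pos (by omega), if_neg (by omega), h1, heq]
          have e : a + 1 + (b - a) = b + 1 := by omega
          rw [e]
          exact hgadj b (by omega)
        · rw [if_neg (by omega), if_neg (by omega)]
          have e : i + 1 + (b-a) = (i + (b-a)) + 1 := by omega
          rw [e]
          exact hgadj (i + (b-a)) (by omega)
      · intro i hi1 hi2
        show ∃ h, h ≤ k - 2 ∧ (if i ≤ a then g i else g (i + (b-a))) ∈ L h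
        by_cases hc : i ≤ a
        · rw [if_pos hc]
          exact hgmem i hi1 (by omega)
        · rw [if_neg hc]
          exact hgmem (i + (b-a)) (by omega) (by omega)
    have hgchord : ∀ a b, a + 2 ≤ b → b ≤ t → ¬ G.Adj (g a) (g b) := by
      intro a b hab hbt hadj
      refine hminQ (t - (b - a) + 1) (by omega) ?_
      refine ⟨fun i => if i ≤ a then g i else g (i + (b-a) - 1), ?_, ?_, ?_, ?_⟩
      · show (if 0 ≤ a then g 0 else g (0 + (b-a) - 1)) = p'
        rw [if_pos (by omega)]
        exact hg0
      · show (if t - (b-a) + 1 ≤ a then g (t - (b-a) + 1)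
            else g (t - (b-a) + 1 + (b-a) - 1)) = q
        rw [if_neg (by omega)]
        have e : t - (b-a) + 1 + (b-a) - 1 = t := by omega
        rw [e, hgt]
      · intro i hi
        show G.Adj (if i ≤ a then g i else g (i + (b-a) - 1))
          (if i + 1 ≤ a then g (i+1) else g (i+1 + (b-a) - 1))
        rcases Nat.lt_trichotomy i a with h1 | h1 | h1
        · rw [if_pos (by omega), if_pos (by omega)]
          exact hgadj i (by omega)
        · rw [if_pos (by omega), if_neg (by omega), h1]
          have e : a + 1 + (b - a) - 1 = b := by omega
          rw [e]
          exact hadj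
        · rw [if_neg (by omega), if_neg (by omega)]
          have e : i + 1 + (b-a) - 1 = (i + (b-a) - 1) + 1 := by omega
          rw [e]
          exact hgadj (i + (b-a) - 1) (by omega)
      · intro i hi1 hi2
        show ∃ h, h ≤ k - 2 ∧ (if i ≤ a then g i else g (i + (b-a) - 1)) ∈ L h
        by_cases hc : i ≤ a
        · rw [if_pos hc]
          exact hgmem i hi1 (by omega)
        · rw [if_neg hc]
          exact hgmem (i + (b-a) - 1) (by omega) (by omega)
    have ht2 : 2 ≤ t := by omega
    have htev : t % 2 = 0 := by
      have hmemall : ∀ i, i ≤ t → ∃ h, h ≤ k - 1 ∧ g i ∈ L h := by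
        intro i hi
        rcases Nat.eq_zero_or_pos i with h0 | h0
        · subst h0
          exact ⟨k-1, le_refl _, hg0 ▸ hp'L⟩
        · rcases Nat.eq_or_lt_of_le hi with h1 | h1
          · rw [h1]
            exact ⟨k-1, le_refl _, hgt ▸ hqL⟩
          · obtain ⟨h, hh, hm'⟩ := hgmem i h0 h1
            exact ⟨h, by omega, hm'⟩
      have := hparity t g hgadj hmemall (k-1) (k-1) (le_refl _) (hg0 ▸ hp'L)
        (le_refl _) (hgt ▸ hqL)
      omega
    exact ⟨t, g, hg0, hgt, ht2, htev, hgadj, hgmem, hginj, hgchord⟩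
  -- main constraint from forbidden long odd holes
  have hconstraint : ∀ j d, (d = 1 ∨ d = m - 1) →
      G.Adj (yv j) (c (j + 3*d)) ∨ G.Adj (pv (j + 3*d)) (c j) ∨ G.Adj (pv (j + 3*d)) (yv j) := by
    intro j d hd
    by_contra hcon
    push_neg at hcon
    obtain ⟨hnA, hnB, hnD⟩ := hcon
    have hcadjd : ∀ x : ℕ, G.Adj (c x) (c (x + d)) := by
      intro x
      rcases hd with hd1 | hd1
      · rw [hd1]
        exact hcadj x
      · have h1 := (hcadjm x).symm
        have e : x + m - 1 = x + d := by omega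
        rw [e] at h1
        exact h1
    obtain ⟨t, g, hg0, hgt, ht2, htev, hgadj, hgmem, hginj, hgchord⟩ :=
      hQ (pv (j + 3*d)) (hpL _) (hpq _) (hpnq _)
    set n := t + 7 with hndef
    set Cy : ℕ → V := fun i =>
      if i = 0 then zV else if i = 1 then yv j else if i = 2 then c j
      else if i = 3 then c (j + d) else if i = 4 then c (j + 2*d) else if i = 5 then c (j + 3*d)
      else if i ≤ 6 + t then g (i - 6) else zV with hCydef
    have hE0 : Cy 0 = zV := rfl
    have hE1 : Cy 1 = yv j := rfl
    have hE2 : Cy 2 = c j := rfl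
    have hE3 : Cy 3 = c (j + d) := rfl
    have hE4 : Cy 4 = c (j + 2*d) := rfl
    have hE5 : Cy 5 = c (j + 3*d) := rfl
    have hEQ : ∀ l, l ≤ t → Cy (6 + l) = g l := by
      intro l hl
      show (if 6 + l = 0 then zV else if 6 + l = 1 then yv j else if 6 + l = 2 then c j
        else if 6 + l = 3 then c (j + d) else if 6 + l = 4 then c (j + 2*d)
        else if 6 + l = 5 then c (j + 3*d)
        else if 6 + l ≤ 6 + t then g (6 + l - 6) else zV) = g l
      rw [if_neg (by omega), if_neg (by omega), if_neg (by omega), if_neg (by omega),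
        if_neg (by omega), if_neg (by omega), if_pos (by omega)]
      congr 1
      omega
    have hEQ' : ∀ b, 6 ≤ b → b ≤ 6 + t → Cy b = g (b - 6) := by
      intro b h1 h2
      have h3 := hEQ (b - 6) (by omega)
      rw [show 6 + (b - 6) = b by omega] at h3
      exact h3
    have hEend : Cy (t + 7) = zV := by
      show (if t + 7 = 0 then zV else if t + 7 = 1 then yv j else if t + 7 = 2 then c j
        else if t + 7 = 3 then c (j + d) else if t + 7 = 4 then c (j + 2*d)
        else if t + 7 = 5 then c (j + 3*d)
        else if t + 7 ≤ 6 + t then g (t + 7 - 6) else zV) = zV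
      rw [if_neg (by omega), if_neg (by omega), if_neg (by omega), if_neg (by omega),
        if_neg (by omega), if_neg (by omega), if_neg (by omega)]
    have hCyLk : ∀ x, x ≤ 5 → Cy x ∈ L k := by
      intro x hx
      interval_cases x
      · rw [hE0]; exact hzLk
      · rw [hE1]; exact hyLk j
      · rw [hE2]; exact hcLk j
      · rw [hE3]; exact hcLk (j + d)
      · rw [hE4]; exact hcLk (j + 2*d)
      · rw [hE5]; exact hcLk (j + 3*d)
    -- adjacency along the cycle
    have hCyadj : ∀ i, i < n → G.Adj (Cy i) (Cy (i+1)) := by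
      intro i hi
      by_cases h5 : i ≤ 5
      · interval_cases i
        · rw [hE0, hE1]; exact hyadjz j
        · rw [hE1, hE2]; exact hyadjc j
        · rw [hE2, hE3]; exact hcadjd j
        · rw [hE3, hE4]
          have h1 := hcadjd (j + d)
          rw [show j + d + d = j + 2*d by omega] at h1
          exact h1
        · rw [hE4, hE5]
          have h1 := hcadjd (j + 2*d)
          rw [show j + 2*d + d = j + 3*d by omega] at h1
          exact h1
        · rw [hE5, hEQ' 6 (by omega) (by omega)]
          rw [show (6:ℕ) - 6 = 0 by omega, hg0]
          exact (hpadj (j + 3*d)).symm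
      · by_cases h6 : i ≤ 5 + t
        · rw [hEQ' i (by omega) (by omega), hEQ' (i+1) (by omega) (by omega)]
          have h1 := hgadj (i - 6) (by omega)
          rw [show i - 6 + 1 = i + 1 - 6 by omega] at h1
          exact h1
        · have hit : i = 6 + t := by omega
          subst hit
          rw [hEQ' (6+t) (by omega) (by omega), show 6 + t - 6 = t by omega, hgt]
          rw [show 6 + t + 1 = t + 7 by omega, hEend]
          exact hqadj
    have hCycl : Cy n = Cy 0 := by
      rw [hndef, hEend, hE0]
    -- distinctness
    have hdistinct : ∀ a b, a < b → b < n → Cy a ≠ Cy b := by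
      intro a b hab hbn
      by_cases ha5 : a ≤ 5
      · by_cases hb5 : b ≤ 5
        · interval_cases a <;> interval_cases b <;> (try omega)
          · rw [hE0, hE1]; exact (hyadjz j).ne
          · rw [hE0, hE2]; exact hzne' j
          · rw [hE0, hE3]; exact hzne' (j+d)
          · rw [hE0, hE4]; exact hzne' (j+2*d)
          · rw [hE0, hE5]; exact hzne' (j+3*d)
          · rw [hE1, hE2]; exact ynec j j
          · rw [hE1, hE3]; exact ynec j (j+d)
          · rw [hE1, hE4]; exact ynec j (j+2*d)
          · rw [hE1, hE5]; exact ynec j (j+3*d)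
          · rw [hE2, hE3]
            exact hcne j (j+d) (by rcases hm57 with h5|h5 <;> subst h5 <;>
              rcases hd with h6|h6 <;> subst h6 <;> omega)
          · rw [hE2, hE4]
            exact hcne j (j+2*d) (by rcases hm57 with h5|h5 <;> subst h5 <;>
              rcases hd with h6|h6 <;> subst h6 <;> omega)
          · rw [hE2, hE5]
            exact hcne j (j+3*d) (by rcases hm57 with h5|h5 <;> subst h5 <;>
              rcases hd with h6|h6 <;> subst h6 <;> omega)
          · rw [hE3, hE4]
            exact hcne (j+d) (j+2*d) (by rcases hm57 with h5|h5 <;> subst h5 <;>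
              rcases hd with h6|h6 <;> subst h6 <;> omega)
          · rw [hE3, hE5]
            exact hcne (j+d) (j+3*d) (by rcases hm57 with h5|h5 <;> subst h5 <;>
              rcases hd with h6|h6 <;> subst h6 <;> omega)
          · rw [hE4, hE5]
            exact hcne (j+2*d) (j+3*d) (by rcases hm57 with h5|h5 <;> subst h5 <;>
              rcases hd with h6|h6 <;> subst h6 <;> omega)
        · -- a ≤ 5 < b
          rw [hEQ' b (by omega) (by omega)]
          rcases Nat.eq_zero_or_pos (b - 6) with hb0 | hb0
          · rw [hb0, hg0]
            exact hLkne _ _ (hCyLk a ha5) (hpL _)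
          · rcases Nat.lt_or_ge (b - 6) t with hbt | hbt
            · obtain ⟨h, hh, hm'⟩ := hgmem (b-6) (by omega) (by omega)
              exact hne_lv (hCyLk a ha5) hm' (by omega) (by omega) (by omega)
            · rw [show b - 6 = t by omega, hgt]
              exact hLkne _ _ (hCyLk a ha5) hqL
      · rw [hEQ' a (by omega) (by omega), hEQ' b (by omega) (by omega)]
        exact hginj (a-6) (b-6) (by omega) (by omega)
    have hCyinj : ∀ a, a < n → ∀ b, b < n → Cy a = Cy b → a = b := by
      intro a ha b hb he
      rcases Nat.lt_trichotomy a b with h | h | h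
      · exact absurd he (hdistinct a b h hb)
      · exact h
      · exact absurd he.symm (hdistinct b a h ha)
    -- no chords
    have hnadj : ∀ a b, a < b → b < n → b ≠ a + 1 → ¬(a = 0 ∧ b = n - 1) →
        ¬ G.Adj (Cy a) (Cy b) := by
      intro a b hab hbn hne1 hne2 hadj
      by_cases ha5 : a ≤ 5
      · by_cases hb5 : b ≤ 5
        · interval_cases a <;> interval_cases b <;> (try omega)
          · rw [hE0, hE2] at hadj; exact hznadj' j hadj
          · rw [hE0, hE3] at hadj; exact hznadj' (j+d) hadj
          · rw [hE0, hE4] at hadj; exact hznadj' (j+2*d) hadj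
          · rw [hE0, hE5] at hadj; exact hznadj' (j+3*d) hadj
          · -- (1,3) : y vs c (j+d)
            rw [hE1, hE3] at hadj
            rcases hd with hd1 | hd1
            · rw [hd1] at hadj
              exact hyc1 j hadj
            · rw [show c (j+d) = c (j+m-1) from hcper _ _
                (by rcases hm57 with h5|h5 <;> subst h5 <;> omega)] at hadj
              exact hyc1' j hadj
          · -- (1,4) : y vs c (j+2d)
            rw [hE1, hE4] at hadj
            rcases hd with hd1 | hd1
            · rw [show c (j+2*d) = c (j+2) from hcper _ _
                (by subst hd1; rcases hm57 with h5|h5 <;> subst h5 <;> omega)] at hadj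
              exact hyc2 j hadj
            · rw [show c (j+2*d) = c (j+m-2) from hcper _ _
                (by rcases hm57 with h5|h5 <;> subst h5 <;> subst hd1 <;> omega)] at hadj
              exact hyc2' j hadj
          · -- (1,5) : the A chord
            rw [hE1, hE5] at hadj
            exact hnA hadj
          · -- (2,4)
            rw [hE2, hE4] at hadj
            exact hcnadj j (j+2*d) (by rcases hm57 with h5|h5 <;> subst h5 <;>
              rcases hd with h6|h6 <;> subst h6 <;> omega)
              (by rcases hm57 with h5|h5 <;> subst h5 <;>
                rcases hd with h6|h6 <;> subst h6 <;> omega) hadj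
          · -- (2,5)
            rw [hE2, hE5] at hadj
            exact hcnadj j (j+3*d) (by rcases hm57 with h5|h5 <;> subst h5 <;>
              rcases hd with h6|h6 <;> subst h6 <;> omega)
              (by rcases hm57 with h5|h5 <;> subst h5 <;>
                rcases hd with h6|h6 <;> subst h6 <;> omega) hadj
          · -- (3,5)
            rw [hE3, hE5] at hadj
            exact hcnadj (j+d) (j+3*d) (by rcases hm57 with h5|h5 <;> subst h5 <;>
              rcases hd with h6|h6 <;> subst h6 <;> omega)
              (by rcases hm57 with h5|h5 <;> subst h5 <;>
                rcases hd with h6|h6 <;> subst h6 <;> omega) hadj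
        · -- a ≤ 5 < b
          rcases Nat.eq_zero_or_pos (b - 6) with hb0 | hb0
          · -- b = 6 : p
            have hEb : Cy b = pv (j + 3*d) := by
              rw [hEQ' b (by omega) (by omega), hb0, hg0]
            rw [hEb] at hadj
            interval_cases a <;> (try omega)
            · rw [hE0] at hadj; exact hpnz _ hadj.symm
            · rw [hE1] at hadj; exact hnD hadj.symm
            · rw [hE2] at hadj; exact hnB hadj.symm
            · -- (3,6)
              rw [hE3] at hadj
              rcases hd with hd1 | hd1
              · rw [show c (j+d) = c (j+3*d+m-2) from hcper _ _
                  (by subst hd1; rcases hm57 with h5|h5 <;> subst h5 <;> omega)] at hadj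
                exact hpc2' (j+3*d) hadj.symm
              · rw [show c (j+d) = c (j+3*d+2) from hcper _ _
                  (by rcases hm57 with h5|h5 <;> subst h5 <;> subst hd1 <;> omega)] at hadj
                exact hpc2 (j+3*d) hadj.symm
            · -- (4,6)
              rw [hE4] at hadj
              rcases hd with hd1 | hd1
              · rw [show c (j+2*d) = c (j+3*d+m-1) from hcper _ _
                  (by subst hd1; rcases hm57 with h5|h5 <;> subst h5 <;> omega)] at hadj
                exact hpc1' (j+3*d) hadj.symm
              · rw [show c (j+2*d) = c (j+3*d+1) from hcper _ _
                  (by rcases hm57 with h5|h5 <;> subst h5 <;> subst hd1 <;> omega)] at hadj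
                exact hpc1 (j+3*d) hadj.symm
          · rcases Nat.lt_or_ge (b - 6) t with hbt | hbt
            · -- interior of Q
              obtain ⟨h, hh, hm'⟩ := hgmem (b-6) (by omega) (by omega)
              rw [hEQ' b (by omega) (by omega)] at hadj
              exact hnoskip hm' (hCyLk a ha5) (by omega) (le_refl k) (by omega) hadj.symm
            · -- b = 6 + t : q
              have hEb : Cy b = q := by
                rw [hEQ' b (by omega) (by omega), show b - 6 = t by omega, hgt]
              rw [hEb] at hadj
              interval_cases a <;> (try omega)
              · rw [hE1] at hadj; exact hqny j hadj.symm
              · rw [hE2] at hadj; exact hqnc j hadj.symm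
              · rw [hE3] at hadj; exact hqnc (j+d) hadj.symm
              · rw [hE4] at hadj; exact hqnc (j+2*d) hadj.symm
              · rw [hE5] at hadj; exact hqnc (j+3*d) hadj.symm
      · -- both in Q
        rw [hEQ' a (by omega) (by omega), hEQ' b (by omega) (by omega)] at hadj
        exact hgchord (a-6) (b-6) (by omega) (by omega) hadj
    have hCyind : ∀ a, a < n → ∀ b, b < n → G.Adj (Cy a) (Cy b) →
        b = a + 1 ∨ a = b + 1 ∨ (a = 0 ∧ b = n - 1) ∨ (b = 0 ∧ a = n - 1) := by
      intro a ha b hb hadj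
      rcases Nat.lt_trichotomy a b with h | h | h
      · by_cases h1 : b = a + 1
        · exact Or.inl h1
        · by_cases h2 : a = 0 ∧ b = n - 1
          · exact Or.inr (Or.inr (Or.inl h2))
          · exact absurd hadj (hnadj a b h hb h1 h2)
      · subst h
        exact absurd hadj G.irrefl
      · by_cases h1 : a = b + 1
        · exact Or.inr (Or.inl h1)
        · by_cases h2 : b = 0 ∧ a = n - 1
          · exact Or.inr (Or.inr (Or.inr h2))
          · exact absurd hadj.symm (hnadj b a h ha h1 h2)
    refine hodd n (by rw [hndef, Nat.odd_iff]; omega) (by omega) ?_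
    exact StmtAux.hasInducedCycle_of_fn Cy n (by omega) hCyadj hCycl hCyinj hCyind
  -- endgame
  rcases hm57 with hm5 | hm7
  · -- m = 5
    subst hm5
    have hD1 : G.Adj (pv 5) (yv 2) := by
      rcases hconstraint 2 1 (Or.inl rfl) with hA | hB | hD
      · exact absurd hA (hyc2' 2)
      · exact absurd hB (hpc2 5)
      · exact hD
    have hD2 : G.Adj (pv 15) (yv 3) := by
      rcases hconstraint 3 4 (Or.inr rfl) with hA | hB | hD
      · exact absurd hA (hyc2 3)
      · exact absurd hB (hpc2' 15)
      · exact hD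
    have hD2' : G.Adj (pv 5) (yv 3) := hD2
    exact StmtAux.no_c4 hgirth hD1 (hyadjz 2).symm (hyadjz 3) hD2'.symm
      (hpnez 5) (hyne_adj 2 3 (hcadj 2))
  · -- m = 7
    subst hm7
    have ha7 : ∀ i : ℕ, yv (i+7) = yv i := fun i => hyper _ _ (by omega)
    have haEq : ∀ i j', G.Adj (yv i) (c j') → yv i = yv j' :=
      fun i j' h => huniq j' (yv i) (hyadjz i) h
    have hR1 : ∀ i : ℕ, (yv (i+4) = yv (i+7)) ∨ G.Adj (pv i) (c (i+4)) ∨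
        G.Adj (pv i) (yv (i+4)) := by
      intro i
      have hcons := hconstraint (i+4) 1 (Or.inl rfl)
      rw [show i+4+3*1 = i+7 from by omega] at hcons
      rw [show pv (i+7) = pv i from hpper _ _ (by omega)] at hcons
      rcases hcons with hA | hB | hD
      · exact Or.inl (haEq _ _ hA)
      · exact Or.inr (Or.inl hB)
      · exact Or.inr (Or.inr hD)
    have hR2 : ∀ i : ℕ, (yv (i+3) = yv i) ∨ G.Adj (pv i) (c (i+3)) ∨
        G.Adj (pv i) (yv (i+3)) := by
      intro i
      have hcons := hconstraint (i+3) 6 (Or.inr rfl)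
      rw [show i+3+3*6 = i+21 from by omega] at hcons
      rw [show c (i+21) = c i from hcper _ _ (by omega)] at hcons
      rw [show pv (i+21) = pv i from hpper _ _ (by omega)] at hcons
      rcases hcons with hA | hB | hD
      · exact Or.inl (haEq _ _ hA)
      · exact Or.inr (Or.inl hB)
      · exact Or.inr (Or.inr hD)
    have X1 : ∀ i : ℕ, G.Adj (pv i) (c (i+4)) → G.Adj (pv i) (c (i+3)) → False :=
      fun i h1 h2 => StmtAux.no_tri hgirth h2 (hcadj (i+3)) h1.symm
    have X3 : ∀ i : ℕ, G.Adj (pv i) (c (i+4)) → G.Adj (pv i) (yv (i+3)) → False :=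
      fun i h1 h2 => StmtAux.no_c4 hgirth h1 (hcadj (i+3)).symm (hyadjc (i+3)).symm h2.symm
        (hLkne _ _ (hcLk (i+3)) (hpL i)).symm (ynec (i+3) (i+4)).symm
    have X4 : ∀ i : ℕ, G.Adj (pv i) (c (i+3)) → G.Adj (pv i) (yv (i+4)) → False :=
      fun i h1 h2 => StmtAux.no_c4 hgirth h1 (hcadj (i+3)) (hyadjc (i+4)).symm h2.symm
        (hLkne _ _ (hcLk (i+4)) (hpL i)).symm (ynec (i+4) (i+3)).symm
    have X6 : ∀ i : ℕ, G.Adj (pv i) (yv (i+3)) → G.Adj (pv i) (yv (i+4)) → False :=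
      fun i h1 h2 => StmtAux.no_c4 hgirth h1 (hyadjz (i+3)).symm (hyadjz (i+4)) h2.symm
        (hpnez i) (hyne_adj (i+3) (i+4) (hcadj (i+3)))
    have h04 : ∀ i : ℕ, (yv i = yv (i+3)) ∨ (yv (i+4) = yv (i+7)) := by
      intro i
      by_contra hc
      push_neg at hc
      obtain ⟨hc1, hc2⟩ := hc
      rcases hR1 i with hA | hB | hD
      · exact hc2 hA
      · rcases hR2 i with hA' | hB' | hD'
        · exact hc1 hA'.symm
        · exact X1 i hB hB'
        · exact X3 i hB hD'
      · rcases hR2 i with hA' | hB' | hD'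
        · exact hc1 hA'.symm
        · exact X4 i hB' hD
        · exact X6 i hD' hD
    have XA1 : ∀ i : ℕ, yv i = yv (i+3) → yv (i+3) = yv (i+6) → False := by
      intro i h1 h2
      have h4 : G.Adj (yv i) (c (i+6)) := by
        rw [h1.trans h2]
        exact hyadjc (i+6)
      exact hyc1' i h4
    have XA2 : ∀ i : ℕ, yv i = yv (i+3) → yv (i+4) = yv (i+7) → False := by
      intro i h1 h2
      have h3 : yv i = yv (i+4) := (h2.trans (ha7 i)).symm
      have h4 : G.Adj (yv i) (c (i+4)) := by
        rw [h3]
        exact hyadjc (i+4)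
      have h5 : G.Adj (yv i) (c (i+3)) := by
        rw [h1]
        exact hyadjc (i+3)
      exact StmtAux.no_tri hgirth h5 (hcadj (i+3)) h4.symm
    by_cases hA0 : yv 0 = yv 3
    · have hn4 : ¬ (yv 4 = yv 7) := fun h => XA2 0 hA0 h
      have hA1 : yv 1 = yv 4 := by
        rcases h04 4 with h | h
        · exact absurd h hn4
        · exact (hyper 1 8 (by omega)).trans (h.trans (hyper 11 4 (by omega)))
      have hn5 : ¬ (yv 5 = yv 8) := fun h => XA2 1 hA1 h
      have hA2 : yv 2 = yv 5 := by
        rcases h04 5 with h | h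
        · exact absurd h hn5
        · exact (hyper 2 9 (by omega)).trans (h.trans (hyper 12 5 (by omega)))
      have hn6 : ¬ (yv 6 = yv 9) := fun h => XA2 2 hA2 h
      have hn3 : ¬ (yv 3 = yv 6) := fun h => XA1 0 hA0 h
      rcases h04 6 with h | h
      · exact hn6 h
      · exact hn3 ((hyper 3 10 (by omega)).trans (h.trans (hyper 13 6 (by omega))))
    · have hA3 : yv 3 = yv 6 := by
        rcases h04 3 with h | h
        · exact h
        · exact absurd ((hyper 0 7 (by omega)).trans (h.trans (hyper 10 3 (by omega)))) hA0
      have hn6 : ¬ (yv 6 = yv 9) := fun h => XA1 3 hA3 h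
      have hA2 : yv 2 = yv 5 := by
        rcases h04 2 with h | h
        · exact h
        · exact absurd h hn6
      have hn5 : ¬ (yv 5 = yv 8) := fun h => XA1 2 hA2 h
      have hA1 : yv 1 = yv 4 := by
        rcases h04 1 with h | h
        · exact h
        · exact absurd h hn5
      have hn4 : ¬ (yv 4 = yv 7) := fun h => XA1 1 hA1 h
      rcases h04 0 with h | h
      · exact hA0 h
      · exact hn4 h
end

section
/- Let G be a simple graph of girth at least 5 with no odd hole of length at least 9, let (L_0, …, L_k) be a stable levelling of G, and let H be an induced subgraph of G[L_k]. Then for every z ∈ V(H), the graph H[N_H^2(z)] contains no 5-hole and no 7-hole. -/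
open SimpleGraph

section Util

variable {V : Type*} {G : SimpleGraph V}

lemma getVert_injOn_path {u v : V} (p : G.Walk u v) (hp : p.IsPath) :
    ∀ i ≤ p.length, ∀ j ≤ p.length, p.getVert i = p.getVert j → i = j := by
  induction p with
  | nil => intro i hi j hj _; simp only [Walk.length_nil, Nat.le_zero] at hi hj; omega
  | cons h q ih =>
    rw [Walk.cons_isPath_iff] at hp
    intro i hi j hj heq
    match i, j with
    | 0, 0 => rfl
    | 0, (j+1) =>
      exfalso
      apply hp.2
      rw [Walk.mem_support_iff_exists_getVert]
      exact ⟨j, by simpa [Walk.getVert_cons_succ] using heq.symm, by simpa using hj⟩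
    | (i+1), 0 =>
      exfalso
      apply hp.2
      rw [Walk.mem_support_iff_exists_getVert]
      exact ⟨i, by simpa [Walk.getVert_cons_succ] using heq, by simpa using hi⟩
    | (i+1), (j+1) =>
      have := ih hp.1 i (by simpa using hi) j (by simpa using hj)
        (by simpa [Walk.getVert_cons_succ] using heq)
      omega

lemma getVert_injOn_cycle {u : V} (c : G.Walk u u) (hc : c.IsCycle) :
    ∀ i < c.length, ∀ j < c.length, c.getVert i = c.getVert j → i = j := by
  match c with
  | .nil => exact absurd hc (Walk.IsCycle.not_of_nil)
  | .cons hadj q =>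
    rw [Walk.cons_isCycle_iff] at hc
    intro i hi j hj heq
    match i, j with
    | 0, 0 => rfl
    | 0, (j+1) =>
      exfalso
      have : q.getVert j = u := by simpa [Walk.getVert_cons_succ] using heq.symm
      have hjq : j < q.length := by simpa using hj
      have := getVert_injOn_path q hc.1 j (le_of_lt hjq) q.length le_rfl
        (by rw [this, Walk.getVert_length])
      omega
    | (i+1), 0 =>
      exfalso
      have : q.getVert i = u := by simpa [Walk.getVert_cons_succ] using heq
      have hiq : i < q.length := by simpa using hi
      have := getVert_injOn_path q hc.1 i (le_of_lt hiq) q.length le_rfl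
        (by rw [this, Walk.getVert_length])
      omega
    | (i+1), (j+1) =>
      have hiq : i < q.length := by simpa using hi
      have hjq : j < q.length := by simpa using hj
      have := getVert_injOn_path q hc.1 i hiq.le j hjq.le
        (by simpa [Walk.getVert_cons_succ] using heq)
      omega

end Util

section Girth

variable {V : Type*} {G : SimpleGraph V}

private lemma sym2_ne {a b c d : V} (h1 : a = c → b ≠ d) (h2 : a = d → b ≠ c) :
    s(a, b) ≠ s(c, d) := by
  intro h
  rw [Sym2.eq_iff] at h
  rcases h with ⟨rfl, rfl⟩ | ⟨rfl, rfl⟩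
  · exact h1 rfl rfl
  · exact h2 rfl rfl

lemma noC3 (hg : (5 : ℕ∞) ≤ G.egirth) {a b c : V}
    (hab : G.Adj a b) (hbc : G.Adj b c) (hca : G.Adj c a) : False := by
  let w : G.Walk a a := .cons hab (.cons hbc (.cons hca .nil))
  have hcyc : w.IsCycle := by
    rw [Walk.cons_isCycle_iff]
    constructor
    · rw [Walk.cons_isPath_iff]
      refine ⟨?_, ?_⟩
      · rw [Walk.cons_isPath_iff]
        exact ⟨Walk.IsPath.nil, by simp [hca.ne]⟩
      · simp only [Walk.support_cons, Walk.support_nil, List.mem_cons, List.mem_singleton]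
        push_neg
        exact ⟨hbc.ne, fun h => hab.ne h.symm, by simp⟩
    · simp only [Walk.edges_cons, Walk.edges_nil, List.mem_cons, List.mem_singleton]
      push_neg
      refine ⟨?_, ?_, by simp⟩
      · exact sym2_ne (fun h => absurd h hab.ne) (fun h _ => absurd h hca.ne')
      · exact sym2_ne (fun h => absurd h hca.ne') (fun _ => hbc.ne)
  have := le_egirth.mp hg a w hcyc
  have hlen : w.length = 3 := rfl
  rw [hlen] at this
  norm_num at this

lemma noC4 (hg : (5 : ℕ∞) ≤ G.egirth) {a b c d : V}
    (hab : G.Adj a b) (hbc : G.Adj b c) (hcd : G.Adj c d) (hda : G.Adj d a)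
    (hac : a ≠ c) (hbd : b ≠ d) : False := by
  let w : G.Walk a a := .cons hab (.cons hbc (.cons hcd (.cons hda .nil)))
  have hcyc : w.IsCycle := by
    rw [Walk.cons_isCycle_iff]
    constructor
    · rw [Walk.cons_isPath_iff, Walk.cons_isPath_iff, Walk.cons_isPath_iff]
      refine ⟨⟨⟨Walk.IsPath.nil, by simp [hda.ne]⟩, ?_⟩, ?_⟩
      · simp only [Walk.support_cons, Walk.support_nil, List.mem_cons, List.mem_singleton]
        push_neg
        exact ⟨hcd.ne, fun h => hac h.symm, by simp⟩
      · simp only [Walk.support_cons, Walk.support_nil, List.mem_cons, List.mem_singleton]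
        push_neg
        exact ⟨hbc.ne, hbd, fun h => hab.ne h.symm, by simp⟩
    · simp only [Walk.edges_cons, Walk.edges_nil, List.mem_cons, List.mem_singleton]
      push_neg
      refine ⟨?_, ?_, ?_, by simp⟩
      · exact sym2_ne (fun h => absurd h hab.ne) (fun h _ => absurd h hac)
      · exact sym2_ne (fun h => absurd h hac) (fun _ => hbc.ne)
      · exact sym2_ne (fun _ => hab.ne') (fun _ => hbd)
  have := le_egirth.mp hg a w hcyc
  have hlen : w.length = 4 := rfl
  rw [hlen] at this
  norm_num at this

end Girth

section Close
variable {V : Type*} {G : SimpleGraph V}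

variable {V : Type*} {G : SimpleGraph V}

private lemma sym2_ne' {a b c d : V} (h1 : a = c → b ≠ d) (h2 : a = d → b ≠ c) :
    s(a, b) ≠ s(c, d) := by
  intro h
  rw [Sym2.eq_iff] at h
  rcases h with ⟨rfl, rfl⟩ | ⟨rfl, rfl⟩
  · exact h1 rfl rfl
  · exact h2 rfl rfl

lemma close_walk {u v A B C : V} (W : G.Walk u v) (hW : W.IsPath)
    (hInd : ∀ x y, x ∈ W.support → y ∈ W.support → G.Adj x y → W.toSubgraph.Adj x y)
    (hAu : G.Adj A u) (hvB : G.Adj v B) (hBC : G.Adj B C) (hCA : G.Adj C A)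
    (hA : ∀ x ∈ W.support, x ≠ u → ¬ G.Adj A x) (hAmem : A ∉ W.support)
    (hB : ∀ x ∈ W.support, x ≠ v → ¬ G.Adj B x) (hBmem : B ∉ W.support)
    (hC : ∀ x ∈ W.support, ¬ G.Adj C x) (hCmem : C ∉ W.support)
    (hAB : ¬ G.Adj A B) (hABne : A ≠ B) (hACne : A ≠ C) (hBCne : B ≠ C) :
    G.HasInducedCycle (W.length + 4) := by
  have huW : u ∈ W.support := W.start_mem_support
  have hvW : v ∈ W.support := W.end_mem_support
  have hCu : C ≠ u := fun h => hCmem (h ▸ huW)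
  have hCv : C ≠ v := fun h => hCmem (h ▸ hvW)
  have hAv : A ≠ v := fun h => hAmem (h ▸ hvW)
  have hBu : B ≠ u := fun h => hBmem (h ▸ huW)
  let tailw : G.Walk v C := .cons hvB (.cons hBC .nil)
  let mid : G.Walk u C := W.append tailw
  let rest : G.Walk A C := .cons hAu mid
  let cyc : G.Walk C C := .cons hCA rest
  have htail_support : tailw.support = [v, B, C] := by
    simp [tailw, Walk.support_cons]
  have hmid_support : mid.support = W.support ++ [B, C] := by
    simp only [mid, Walk.support_append, htail_support, List.tail_cons]
  have hmid_path : mid.IsPath := by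
    rw [Walk.isPath_def, hmid_support]
    refine List.Nodup.append hW.support_nodup (by simp [hBCne]) ?_
    intro x hx hx'
    simp only [List.mem_cons, List.mem_singleton, List.not_mem_nil, or_false] at hx'
    rcases hx' with rfl | rfl
    · exact hBmem hx
    · exact hCmem hx
  have hrest_path : rest.IsPath := by
    rw [Walk.cons_isPath_iff]
    refine ⟨hmid_path, ?_⟩
    rw [hmid_support]
    simp only [List.mem_append, List.mem_cons, List.mem_singleton, List.not_mem_nil, or_false]
    push_neg
    exact ⟨hAmem, hABne, hACne⟩
  have hcyc_cycle : cyc.IsCycle := by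
    rw [Walk.cons_isCycle_iff]
    refine ⟨hrest_path, ?_⟩
    intro hmem
    simp only [rest, Walk.edges_cons, List.mem_cons] at hmem
    rcases hmem with h | hmem
    · exact sym2_ne' (fun h _ => hACne h.symm) (fun h _ => hCu h) h
    · simp only [mid, Walk.edges_append, List.mem_append] at hmem
      rcases hmem with h | h
      · exact hCmem (W.fst_mem_support_of_mem_edges h)
      · simp only [tailw, Walk.edges_cons, Walk.edges_nil, List.mem_cons,
          List.not_mem_nil, or_false] at h
        exact h.elim (sym2_ne' (fun _ => hABne) (fun _ => hAv)) (sym2_ne' (fun _ => hACne) (fun _ => hABne))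
  have hlen : cyc.length = W.length + 4 := by
    simp only [cyc, rest, mid, tailw, Walk.length_cons, Walk.length_append, Walk.length_nil]
  refine ⟨C, cyc, hcyc_cycle, hlen, ?_⟩
  -- Inducedness
  have hsupp : ∀ x, x ∈ cyc.support ↔ (x = C ∨ x = A ∨ x ∈ W.support ∨ x = B) := by
    intro x
    simp only [cyc, rest, Walk.support_cons, hmid_support, List.mem_cons, List.mem_append,
      List.mem_singleton, List.not_mem_nil, or_false]
    tauto
  -- membership of edges into cyc.toSubgraph
  have hCAe : cyc.toSubgraph.Adj C A := by
    simp [cyc, Walk.toSubgraph]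
  have hAue : cyc.toSubgraph.Adj A u := by
    simp [cyc, rest, Walk.toSubgraph]
  have hvBe : cyc.toSubgraph.Adj v B := by
    simp [cyc, rest, mid, tailw, Walk.toSubgraph, Walk.toSubgraph_append]
  have hBCe : cyc.toSubgraph.Adj B C := by
    simp [cyc, rest, mid, tailw, Walk.toSubgraph, Walk.toSubgraph_append]
  have hWe : ∀ {x y}, W.toSubgraph.Adj x y → cyc.toSubgraph.Adj x y := by
    intro x y h
    simp only [cyc, rest, mid, Walk.toSubgraph, Walk.toSubgraph_append, Subgraph.sup_adj]
    tauto
  intro x hx y hy hadj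
  rw [Walk.mem_verts_toSubgraph, hsupp] at hx hy
  -- helper facts
  have hAx : ∀ x ∈ W.support, G.Adj A x → cyc.toSubgraph.Adj A x := by
    intro x hxW hax
    by_cases hxu : x = u
    · subst hxu; exact hAue
    · exact absurd hax (hA x hxW hxu)
  have hBx : ∀ x ∈ W.support, G.Adj B x → cyc.toSubgraph.Adj B x := by
    intro x hxW hbx
    by_cases hxv : x = v
    · subst hxv; exact hvBe.symm
    · exact absurd hbx (hB x hxW hxv)
  rcases hx with rfl | rfl | hxW | rfl <;> rcases hy with rfl | rfl | hyW | rfl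
  · exact absurd rfl hadj.ne
  · exact hCAe
  · exact absurd hadj (hC _ hyW)
  · exact hBCe.symm
  · exact hCAe.symm
  · exact absurd rfl hadj.ne
  · exact hAx _ hyW hadj
  · exact absurd hadj hAB
  · exact absurd hadj.symm (hC _ hxW)
  · exact (hAx _ hxW hadj.symm).symm
  · exact hWe (hInd x y hxW hyW hadj)
  · exact (hBx _ hxW hadj.symm).symm
  · exact hBCe
  · exact absurd hadj.symm hAB
  · exact hBx _ hyW hadj
  · exact absurd rfl hadj.ne

end Close

section Level
variable {V : Type*} {G : SimpleGraph V} {L : ℕ → Set V} {k : ℕ}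

lemma level_ne (hL : G.IsStableLevelling L k) {i j : ℕ} (hik : i ≤ k) (hjk : j ≤ k)
    (hij : i ≠ j) {x y : V} (hx : x ∈ L i) (hy : y ∈ L j) : x ≠ y := by
  rintro rfl
  exact Set.disjoint_left.mp (hL.1.1 i hik j hjk hij) hx hy

lemma level_noadj (hL : G.IsStableLevelling L k) {t h : ℕ} (ht1 : 1 ≤ t) (ht2 : t ≤ k)
    (hh : h + 2 ≤ t) {x p : V} (hx : x ∈ L t) (hp : p ∈ L h) : ¬ G.Adj p x :=
  (hL.1.2.2 t ht1 ht2 x hx).2 h hh p hp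

lemma level_parent (hL : G.IsStableLevelling L k) {t : ℕ} (ht1 : 1 ≤ t) (ht2 : t ≤ k)
    {x : V} (hx : x ∈ L t) : ∃ p ∈ L (t - 1), G.Adj p x :=
  (hL.1.2.2 t ht1 ht2 x hx).1

end Level

section Core
variable {V : Type*} {G : SimpleGraph V} {L : ℕ → Set V} {k : ℕ}

lemma core (hg : (5 : ℕ∞) ≤ G.egirth)
    (hodd : ∀ n : ℕ, Odd n → 9 ≤ n → ¬ G.HasInducedCycle n)
    (hL : G.IsStableLevelling L k) :
    ∀ j, 1 ≤ j → j + 1 ≤ k → ∀ (u v : V) (W : G.Walk u v), u ∈ L j → v ∈ L j →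
      ¬ G.Adj u v → W.IsPath →
      (∀ x y, x ∈ W.support → y ∈ W.support → G.Adj x y → W.toSubgraph.Adj x y) →
      Odd W.length → 5 ≤ W.length →
      (∀ x ∈ W.support, x ≠ u → x ≠ v → ∃ t, j + 1 ≤ t ∧ t ≤ k ∧ x ∈ L t) →
      (∀ p ∈ L (j - 1), G.Adj p u → G.Adj p v → False) → False := by
  intro j
  induction j with
  | zero => omega
  | succ j ih =>
    intro hj1 hjk u v W hu hv huv hW hInd hOdd hlen hint hPuv
    obtain ⟨pu, hpu, hpuAdj⟩ := level_parent hL (by omega) (by omega) hu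
    obtain ⟨pv, hpv, hpvAdj⟩ := level_parent hL (by omega) (by omega) hv
    rw [Nat.add_sub_cancel] at hpu hpv
    rw [Nat.add_sub_cancel] at hPuv
    have hpuv_nadj : ¬ G.Adj pu pv := hL.2 j (by omega) pu hpu pv hpv
    have hpupv_ne : pu ≠ pv := fun h => hPuv pu hpu hpuAdj (h ▸ hpvAdj)
    have hpu_v : ¬ G.Adj pu v := fun h => hPuv pu hpu hpuAdj h
    have hpv_u : ¬ G.Adj pv u := fun h => hPuv pv hpv h hpvAdj
    have hpu_int : ∀ x ∈ W.support, x ≠ u → ¬ G.Adj pu x := by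
      intro x hx hxu
      by_cases hxv : x = v
      · subst hxv; exact hpu_v
      · obtain ⟨t, ht1, ht2, hxt⟩ := hint x hx hxu hxv
        exact level_noadj hL (by omega) ht2 (by omega) hxt hpu
    have hpv_int : ∀ x ∈ W.support, x ≠ v → ¬ G.Adj pv x := by
      intro x hx hxv
      by_cases hxu : x = u
      · subst hxu; exact hpv_u
      · obtain ⟨t, ht1, ht2, hxt⟩ := hint x hx hxu hxv
        exact level_noadj hL (by omega) ht2 (by omega) hxt hpv
    have hnotmem : ∀ (h : ℕ), h < j + 1 → h ≤ k → ∀ p ∈ L h, p ∉ W.support := by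
      intro h hh hhk p hp hmem
      by_cases h1 : p = u
      · exact level_ne hL hhk (by omega) (by omega) hp hu h1
      by_cases h2 : p = v
      · exact level_ne hL hhk (by omega) (by omega) hp hv h2
      obtain ⟨t, ht1, ht2, hxt⟩ := hint p hmem h1 h2
      exact level_ne hL hhk ht2 (by omega) hp hxt rfl
    rcases Nat.eq_zero_or_pos j with rfl | hjpos
    · obtain ⟨v0, hv0⟩ := hL.1.2.1
      rw [hv0] at hpu hpv
      exact hpupv_ne (hpu.trans hpv.symm)
    by_cases hq : ∃ q ∈ L (j - 1), G.Adj q pu ∧ G.Adj q pv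
    · obtain ⟨q, hqmem, hqpu, hqpv⟩ := hq
      have hcyc := close_walk (G := G) W hW hInd hpuAdj hpvAdj.symm hqpv.symm hqpu
        hpu_int (hnotmem j (by omega) (by omega) pu hpu)
        hpv_int (hnotmem j (by omega) (by omega) pv hpv)
        (fun x hx => by
          intro hadj
          by_cases h1 : x = u
          · subst h1
            exact level_noadj hL (by omega) (by omega) (by omega) hu hqmem hadj
          by_cases h2 : x = v
          · subst h2
            exact level_noadj hL (by omega) (by omega) (by omega) hv hqmem hadj
          obtain ⟨t, ht1, ht2, hxt⟩ := hint x hx h1 h2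
          exact level_noadj hL (by omega) ht2 (by omega) hxt hqmem hadj)
        (hnotmem (j - 1) (by omega) (by omega) q hqmem)
        hpuv_nadj hpupv_ne
        (level_ne hL (by omega) (by omega) (by omega) hpu hqmem)
        (level_ne hL (by omega) (by omega) (by omega) hpv hqmem)
      exact hodd (W.length + 4) (by obtain ⟨c, hc⟩ := hOdd; exact ⟨c + 2, by omega⟩)
        (by omega) hcyc
    · -- lift
      let mid : G.Walk u pv := W.append (.cons hpvAdj.symm .nil)
      have hmid_supp : mid.support = W.support ++ [pv] := by
        simp [mid, Walk.support_append]
      let W' : G.Walk pu pv := .cons hpuAdj mid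
      have hW'_supp : W'.support = pu :: (W.support ++ [pv]) := by
        simp [W', Walk.support_cons, hmid_supp]
      have hpv_notmem : pv ∉ W.support := hnotmem j (by omega) (by omega) pv hpv
      have hpu_notmem : pu ∉ W.support := hnotmem j (by omega) (by omega) pu hpu
      have hW'path : W'.IsPath := by
        rw [Walk.cons_isPath_iff]
        constructor
        · rw [Walk.isPath_def, hmid_supp]
          refine List.Nodup.append hW.support_nodup (by simp) ?_
          intro x hx hx'
          simp only [List.mem_singleton] at hx'
          exact hpv_notmem (hx' ▸ hx)
        · rw [hmid_supp]
          simp only [List.mem_append, List.mem_singleton]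
          push_neg
          exact ⟨hpu_notmem, hpupv_ne⟩
      have hW'ind : ∀ x y, x ∈ W'.support → y ∈ W'.support → G.Adj x y →
          W'.toSubgraph.Adj x y := by
        have hlift : ∀ {x y}, W.toSubgraph.Adj x y → W'.toSubgraph.Adj x y := by
          intro x y h
          simp only [W', mid, Walk.toSubgraph, Walk.toSubgraph_append, Subgraph.sup_adj]
          tauto
        have hpu_u : W'.toSubgraph.Adj pu u := by
          simp [W', Walk.toSubgraph]
        have hv_pv : W'.toSubgraph.Adj v pv := by
          simp [W', mid, Walk.toSubgraph, Walk.toSubgraph_append]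
        intro x y hx hy hadj
        rw [hW'_supp] at hx hy
        simp only [List.mem_cons, List.mem_append, List.mem_singleton] at hx hy
        simp only [List.mem_singleton, List.not_mem_nil, or_false] at hx hy
        rcases hx with rfl | hx | rfl <;> rcases hy with rfl | hy | rfl
        · exact absurd rfl hadj.ne
        · by_cases h1 : y = u
          · subst h1; exact hpu_u
          · exact absurd hadj (hpu_int y hy h1)
        · exact absurd hadj hpuv_nadj
        · by_cases h1 : x = u
          · subst h1; exact hpu_u.symm
          · exact absurd hadj.symm (hpu_int x hx h1)
        · exact hlift (hInd x y hx hy hadj)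
        · by_cases h1 : x = v
          · subst h1; exact hv_pv
          · exact absurd hadj.symm (hpv_int x hx h1)
        · exact absurd hadj.symm hpuv_nadj
        · by_cases h1 : y = v
          · subst h1; exact hv_pv.symm
          · exact absurd hadj (hpv_int y hy h1)
        · exact absurd rfl hadj.ne
      have hW'len : W'.length = W.length + 2 := by
        simp [W', mid, Walk.length_append]
      apply ih (by omega) (by omega) pu pv W' hpu hpv hpuv_nadj hW'path hW'ind
        (by rw [hW'len]; obtain ⟨c, hc⟩ := hOdd; exact ⟨c + 1, by omega⟩)
        (by omega)
      · intro x hx hxpu hxpv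
        rw [hW'_supp] at hx
        simp only [List.mem_cons, List.mem_append, List.mem_singleton, List.not_mem_nil,
          or_false] at hx
        rcases hx with rfl | hx | rfl
        · exact absurd rfl hxpu
        · by_cases h1 : x = u
          · exact ⟨j + 1, by omega, by omega, h1 ▸ hu⟩
          by_cases h2 : x = v
          · exact ⟨j + 1, by omega, by omega, h2 ▸ hv⟩
          obtain ⟨t, ht1, ht2, hxt⟩ := hint x hx h1 h2
          exact ⟨t, by omega, ht2, hxt⟩
        · exact absurd rfl hxpv
      · intro p hp h1 h2
        exact hq ⟨p, hp, h1, h2⟩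

end Core

section ConnNine
variable {V : Type*} {G : SimpleGraph V} {L : ℕ → Set V} {k : ℕ}

lemma explicit_path5 {x0 x1 x2 x3 x4 x5 : V}
    (a01 : G.Adj x0 x1) (a12 : G.Adj x1 x2) (a23 : G.Adj x2 x3) (a34 : G.Adj x3 x4)
    (a45 : G.Adj x4 x5)
    (n02 : ¬G.Adj x0 x2) (n03 : ¬G.Adj x0 x3) (n04 : ¬G.Adj x0 x4) (n05 : ¬G.Adj x0 x5)
    (n13 : ¬G.Adj x1 x3) (n14 : ¬G.Adj x1 x4) (n15 : ¬G.Adj x1 x5)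
    (n24 : ¬G.Adj x2 x4) (n25 : ¬G.Adj x2 x5) (n35 : ¬G.Adj x3 x5)
    (d02 : x0 ≠ x2) (d03 : x0 ≠ x3) (d04 : x0 ≠ x4) (d05 : x0 ≠ x5)
    (d13 : x1 ≠ x3) (d14 : x1 ≠ x4) (d15 : x1 ≠ x5)
    (d24 : x2 ≠ x4) (d25 : x2 ≠ x5) (d35 : x3 ≠ x5) :
    ∃ W : G.Walk x0 x5, W.IsPath ∧ W.length = 5 ∧
      W.support = [x0, x1, x2, x3, x4, x5] ∧
      (∀ x y, x ∈ W.support → y ∈ W.support → G.Adj x y → W.toSubgraph.Adj x y) := by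
  let W : G.Walk x0 x5 := .cons a01 (.cons a12 (.cons a23 (.cons a34 (.cons a45 .nil))))
  have hsupp : W.support = [x0, x1, x2, x3, x4, x5] := by
    simp [W, Walk.support_cons]
  refine ⟨W, ?_, by simp [W], hsupp, ?_⟩
  · rw [Walk.isPath_def, hsupp]
    simp only [List.nodup_cons, List.mem_cons, List.not_mem_nil, or_false, List.mem_singleton,
      List.nodup_nil, and_true]
    push_neg
    exact ⟨⟨a01.ne, d02, d03, d04, d05⟩, ⟨a12.ne, d13, d14, d15⟩, ⟨a23.ne, d24, d25⟩,
      ⟨a34.ne, d35⟩, a45.ne, trivial⟩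
  · have e01 : W.toSubgraph.Adj x0 x1 := by simp [W, Walk.toSubgraph]
    have e12 : W.toSubgraph.Adj x1 x2 := by simp [W, Walk.toSubgraph]
    have e23 : W.toSubgraph.Adj x2 x3 := by simp [W, Walk.toSubgraph]
    have e34 : W.toSubgraph.Adj x3 x4 := by simp [W, Walk.toSubgraph]
    have e45 : W.toSubgraph.Adj x4 x5 := by simp [W, Walk.toSubgraph]
    intro x y hx hy hadj
    rw [hsupp] at hx hy
    simp only [List.mem_cons, List.not_mem_nil, or_false, List.mem_singleton] at hx hy
    rcases hx with rfl|rfl|rfl|rfl|rfl|rfl <;> rcases hy with rfl|rfl|rfl|rfl|rfl|rfl <;>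
      first
        | exact absurd rfl hadj.ne
        | exact e01 | exact e01.symm | exact e12 | exact e12.symm | exact e23 | exact e23.symm
        | exact e34 | exact e34.symm | exact e45 | exact e45.symm
        | exact absurd hadj n02 | exact absurd hadj.symm n02
        | exact absurd hadj n03 | exact absurd hadj.symm n03
        | exact absurd hadj n04 | exact absurd hadj.symm n04
        | exact absurd hadj n05 | exact absurd hadj.symm n05
        | exact absurd hadj n13 | exact absurd hadj.symm n13
        | exact absurd hadj n14 | exact absurd hadj.symm n14
        | exact absurd hadj n15 | exact absurd hadj.symm n15
        | exact absurd hadj n24 | exact absurd hadj.symm n24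
        | exact absurd hadj n25 | exact absurd hadj.symm n25
        | exact absurd hadj n35 | exact absurd hadj.symm n35

lemma conn (hg : (5 : ℕ∞) ≤ G.egirth)
    (hodd : ∀ n : ℕ, Odd n → 9 ≤ n → ¬ G.HasInducedCycle n)
    (hL : G.IsStableLevelling L k) (hk : 2 ≤ k)
    {u w1 w2 v : V} (hu : u ∈ L k) (hw1 : w1 ∈ L k) (hw2 : w2 ∈ L k) (hv : v ∈ L k)
    (a1 : G.Adj u w1) (a2 : G.Adj w1 w2) (a3 : G.Adj w2 v)
    (n1 : ¬ G.Adj u w2) (n2 : ¬ G.Adj w1 v) (n3 : ¬ G.Adj u v) (hne : u ≠ v)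
    (H1 : ∀ p ∈ L (k-1), G.Adj p u → ¬G.Adj p w1 ∧ ¬G.Adj p w2 ∧ ¬G.Adj p v)
    (H2 : ∀ p ∈ L (k-1), G.Adj p v → ¬G.Adj p w1 ∧ ¬G.Adj p w2 ∧ ¬G.Adj p u) :
    ∃ P Q R, P ∈ L (k-1) ∧ Q ∈ L (k-1) ∧ R ∈ L (k-2) ∧
      G.Adj P u ∧ G.Adj Q v ∧ G.Adj R P ∧ G.Adj R Q := by
  obtain ⟨P, hP, hPu⟩ := level_parent hL (by omega) le_rfl hu
  obtain ⟨Q, hQ, hQv⟩ := level_parent hL (by omega) le_rfl hv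
  by_cases hq : ∃ R ∈ L (k - 1 - 1), G.Adj R P ∧ G.Adj R Q
  · obtain ⟨R, hR, hRP, hRQ⟩ := hq
    rw [show k - 1 - 1 = k - 2 by omega] at hR
    exact ⟨P, Q, R, hP, hQ, hR, hPu, hQv, hRP, hRQ⟩
  · exfalso
    have hPQadj : ¬ G.Adj P Q := hL.2 (k-1) (by omega) P hP Q hQ
    have hPQne : P ≠ Q := fun h => (H1 P hP hPu).2.2 (h ▸ hQv)
    have hkne : k - 1 ≠ k := by omega
    have hk1 : k - 1 ≤ k := by omega
    obtain ⟨W, hpath, hlen, hsupp, hind⟩ := explicit_path5 (G := G)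
      hPu a1 a2 a3 hQv.symm
      (H1 P hP hPu).1 (H1 P hP hPu).2.1 (H1 P hP hPu).2.2 hPQadj
      n1 n3 (fun h => (H2 Q hQ hQv).2.2 h.symm)
      n2 (fun h => (H2 Q hQ hQv).1 h.symm) (fun h => (H2 Q hQ hQv).2.1 h.symm)
      (level_ne hL hk1 le_rfl hkne hP hw1) (level_ne hL hk1 le_rfl hkne hP hw2)
      (level_ne hL hk1 le_rfl hkne hP hv) hPQne
      (fun h => n3 (h ▸ a3)) hne (level_ne hL le_rfl hk1 hkne.symm hu hQ)
      (fun h => n3 (h ▸ a1)) (level_ne hL le_rfl hk1 hkne.symm hw1 hQ)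
      (level_ne hL le_rfl hk1 hkne.symm hw2 hQ)
    apply core hg hodd hL (k - 1) (by omega) (by omega) P Q W hP hQ hPQadj hpath hind
      (by rw [hlen]; exact ⟨2, rfl⟩) (by omega)
    · intro x hx hxP hxQ
      rw [hsupp] at hx
      simp only [List.mem_cons, List.not_mem_nil, or_false, List.mem_singleton] at hx
      have hkk : k - 1 + 1 ≤ k := by omega
      rcases hx with rfl|rfl|rfl|rfl|rfl|rfl
      · exact absurd rfl hxP
      · exact ⟨k, hkk, le_rfl, hu⟩
      · exact ⟨k, hkk, le_rfl, hw1⟩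
      · exact ⟨k, hkk, le_rfl, hw2⟩
      · exact ⟨k, hkk, le_rfl, hv⟩
      · exact absurd rfl hxQ
    · exact fun p hp h1 h2 => hq ⟨p, hp, h1, h2⟩

lemma nine (hg : (5 : ℕ∞) ≤ G.egirth)
    (hodd : ∀ n : ℕ, Odd n → 9 ≤ n → ¬ G.HasInducedCycle n)
    (hL : G.IsStableLevelling L k) (hk : 2 ≤ k)
    {u y1 y2 y3 y4 v P Q R : V}
    (hu : u ∈ L k) (h1 : y1 ∈ L k) (h2 : y2 ∈ L k) (h3 : y3 ∈ L k) (h4 : y4 ∈ L k)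
    (hv : v ∈ L k) (hP : P ∈ L (k-1)) (hQ : Q ∈ L (k-1)) (hR : R ∈ L (k-2))
    (a01 : G.Adj u y1) (a12 : G.Adj y1 y2) (a23 : G.Adj y2 y3) (a34 : G.Adj y3 y4)
    (a45 : G.Adj y4 v)
    (hPu : G.Adj P u) (hQv : G.Adj Q v) (hRP : G.Adj R P) (hRQ : G.Adj R Q)
    (n02 : ¬G.Adj u y2) (n03 : ¬G.Adj u y3) (n04 : ¬G.Adj u y4) (n05 : ¬G.Adj u v)
    (n13 : ¬G.Adj y1 y3) (n14 : ¬G.Adj y1 y4) (n15 : ¬G.Adj y1 v)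
    (n24 : ¬G.Adj y2 y4) (n25 : ¬G.Adj y2 v) (n35 : ¬G.Adj y3 v)
    (d02 : u ≠ y2) (d03 : u ≠ y3) (d04 : u ≠ y4) (d05 : u ≠ v)
    (d13 : y1 ≠ y3) (d14 : y1 ≠ y4) (d15 : y1 ≠ v)
    (d24 : y2 ≠ y4) (d25 : y2 ≠ v) (d35 : y3 ≠ v)
    (cP1 : ¬G.Adj P y1) (cP2 : ¬G.Adj P y2) (cP3 : ¬G.Adj P y3) (cP4 : ¬G.Adj P y4)
    (cPv : ¬G.Adj P v)
    (cQ1 : ¬G.Adj Q y1) (cQ2 : ¬G.Adj Q y2) (cQ3 : ¬G.Adj Q y3) (cQ4 : ¬G.Adj Q y4)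
    (cQu : ¬G.Adj Q u) : False := by
  obtain ⟨W, hpath, hlen, hsupp, hind⟩ := explicit_path5 (G := G)
    a01 a12 a23 a34 a45 n02 n03 n04 n05 n13 n14 n15 n24 n25 n35
    d02 d03 d04 d05 d13 d14 d15 d24 d25 d35
  have hmem : ∀ x ∈ W.support, x ∈ L k := by
    intro x hx
    rw [hsupp] at hx
    simp only [List.mem_cons, List.not_mem_nil, or_false, List.mem_singleton] at hx
    rcases hx with rfl|rfl|rfl|rfl|rfl|rfl
    exacts [hu, h1, h2, h3, h4, hv]
  have hkne : k - 1 ≠ k := by omega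
  have hk1 : k - 1 ≤ k := by omega
  have hkne2 : k - 2 ≠ k := by omega
  have hk2 : k - 2 ≤ k := by omega
  have hPQne : P ≠ Q := fun h => cQu (h ▸ hPu)
  have hcyc := close_walk (G := G) W hpath hind hPu hQv.symm hRQ.symm hRP
    (fun x hx hxu => by
      rw [hsupp] at hx
      simp only [List.mem_cons, List.not_mem_nil, or_false, List.mem_singleton] at hx
      rcases hx with rfl|rfl|rfl|rfl|rfl|rfl
      exacts [absurd rfl hxu, cP1, cP2, cP3, cP4, cPv])
    (fun hmm => level_ne hL hk1 le_rfl hkne hP (hmem P hmm) rfl)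
    (fun x hx hxv => by
      rw [hsupp] at hx
      simp only [List.mem_cons, List.not_mem_nil, or_false, List.mem_singleton] at hx
      rcases hx with rfl|rfl|rfl|rfl|rfl|rfl
      exacts [cQu, cQ1, cQ2, cQ3, cQ4, absurd rfl hxv])
    (fun hmm => level_ne hL hk1 le_rfl hkne hQ (hmem Q hmm) rfl)
    (fun x hx => level_noadj hL (by omega) le_rfl (by omega) (hmem x hx) hR)
    (fun hmm => level_ne hL hk2 le_rfl hkne2 hR (hmem R hmm) rfl)
    (hL.2 (k-1) (by omega) P hP Q hQ) hPQne
    (level_ne hL hk1 hk2 (by omega) hP hR)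
    (level_ne hL hk1 hk2 (by omega) hQ hR)
  rw [hlen] at hcyc
  exact hodd 9 (by decide) le_rfl hcyc

end ConnNine

section Extract
variable {V : Type*} {G : SimpleGraph V}

lemma extract {S : Set V} (z : ↥S) (n : ℕ) [NeZero n] (hn3 : 3 ≤ n)
    (hc : ((G.induce S).induce {w : ↥S | (G.induce S).dist z w = 2}).HasInducedCycle n) :
    ∃ (c : ZMod n → V) (m : ZMod n → V),
      (∀ i, c i ∈ S) ∧ (∀ i, m i ∈ S) ∧
      (∀ i, G.Adj (c i) (c (i+1))) ∧
      (∀ i j : ZMod n, j ≠ i + 1 → i ≠ j + 1 → ¬ G.Adj (c i) (c j)) ∧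
      (∀ i j : ZMod n, i ≠ j → c i ≠ c j) ∧
      (∀ i, G.Adj (↑z) (m i)) ∧ (∀ i, G.Adj (m i) (c i)) ∧
      (∀ i, ¬ G.Adj (↑z) (c i)) ∧ (∀ i, (z : V) ≠ c i) := by
  classical
  obtain ⟨v₀, w, hcyc, hlen, hind⟩ := hc
  set G₁ := G.induce S with hG₁
  set D : Set ↥S := {w : ↥S | G₁.dist z w = 2} with hD
  have hadj₂ : ∀ a b : ↥D, (G₁.induce D).Adj a b ↔ G.Adj ((a : ↥S) : V) ((b : ↥S) : V) := by
    intro a b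
    simp [hG₁, SimpleGraph.induce, comap_adj]
  have hval1 : (1 : ZMod n).val = 1 := by
    rw [ZMod.val_one_eq_one_mod]
    exact Nat.mod_eq_of_lt (by omega)
  have hvadd : ∀ i : ZMod n, (i + 1).val = (i.val + 1) % n := by
    intro i
    rw [ZMod.val_add, hval1]
  set c' : ZMod n → ↥D := fun i => w.getVert i.val with hc'
  have hvlt : ∀ i : ZMod n, i.val < n := fun i => ZMod.val_lt i
  have hwlen : w.length = n := hlen
  have hinj' : ∀ i j : ZMod n, c' i = c' j → i = j := by
    intro i j h
    have := getVert_injOn_cycle w hcyc i.val (hwlen ▸ hvlt i) j.val (hwlen ▸ hvlt j) h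
    exact ZMod.val_injective n this
  have hadjsucc : ∀ i : ZMod n, (G₁.induce D).Adj (c' i) (c' (i + 1)) := by
    intro i
    have h1 : i.val < w.length := hwlen ▸ hvlt i
    have := w.adj_getVert_succ h1
    rcases Nat.lt_or_ge (i.val + 1) n with h | h
    · have : c' (i + 1) = w.getVert (i.val + 1) := by
        rw [hc']
        simp only [hvadd i, Nat.mod_eq_of_lt h]
      rw [this]
      exact w.adj_getVert_succ h1
    · have hn : i.val + 1 = n := by omega
      have h0 : (i + 1).val = 0 := by rw [hvadd i, hn, Nat.mod_self]
      have : c' (i + 1) = w.getVert (i.val + 1) := by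
        show w.getVert (i+1).val = w.getVert (i.val + 1)
        rw [h0, hn, ← hwlen, w.getVert_length, w.getVert_zero]
      rw [this]
      exact w.adj_getVert_succ h1
  have hsupmem : ∀ i : ZMod n, (c' i : ↥D) ∈ w.support := by
    intro i
    rw [Walk.mem_support_iff_exists_getVert]
    exact ⟨i.val, rfl, by rw [hwlen]; exact (hvlt i).le⟩
  have hnadj' : ∀ i j : ZMod n, j ≠ i + 1 → i ≠ j + 1 → ¬ (G₁.induce D).Adj (c' i) (c' j) := by
    intro i j hj1 hi1 hadj
    have hx : (c' i : ↥D) ∈ w.toSubgraph.verts := (w.mem_verts_toSubgraph).mpr (hsupmem i)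
    have hy : (c' j : ↥D) ∈ w.toSubgraph.verts := (w.mem_verts_toSubgraph).mpr (hsupmem j)
    have hsub := hind hx hy hadj
    rw [Walk.toSubgraph_adj_iff] at hsub
    obtain ⟨t, hst, htlt⟩ := hsub
    rw [Sym2.eq_iff] at hst
    have htn : t < n := hwlen ▸ htlt
    have hgv : ∀ (s : ℕ), s ≤ n → ∃ s' : ℕ, s' < n ∧ w.getVert s = w.getVert s' ∧ s % n = s' % n := by
      intro s hs
      rcases Nat.lt_or_ge s n with h | h
      · exact ⟨s, h, rfl, rfl⟩
      · have hsn : s = n := by omega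
        refine ⟨0, by omega, ?_, by rw [hsn]; simp [Nat.mod_self]⟩
        rw [hsn, ← hwlen, w.getVert_length, w.getVert_zero]
    rcases hst with ⟨hti, htj⟩ | ⟨htj, hti⟩
    · -- getVert t = c' i, getVert (t+1) = c' j
      have hts : t = i.val := getVert_injOn_cycle w hcyc t (hwlen ▸ htn) i.val (hwlen ▸ hvlt i) hti
      obtain ⟨s', hs'n, hgeq, hmod⟩ := hgv (t + 1) (by omega)
      have : s' = j.val := getVert_injOn_cycle w hcyc s' (hwlen ▸ hs'n) j.val (hwlen ▸ hvlt j)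
        (by rw [← hgeq]; exact htj)
      apply hj1
      have hjv : j.val = (i.val + 1) % n :=
        calc j.val = s' := this.symm
          _ = s' % n := (Nat.mod_eq_of_lt hs'n).symm
          _ = (t+1) % n := hmod.symm
          _ = (i.val+1) % n := by rw [hts]
      have hv2 : (i + 1).val = j.val := by rw [hvadd i, hjv]
      exact (ZMod.val_injective n hv2).symm
    · -- symmetric: getVert t = c' j
      have hts : t = j.val := getVert_injOn_cycle w hcyc t (hwlen ▸ htn) j.val (hwlen ▸ hvlt j) htj
      obtain ⟨s', hs'n, hgeq, hmod⟩ := hgv (t + 1) (by omega)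
      have : s' = i.val := getVert_injOn_cycle w hcyc s' (hwlen ▸ hs'n) i.val (hwlen ▸ hvlt i)
        (by rw [← hgeq]; exact hti)
      apply hi1
      have hiv : i.val = (j.val + 1) % n :=
        calc i.val = s' := this.symm
          _ = s' % n := (Nat.mod_eq_of_lt hs'n).symm
          _ = (t+1) % n := hmod.symm
          _ = (j.val+1) % n := by rw [hts]
      have hv2 : (j + 1).val = i.val := by rw [hvadd j, hiv]
      exact (ZMod.val_injective n hv2).symm
  -- now push down to V
  set c : ZMod n → V := fun i => ((c' i : ↥S) : V) with hcdef
  have hdist : ∀ i : ZMod n, G₁.dist z ((c' i : ↥S)) = 2 := fun i => (c' i).2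
  have hznec : ∀ i, (z : V) ≠ c i := by
    intro i h
    have hzc : z = (c' i : ↥S) := Subtype.coe_injective h
    have h2 := hdist i
    rw [← hzc] at h2
    simp [SimpleGraph.dist_self] at h2
  have hznadj : ∀ i, ¬ G.Adj (↑z) (c i) := by
    intro i hadj
    have h1 : G₁.Adj z ((c' i : ↥S)) := by
      simp only [hG₁, SimpleGraph.induce, comap_adj, Function.Embedding.coe_subtype]
      exact hadj
    have := SimpleGraph.dist_le (Walk.cons h1 Walk.nil)
    rw [hdist i] at this
    simp at this
  have hm : ∀ i : ZMod n, ∃ mv : V, mv ∈ S ∧ G.Adj ↑z mv ∧ G.Adj mv (c i) := by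
    intro i
    have hne0 : G₁.dist z ((c' i : ↥S)) ≠ 0 := by rw [hdist i]; omega
    obtain ⟨p, hp⟩ := SimpleGraph.exists_walk_of_dist_ne_zero hne0
    rw [hdist i] at hp
    have ha1 : G₁.Adj (p.getVert 0) (p.getVert 1) := p.adj_getVert_succ (by omega)
    have ha2 : G₁.Adj (p.getVert 1) (p.getVert 2) := p.adj_getVert_succ (by omega)
    rw [p.getVert_zero] at ha1
    have : p.getVert 2 = ((c' i : ↥S)) := by rw [show (2:ℕ) = p.length by omega]; exact p.getVert_length
    rw [this] at ha2
    refine ⟨↑(p.getVert 1), (p.getVert 1).2, ?_, ?_⟩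
    · simpa only [hG₁, SimpleGraph.induce, comap_adj, Function.Embedding.coe_subtype] using ha1
    · simpa only [hG₁, SimpleGraph.induce, comap_adj, Function.Embedding.coe_subtype] using ha2
  choose m hmS hmz hmc using hm
  refine ⟨c, m, fun i => (c' i : ↥S).2, hmS, ?_, ?_, ?_, hmz, hmc, hznadj, hznec⟩
  · intro i
    have := hadjsucc i
    rwa [hadj₂] at this
  · intro i j hj1 hi1 hadj
    exact hnadj' i j hj1 hi1 ((hadj₂ _ _).mpr hadj)
  · intro i j hij h
    exact hij (hinj' i j (Subtype.coe_injective (Subtype.coe_injective h)))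

end Extract

section Glue5
variable {V : Type*} {G : SimpleGraph V} {L : ℕ → Set V} {k : ℕ}

lemma glue5 (hg : (5 : ℕ∞) ≤ G.egirth)
    (hodd : ∀ n : ℕ, Odd n → 9 ≤ n → ¬ G.HasInducedCycle n)
    (hL : G.IsStableLevelling L k) {S : Set V} (hS : S ⊆ L k)
    {zv : V} (hz : zv ∈ S)
    (c m : ZMod 5 → V) (hcS : ∀ i, c i ∈ S) (hmS : ∀ i, m i ∈ S)
    (hadj : ∀ i, G.Adj (c i) (c (i+1)))
    (hnadj : ∀ i j : ZMod 5, j ≠ i + 1 → i ≠ j + 1 → ¬ G.Adj (c i) (c j))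
    (hinj : ∀ i j : ZMod 5, i ≠ j → c i ≠ c j)
    (hmz : ∀ i, G.Adj zv (m i)) (hmc : ∀ i, G.Adj (m i) (c i))
    (hznadj : ∀ i, ¬ G.Adj zv (c i)) (hznec : ∀ i, zv ≠ c i) : False := by
  have hzL : zv ∈ L k := hS hz
  have hcL : ∀ i, c i ∈ L k := fun i => hS (hcS i)
  have hmL : ∀ i, m i ∈ L k := fun i => hS (hmS i)
  have hmcne : ∀ i j : ZMod 5, m i ≠ c j := fun i j h => hznadj j (h ▸ hmz i)
  -- index helpers
  have e41 : ∀ i : ZMod 5, i + 4 + 1 = i := by decide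
  have e11 : ∀ i : ZMod 5, i + 1 + 1 = i + 2 := by decide
  have e21 : ∀ i : ZMod 5, i + 2 + 1 = i + 3 := by decide
  have e31 : ∀ i : ZMod 5, i + 3 + 1 = i + 4 := by decide
  have hc4i : ∀ i : ZMod 5, G.Adj (c (i+4)) (c i) := fun i => by
    have h := hadj (i+4); rwa [e41 i] at h
  have hc12 : ∀ i : ZMod 5, G.Adj (c (i+1)) (c (i+2)) := fun i => by
    have h := hadj (i+1); rwa [e11 i] at h
  have hc34 : ∀ i : ZMod 5, G.Adj (c (i+3)) (c (i+4)) := fun i => by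
    have h := hadj (i+3); rwa [e31 i] at h
  have hz5 : ∀ i j : ZMod 5, j ≠ i → (j = i + 1 ∨ j = i + 2 ∨ j = i + 3 ∨ j = i + 4) := by
    decide
  have d2 : ∀ i : ZMod 5, i ≠ i + 2 := by decide
  have d3 : ∀ i : ZMod 5, i ≠ i + 3 := by decide
  have hmc_only : ∀ i j : ZMod 5, G.Adj (m i) (c j) → j = i := by
    intro i j h
    by_contra hne
    rcases hz5 i j hne with rfl | rfl | rfl | rfl
    · exact noC3 hg (hmc i) (hadj i) h.symm
    · exact noC4 hg (hmc i) (hadj i) (hc12 i) h.symm (hmcne i (i+1)) (hinj i (i+2) (d2 i))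
    · exact noC4 hg (hmc i) (hc4i i).symm (hc34 i).symm h.symm (hmcne i (i+4))
        (hinj i (i+3) (d3 i))
    · exact noC3 hg (hmc i) (hc4i i).symm h.symm
  have hmne : ∀ i j : ZMod 5, i ≠ j → m i ≠ m j := by
    intro i j hij h
    have := hmc j
    rw [← h] at this
    exact hij (hmc_only i j this).symm
  -- k ≥ 2
  have hk2 : 2 ≤ k := by
    by_contra hklt
    push_neg at hklt
    interval_cases k
    · obtain ⟨v0, hv0⟩ := hL.1.2.1
      rw [hv0] at hzL
      have h2 := hmL 0
      rw [hv0] at h2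
      exact (hmz 0).ne (hzL.trans h2.symm)
    · obtain ⟨v0, hv0⟩ := hL.1.2.1
      obtain ⟨pz, hpz, hpzadj⟩ := level_parent hL le_rfl le_rfl hzL
      obtain ⟨pc, hpc, hpcadj⟩ := level_parent hL le_rfl le_rfl (hcL 0)
      have hpz' : pz = v0 := by rwa [hv0, Set.mem_singleton_iff] at hpz
      have hpc' : pc = v0 := by rwa [hv0, Set.mem_singleton_iff] at hpc
      rw [hpz'] at hpzadj
      rw [hpc'] at hpcadj
      have hv0mem : v0 ∈ L 0 := by rw [hv0]; exact Set.mem_singleton _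
      exact noC4 hg hpzadj (hmz 0) (hmc 0) hpcadj.symm
        (level_ne hL (Nat.zero_le 1) le_rfl (by omega) hv0mem (hmL 0)) (hznec 0)
  have hk1ne : k - 1 ≠ k := by omega
  have hk1le : k - 1 ≤ k := by omega
  have hpne : ∀ {p : V}, p ∈ L (k-1) → ∀ i, p ≠ m i :=
    fun hp i => level_ne hL hk1le le_rfl hk1ne hp (hmL i)
  have hpnec : ∀ {p : V}, p ∈ L (k-1) → ∀ i, p ≠ c i :=
    fun hp i => level_ne hL hk1le le_rfl hk1ne hp (hcL i)
  have hpnez : ∀ {p : V}, p ∈ L (k-1) → p ≠ zv :=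
    fun hp => level_ne hL hk1le le_rfl hk1ne hp hzL
  have hc01 : G.Adj (c 0) (c 1) := by
    have h := hadj 0; rwa [show (0:ZMod 5) + 1 = 1 by decide] at h
  have hc10 : G.Adj (c 1) (c 0) := hc01.symm
  have hc12' : G.Adj (c 1) (c 2) := by
    have h := hadj 1; rwa [show (1:ZMod 5) + 1 = 2 by decide] at h
  have hc23 : G.Adj (c 2) (c 3) := by
    have h := hadj 2; rwa [show (2:ZMod 5) + 1 = 3 by decide] at h
  have hc34' : G.Adj (c 3) (c 4) := by
    have h := hadj 3; rwa [show (3:ZMod 5) + 1 = 4 by decide] at h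
  have hc40 : G.Adj (c 4) (c 0) := by
    have h := hadj 4; rwa [show (4:ZMod 5) + 1 = 0 by decide] at h
  -- Conn for the pair (zv, c 0) via the 3-path zv - m 1 - c 1 - c 0
  obtain ⟨P, Q, R, hP, hQ, hR, hPu, hQv, hRP, hRQ⟩ :=
    conn hg hodd hL hk2 hzL (hmL 1) (hcL 1) (hcL 0)
      (hmz 1) (hmc 1) hc10
      (hznadj 1) (fun h => absurd (hmc_only 1 0 h) (by decide)) (hznadj 0) (hznec 0)
      (fun p hp hpz => ⟨fun h => noC3 hg hpz (hmz 1) h.symm,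
        fun h => noC4 hg hpz (hmz 1) (hmc 1) h.symm (hpne hp 1) (hznec 1),
        fun h => noC4 hg hpz (hmz 0) (hmc 0) h.symm (hpne hp 0) (hznec 0)⟩)
      (fun p hp hpc => ⟨fun h => noC4 hg h (hmc 1) hc10 hpc.symm (hpnec hp 1) (hmcne 1 0),
        fun h => noC3 hg h hc10 hpc.symm,
        fun h => noC4 hg h (hmz 0) (hmc 0) hpc.symm (hpne hp 0) (hznec 0)⟩)
  -- P is clean against everything
  have hPm : ∀ i, ¬ G.Adj P (m i) := fun i h => noC3 hg hPu (hmz i) h.symm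
  have hPc : ∀ i, ¬ G.Adj P (c i) :=
    fun i h => noC4 hg hPu (hmz i) (hmc i) h.symm (hpne hP i) (hznec i)
  -- forced Q facts
  have hQz : ¬ G.Adj Q zv := fun h => noC4 hg h (hmz 0) (hmc 0) hQv.symm (hpne hQ 0) (hznec 0)
  have hQc1 : ¬ G.Adj Q (c 1) := fun h => noC3 hg h hc10 hQv.symm
  have hQc2 : ¬ G.Adj Q (c 2) := fun h => noC4 hg h
    hc12'.symm hc10 hQv.symm (hpnec hQ 1) (hinj 2 0 (by decide))
  have hQc3 : ¬ G.Adj Q (c 3) := fun h => noC4 hg h hc34' hc40 hQv.symm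
    (hpnec hQ 4) (hinj 3 0 (by decide))
  have hQc4 : ¬ G.Adj Q (c 4) := fun h => noC3 hg h hc40 hQv.symm
  by_cases hQm2 : G.Adj Q (m 2)
  · by_cases hQm3 : G.Adj Q (m 3)
    · exact noC4 hg hQm2 (hmz 2).symm (hmz 3) hQm3.symm (hpnez hQ) (hmne 2 3 (by decide))
    · -- backward nine: zv - m3 - c3 - c2 - c1 - c0
      have hc32 : G.Adj (c 3) (c 2) := hc23.symm
      have hc21 : G.Adj (c 2) (c 1) := hc12'.symm
      exact nine hg hodd hL hk2 hzL (hmL 3) (hcL 3) (hcL 2) (hcL 1) (hcL 0) hP hQ hR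
        (hmz 3) (hmc 3) hc32 hc21 hc10 hPu hQv hRP hRQ
        (hznadj 3) (hznadj 2) (hznadj 1) (hznadj 0)
        (fun h => absurd (hmc_only 3 2 h) (by decide))
        (fun h => absurd (hmc_only 3 1 h) (by decide))
        (fun h => absurd (hmc_only 3 0 h) (by decide))
        (hnadj 3 1 (by decide) (by decide)) (hnadj 3 0 (by decide) (by decide))
        (hnadj 2 0 (by decide) (by decide))
        (hznec 3) (hznec 2) (hznec 1) (hznec 0)
        (hmcne 3 2) (hmcne 3 1) (hmcne 3 0)
        (hinj 3 1 (by decide)) (hinj 3 0 (by decide)) (hinj 2 0 (by decide))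
        (hPm 3) (hPc 3) (hPc 2) (hPc 1) (hPc 0)
        hQm3 hQc3 hQc2 hQc1 hQz
  · -- forward nine: zv - m2 - c2 - c3 - c4 - c0
    exact nine hg hodd hL hk2 hzL (hmL 2) (hcL 2) (hcL 3) (hcL 4) (hcL 0) hP hQ hR
      (hmz 2) (hmc 2) hc23 hc34' hc40 hPu hQv hRP hRQ
      (hznadj 2) (hznadj 3) (hznadj 4) (hznadj 0)
      (fun h => absurd (hmc_only 2 3 h) (by decide))
      (fun h => absurd (hmc_only 2 4 h) (by decide))
      (fun h => absurd (hmc_only 2 0 h) (by decide))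
      (hnadj 2 4 (by decide) (by decide)) (hnadj 2 0 (by decide) (by decide))
      (hnadj 3 0 (by decide) (by decide))
      (hznec 2) (hznec 3) (hznec 4) (hznec 0)
      (hmcne 2 3) (hmcne 2 4) (hmcne 2 0)
      (hinj 2 4 (by decide)) (hinj 2 0 (by decide)) (hinj 3 0 (by decide))
      (hPm 2) (hPc 2) (hPc 3) (hPc 4) (hPc 0)
      hQm2 hQc2 hQc3 hQc4 hQz

end Glue5



section Glue7
variable {V : Type*} {G : SimpleGraph V} {L : ℕ → Set V} {k : ℕ}

set_option maxRecDepth 20000 in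
lemma indep3 : ∀ s : Finset (ZMod 7), (∀ i ∈ s, i + 3 ∉ s) → s.card ≤ 3 := by decide

set_option maxRecDepth 20000 in
lemma indep4 : ∀ s : Finset (ZMod 7), (∀ i ∈ s, i + 4 ∉ s) → s.card ≤ 3 := by decide

set_option maxRecDepth 8000 in
lemma glue7 (hg : (5 : ℕ∞) ≤ G.egirth)
    (hodd : ∀ n : ℕ, Odd n → 9 ≤ n → ¬ G.HasInducedCycle n)
    (hL : G.IsStableLevelling L k) {S : Set V} (hS : S ⊆ L k)
    {zv : V} (hz : zv ∈ S)
    (c m : ZMod 7 → V) (hcS : ∀ i, c i ∈ S) (hmS : ∀ i, m i ∈ S)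
    (hadj : ∀ i, G.Adj (c i) (c (i+1)))
    (hnadj : ∀ i j : ZMod 7, j ≠ i + 1 → i ≠ j + 1 → ¬ G.Adj (c i) (c j))
    (hinj : ∀ i j : ZMod 7, i ≠ j → c i ≠ c j)
    (hmz : ∀ i, G.Adj zv (m i)) (hmc : ∀ i, G.Adj (m i) (c i))
    (hznadj : ∀ i, ¬ G.Adj zv (c i)) (hznec : ∀ i, zv ≠ c i) : False := by
  have hzL : zv ∈ L k := hS hz
  have hcL : ∀ i, c i ∈ L k := fun i => hS (hcS i)
  have hmL : ∀ i, m i ∈ L k := fun i => hS (hmS i)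
  have hmcne : ∀ i j : ZMod 7, m i ≠ c j := fun i j h => hznadj j (h ▸ hmz i)
  -- index rewrites
  have e61 : ∀ i : ZMod 7, i + 6 + 1 = i := by decide
  have e11 : ∀ i : ZMod 7, i + 1 + 1 = i + 2 := by decide
  have e21 : ∀ i : ZMod 7, i + 2 + 1 = i + 3 := by decide
  have e31 : ∀ i : ZMod 7, i + 3 + 1 = i + 4 := by decide
  have e41 : ∀ i : ZMod 7, i + 4 + 1 = i + 5 := by decide
  have e51 : ∀ i : ZMod 7, i + 5 + 1 = i + 6 := by decide
  have e33 : ∀ i : ZMod 7, i + 3 + 3 = i + 6 := by decide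
  have e44 : ∀ i : ZMod 7, i + 4 + 4 = i + 1 := by decide
  have e34 : ∀ i : ZMod 7, i + 3 + 4 = i := by decide
  have e43 : ∀ i : ZMod 7, i + 4 + 3 = i := by decide
  have hc61 : ∀ i : ZMod 7, G.Adj (c (i+6)) (c i) := fun i => by
    have h := hadj (i+6); rwa [e61 i] at h
  have hc12 : ∀ i : ZMod 7, G.Adj (c (i+1)) (c (i+2)) := fun i => by
    have h := hadj (i+1); rwa [e11 i] at h
  have hc23a : ∀ i : ZMod 7, G.Adj (c (i+2)) (c (i+3)) := fun i => by
    have h := hadj (i+2); rwa [e21 i] at h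
  have hc34a : ∀ i : ZMod 7, G.Adj (c (i+3)) (c (i+4)) := fun i => by
    have h := hadj (i+3); rwa [e31 i] at h
  have hc45a : ∀ i : ZMod 7, G.Adj (c (i+4)) (c (i+5)) := fun i => by
    have h := hadj (i+4); rwa [e41 i] at h
  have hc56a : ∀ i : ZMod 7, G.Adj (c (i+5)) (c (i+6)) := fun i => by
    have h := hadj (i+5); rwa [e51 i] at h
  have F1 : ∀ x : ZMod 7, x ≠ x + 1 := by decide
  have F2 : ∀ x : ZMod 7, x ≠ x + 1 + 3 := by decide
  have F3 : ∀ x : ZMod 7, x ≠ x + 1 + 4 := by decide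
  have F4 : ∀ x : ZMod 7, x + 2 ≠ x := by decide
  have F5 : ∀ x : ZMod 7, x + 5 ≠ x := by decide
  have F6 : ∀ x : ZMod 7, x + 2 ≠ x + 3 := by decide
  have F7 : ∀ x : ZMod 7, x + 2 ≠ x + 3 + 3 := by decide
  have F8 : ∀ x : ZMod 7, x + 2 ≠ x + 3 + 4 := by decide
  have F9 : ∀ x : ZMod 7, x + 1 ≠ x + 3 := by decide
  have F10 : ∀ x : ZMod 7, x + 1 ≠ x + 3 + 3 := by decide
  have F11 : ∀ x : ZMod 7, x + 1 ≠ x + 3 + 4 := by decide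
  have F12 : ∀ x : ZMod 7, x + 1 ≠ x + 3 + 1 := by decide
  have F13 : ∀ x : ZMod 7, x + 3 ≠ x + 1 + 1 := by decide
  have F14 : ∀ x : ZMod 7, x ≠ x + 3 + 1 := by decide
  have F15 : ∀ x : ZMod 7, x + 3 ≠ x + 1 := by decide
  have F16 : ∀ x : ZMod 7, x ≠ x + 2 + 1 := by decide
  have F17 : ∀ x : ZMod 7, x + 2 ≠ x + 1 := by decide
  have F18 : ∀ x : ZMod 7, x + 3 ≠ x := by decide
  have F19 : ∀ x : ZMod 7, x + 5 ≠ x + 4 := by decide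
  have F20 : ∀ x : ZMod 7, x + 5 ≠ x + 4 + 3 := by decide
  have F21 : ∀ x : ZMod 7, x + 5 ≠ x + 4 + 4 := by decide
  have F22 : ∀ x : ZMod 7, x + 6 ≠ x + 4 := by decide
  have F23 : ∀ x : ZMod 7, x + 6 ≠ x + 4 + 3 := by decide
  have F24 : ∀ x : ZMod 7, x + 6 ≠ x + 4 + 4 := by decide
  have F25 : ∀ x : ZMod 7, x + 6 ≠ x + 4 + 1 := by decide
  have F26 : ∀ x : ZMod 7, x + 4 ≠ x + 6 + 1 := by decide
  have F27 : ∀ x : ZMod 7, x ≠ x + 4 + 1 := by decide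
  have F28 : ∀ x : ZMod 7, x + 4 ≠ x + 1 := by decide
  have F29 : ∀ x : ZMod 7, x ≠ x + 5 + 1 := by decide
  have F30 : ∀ x : ZMod 7, x + 5 ≠ x + 1 := by decide
  have F31 : ∀ x : ZMod 7, x + 4 ≠ x + 6 := by decide
  have F32 : ∀ x : ZMod 7, x + 4 ≠ x := by decide
  have F33 : ∀ x : ZMod 7, ¬(x + 4 = x + 3) := by decide
  have F34 : ∀ x : ZMod 7, ¬(x + 4 = x + 3 + 3) := by decide
  have F35 : ∀ x : ZMod 7, ¬(x + 4 = x + 3 + 4) := by decide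
  have hz7 : ∀ i j : ZMod 7, j ≠ i → j ≠ i + 3 → j ≠ i + 4 →
      (j = i + 1 ∨ j = i + 2 ∨ j = i + 5 ∨ j = i + 6) := by decide
  have dne2 : ∀ i : ZMod 7, i ≠ i + 2 := by decide
  have dne5 : ∀ i : ZMod 7, i ≠ i + 5 := by decide
  have hmc_only7 : ∀ i j : ZMod 7, G.Adj (m i) (c j) → (j = i ∨ j = i + 3 ∨ j = i + 4) := by
    intro i j h
    by_contra hne
    push_neg at hne
    rcases hz7 i j hne.1 hne.2.1 hne.2.2 with rfl | rfl | rfl | rfl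
    · exact noC3 hg (hmc i) (hadj i) h.symm
    · exact noC4 hg (hmc i) (hadj i) (hc12 i) h.symm (hmcne i (i+1)) (hinj i (i+2) (dne2 i))
    · exact noC4 hg (hmc i) (hc61 i).symm (hc56a i).symm h.symm (hmcne i (i+6))
        (hinj i (i+5) (dne5 i))
    · exact noC3 hg (hmc i) (hc61 i).symm h.symm
  have hmc_not : ∀ i j : ZMod 7, j ≠ i → j ≠ i + 3 → j ≠ i + 4 → ¬ G.Adj (m i) (c j) := by
    intro i j h1 h2 h3 h
    rcases hmc_only7 i j h with rfl | rfl | rfl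
    · exact h1 rfl
    · exact h2 rfl
    · exact h3 rfl
  have hAAfalse : ∀ i : ZMod 7, G.Adj (m i) (c (i+3)) → G.Adj (m (i+3)) (c (i+3+3)) → False := by
    intro i h1 h2
    rw [e33 i] at h2
    by_cases hmm : m i = m (i+3)
    · rw [← hmm] at h2
      exact noC3 hg h2 (hc61 i) (hmc i).symm
    · exact noC4 hg (hmz i) h1 (hmc (i+3)).symm (hmz (i+3)).symm (hznec (i+3)) hmm
  have hBBfalse : ∀ i : ZMod 7, G.Adj (m i) (c (i+4)) → G.Adj (m (i+4)) (c (i+4+4)) → False := by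
    intro i h1 h2
    rw [e44 i] at h2
    by_cases hmm : m i = m (i+4)
    · rw [← hmm] at h2
      exact noC3 hg (hmc i) (hadj i) h2.symm
    · exact noC4 hg (hmz i) h1 (hmc (i+4)).symm (hmz (i+4)).symm (hznec (i+4)) hmm
  have hABfalse : ∀ i : ZMod 7, G.Adj (m i) (c (i+3)) → G.Adj (m i) (c (i+4)) → False :=
    fun i h1 h2 => noC3 hg h1 (hc34a i) h2.symm
  -- k ≥ 2
  have hk2 : 2 ≤ k := by
    by_contra hklt
    push_neg at hklt
    interval_cases k
    · obtain ⟨v0, hv0⟩ := hL.1.2.1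
      rw [hv0] at hzL
      have h2 := hmL 0
      rw [hv0] at h2
      exact (hmz 0).ne (hzL.trans h2.symm)
    · obtain ⟨v0, hv0⟩ := hL.1.2.1
      obtain ⟨pz, hpz, hpzadj⟩ := level_parent hL le_rfl le_rfl hzL
      obtain ⟨pc, hpc, hpcadj⟩ := level_parent hL le_rfl le_rfl (hcL 0)
      have hpz' : pz = v0 := by rwa [hv0, Set.mem_singleton_iff] at hpz
      have hpc' : pc = v0 := by rwa [hv0, Set.mem_singleton_iff] at hpc
      rw [hpz'] at hpzadj
      rw [hpc'] at hpcadj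
      have hv0mem : v0 ∈ L 0 := by rw [hv0]; exact Set.mem_singleton _
      exact noC4 hg hpzadj (hmz 0) (hmc 0) hpcadj.symm
        (level_ne hL (Nat.zero_le 1) le_rfl (by omega) hv0mem (hmL 0)) (hznec 0)
  have hk1ne : k - 1 ≠ k := by omega
  have hk1le : k - 1 ≤ k := by omega
  have hpne : ∀ {p : V}, p ∈ L (k-1) → ∀ i, p ≠ m i :=
    fun hp i => level_ne hL hk1le le_rfl hk1ne hp (hmL i)
  have hpnec : ∀ {p : V}, p ∈ L (k-1) → ∀ i, p ≠ c i :=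
    fun hp i => level_ne hL hk1le le_rfl hk1ne hp (hcL i)
  have hpnez : ∀ {p : V}, p ∈ L (k-1) → p ≠ zv :=
    fun hp => level_ne hL hk1le le_rfl hk1ne hp hzL
  -- the main per-index dichotomy
  have main7 : ∀ j : ZMod 7,
      G.Adj (m (j+3)) (c (j+3+4)) ∨ G.Adj (m (j+4)) (c (j+4+3)) := by
    intro j
    by_contra hcon
    push_neg at hcon
    obtain ⟨hnB, hnA⟩ := hcon
    rw [e34 j] at hnB
    rw [e43 j] at hnA
    -- Conn for (zv, c j) via zv - m (j+1) - c (j+1) - c j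
    obtain ⟨P, Q, R, hP, hQ, hR, hPu, hQv, hRP, hRQ⟩ :=
      conn hg hodd hL hk2 hzL (hmL (j+1)) (hcL (j+1)) (hcL j)
        (hmz (j+1)) (hmc (j+1)) (hadj j).symm
        (hznadj (j+1))
        (hmc_not (j+1) j (F1 j) (F2 j) (F3 j))
        (hznadj j) (hznec j)
        (fun p hp hpz => ⟨fun h => noC3 hg hpz (hmz (j+1)) h.symm,
          fun h => noC4 hg hpz (hmz (j+1)) (hmc (j+1)) h.symm (hpne hp (j+1)) (hznec (j+1)),
          fun h => noC4 hg hpz (hmz j) (hmc j) h.symm (hpne hp j) (hznec j)⟩)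
        (fun p hp hpc => ⟨
          fun h => noC4 hg h (hmc (j+1)) (hadj j).symm hpc.symm (hpnec hp (j+1)) (hmcne (j+1) j),
          fun h => noC3 hg h (hadj j).symm hpc.symm,
          fun h => noC4 hg h (hmz j) (hmc j) hpc.symm (hpne hp j) (hznec j)⟩)
    have hPm : ∀ i, ¬ G.Adj P (m i) := fun i h => noC3 hg hPu (hmz i) h.symm
    have hPc : ∀ i, ¬ G.Adj P (c i) :=
      fun i h => noC4 hg hPu (hmz i) (hmc i) h.symm (hpne hP i) (hznec i)
    have hQz : ¬ G.Adj Q zv := fun h => noC4 hg h (hmz j) (hmc j) hQv.symm (hpne hQ j) (hznec j)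
    have hQ1 : ¬ G.Adj Q (c (j+1)) := fun h => noC3 hg h (hadj j).symm hQv.symm
    have hQ2 : ¬ G.Adj Q (c (j+2)) := fun h => noC4 hg h (hc12 j).symm (hadj j).symm hQv.symm
      (hpnec hQ (j+1)) (hinj (j+2) j (F4 j))
    have hQ6 : ¬ G.Adj Q (c (j+6)) := fun h => noC3 hg h (hc61 j) hQv.symm
    have hQ5 : ¬ G.Adj Q (c (j+5)) := fun h => noC4 hg h (hc56a j) (hc61 j) hQv.symm
      (hpnec hQ (j+6)) (hinj (j+5) j (F5 j))
    have hor1 : G.Adj Q (m (j+3)) ∨ G.Adj Q (c (j+3)) := by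
      by_contra hcon2
      push_neg at hcon2
      exact nine hg hodd hL hk2 hzL (hmL (j+3)) (hcL (j+3)) (hcL (j+2)) (hcL (j+1)) (hcL j)
        hP hQ hR
        (hmz (j+3)) (hmc (j+3)) (hc23a j).symm (hc12 j).symm (hadj j).symm
        hPu hQv hRP hRQ
        (hznadj (j+3)) (hznadj (j+2)) (hznadj (j+1)) (hznadj j)
        (hmc_not (j+3) (j+2) (F6 j) (F7 j) (F8 j))
        (hmc_not (j+3) (j+1) (F9 j) (F10 j) (F11 j))
        hnB
        (hnadj (j+3) (j+1) (F12 j) (F13 j))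
        (hnadj (j+3) j (F14 j) (F15 j))
        (hnadj (j+2) j (F16 j) (F17 j))
        (hznec (j+3)) (hznec (j+2)) (hznec (j+1)) (hznec j)
        (hmcne (j+3) (j+2)) (hmcne (j+3) (j+1)) (hmcne (j+3) j)
        (hinj (j+3) (j+1) (F15 j)) (hinj (j+3) j (F18 j))
        (hinj (j+2) j (F4 j))
        (hPm (j+3)) (hPc (j+3)) (hPc (j+2)) (hPc (j+1)) (hPc j)
        hcon2.1 hcon2.2 hQ2 hQ1 hQz
    have hor2 : G.Adj Q (m (j+4)) ∨ G.Adj Q (c (j+4)) := by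
      by_contra hcon2
      push_neg at hcon2
      exact nine hg hodd hL hk2 hzL (hmL (j+4)) (hcL (j+4)) (hcL (j+5)) (hcL (j+6)) (hcL j)
        hP hQ hR
        (hmz (j+4)) (hmc (j+4)) (hc45a j) (hc56a j) (hc61 j)
        hPu hQv hRP hRQ
        (hznadj (j+4)) (hznadj (j+5)) (hznadj (j+6)) (hznadj j)
        (hmc_not (j+4) (j+5) (F19 j) (F20 j) (F21 j))
        (hmc_not (j+4) (j+6) (F22 j) (F23 j) (F24 j))
        hnA
        (hnadj (j+4) (j+6) (F25 j) (F26 j))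
        (hnadj (j+4) j (F27 j) (F28 j))
        (hnadj (j+5) j (F29 j) (F30 j))
        (hznec (j+4)) (hznec (j+5)) (hznec (j+6)) (hznec j)
        (hmcne (j+4) (j+5)) (hmcne (j+4) (j+6)) (hmcne (j+4) j)
        (hinj (j+4) (j+6) (F31 j)) (hinj (j+4) j (F32 j))
        (hinj (j+5) j (F5 j))
        (hPm (j+4)) (hPc (j+4)) (hPc (j+5)) (hPc (j+6)) (hPc j)
        hcon2.1 hcon2.2 hQ5 hQ6 hQz
    have hmne34 : m (j+3) ≠ m (j+4) := by
      intro h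
      have h2 := hmc (j+4)
      rw [← h] at h2
      rcases hmc_only7 (j+3) (j+4) h2 with h' | h' | h'
      · exact absurd h' (F33 j)
      · exact absurd h' (F34 j)
      · exact absurd h' (F35 j)
    rcases hor1 with hq1 | hq2 <;> rcases hor2 with hq3 | hq4
    · exact noC4 hg hq1 (hmz (j+3)).symm (hmz (j+4)) hq3.symm (hpnez hQ) hmne34
    · exact noC4 hg hq1 (hmc (j+3)) (hc34a j) hq4.symm (hpnec hQ (j+3)) (hmcne (j+3) (j+4))
    · exact noC4 hg hq2 (hc34a j) (hmc (j+4)).symm hq3.symm (hpnec hQ (j+4))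
        ((hmcne (j+4) (j+3)).symm)
    · exact noC3 hg hq2 (hc34a j) hq4.symm
  -- pigeonhole
  classical
  set A : Finset (ZMod 7) := Finset.univ.filter (fun i => G.Adj (m i) (c (i+3))) with hA
  set B : Finset (ZMod 7) := Finset.univ.filter (fun i => G.Adj (m i) (c (i+4))) with hB
  have hmemA : ∀ i, i ∈ A ↔ G.Adj (m i) (c (i+3)) := by
    intro i; simp [hA]
  have hmemB : ∀ i, i ∈ B ↔ G.Adj (m i) (c (i+4)) := by
    intro i; simp [hB]
  have hAcard : A.card ≤ 3 := by
    apply indep3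
    intro i hi hi3
    exact hAAfalse i ((hmemA i).mp hi) ((hmemA (i+3)).mp hi3)
  have hBcard : B.card ≤ 3 := by
    apply indep4
    intro i hi hi4
    exact hBBfalse i ((hmemB i).mp hi) ((hmemB (i+4)).mp hi4)
  have hcover : ∀ i : ZMod 7, i ∈ B ∨ i + 1 ∈ A := by
    intro i
    rcases main7 (i + 4) with h | h
    · left
      have hmem : (i + 4 + 3) ∈ B := (hmemB _).mpr h
      rwa [e43 i] at hmem
    · right
      have hmem : (i + 4 + 4) ∈ A := (hmemA _).mpr h
      rwa [e44 i] at hmem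
  have hsub : (Finset.univ : Finset (ZMod 7)) ⊆ B ∪ A.image (fun x => x - 1) := by
    intro i _
    rcases hcover i with h | h
    · exact Finset.mem_union_left _ h
    · apply Finset.mem_union_right
      apply Finset.mem_image.mpr
      exact ⟨i + 1, h, by ring⟩
  have h7 : (Finset.univ : Finset (ZMod 7)).card = 7 := by decide
  have hle := Finset.card_le_card hsub
  have hle2 := Finset.card_union_le B (A.image (fun x => x - 1))
  have hle3 := Finset.card_image_le (s := A) (f := fun x => x - 1)
  omega

end Glue7

/-- If `(L 0, …, L k)` is a stable levelling of a graph `G` of girth at least 5 with no odd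
hole of length at least 9, and `H` is an induced subgraph of `G[L k]`, then for every
`z ∈ V(H)` the subgraph of `H` induced on the vertices at distance exactly 2 from `z` in `H`
contains no 5-hole and no 7-hole. -/
theorem stmt_7 {V : Type*} [Fintype V] (G : SimpleGraph V)
    (hgirth : (5 : ℕ∞) ≤ G.egirth)
    (hodd : ∀ n : ℕ, Odd n → 9 ≤ n → ¬ G.HasInducedCycle n)
    (L : ℕ → Set V) (k : ℕ) (hL : G.IsStableLevelling L k)
    (S : Set V) (hS : S ⊆ L k) (z : ↥S) :
    ¬ ((G.induce S).induce {w : ↥S | (G.induce S).dist z w = 2}).HasInducedCycle 5 ∧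
      ¬ ((G.induce S).induce {w : ↥S | (G.induce S).dist z w = 2}).HasInducedCycle 7 := by
  constructor
  · intro hc
    obtain ⟨c, m, hcS, hmS, hadj, hnadj, hinj, hmz, hmc, hznadj, hznec⟩ :=
      extract (G := G) z 5 (by omega) hc
    exact glue5 hgirth hodd hL hS z.2 c m hcS hmS hadj hnadj hinj hmz hmc hznadj hznec
  · intro hc
    obtain ⟨c, m, hcS, hmS, hadj, hnadj, hinj, hmz, hmc, hznadj, hznec⟩ :=
      extract (G := G) z 7 (by omega) hc
    exact glue7 hgirth hodd hL hS z.2 c m hcS hmS hadj hnadj hinj hmz hmc hznadj hznec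
end

section
/- Let G be a simple graph of girth at least 5 with no odd hole of length at least 9, let (L_0, …, L_k) be a stable levelling of G, let H be an induced subgraph of G[L_k], let z ∈ V(H), and let A be the set of all vertices v ∈ N_H^3(z) such that every parent of v in L_{k-1} is adjacent to z. Then χ(H[A]) ≤ 2. -/
open SimpleGraph

namespace Stmt8Aux

section Basics

variable {V : Type*} {G : SimpleGraph V}

lemma support_eq_map_getVert {u v : V} (w : G.Walk u v) :
    w.support = (List.range (w.length + 1)).map w.getVert := by
  induction w with
  | nil => simp [List.range_succ]
  | @cons a b c h q ih =>
    have key : (List.range (q.length + 1 + 1)).map (Walk.cons h q).getVert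
        = a :: (List.range (q.length + 1)).map q.getVert := by
      rw [List.range_succ_eq_map, List.map_cons, List.map_map]
      rfl
    rw [SimpleGraph.Walk.support_cons, ih, SimpleGraph.Walk.length_cons, key]

lemma edges_eq_map_getVert {u v : V} (w : G.Walk u v) :
    w.edges = (List.range w.length).map (fun i => s(w.getVert i, w.getVert (i + 1))) := by
  induction w with
  | nil => simp
  | @cons a b c h q ih =>
    have key : (List.range (q.length + 1)).map
          (fun i => s((Walk.cons h q).getVert i, (Walk.cons h q).getVert (i + 1)))
        = s(a, q.getVert 0) :: (List.range q.length).map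
          (fun i => s(q.getVert i, q.getVert (i + 1))) := by
      rw [List.range_succ_eq_map, List.map_cons, List.map_map]
      rfl
    rw [SimpleGraph.Walk.edges_cons, ih, SimpleGraph.Walk.length_cons, key,
      SimpleGraph.Walk.getVert_zero]

structure IsRing (G : SimpleGraph V) (n : ℕ) (f : ℕ → V) : Prop where
  three_le : 3 ≤ n
  inj : ∀ i < n, ∀ j < n, f i = f j → i = j
  adj : ∀ i < n, G.Adj (f i) (f ((i + 1) % n))
  chord : ∀ i < n, ∀ j < n, G.Adj (f i) (f j) → j = (i + 1) % n ∨ i = (j + 1) % n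

def climb (G : SimpleGraph V) (n : ℕ) (f : ℕ → V)
    (hadj : ∀ i < n, G.Adj (f i) (f ((i + 1) % n))) :
    (m : ℕ) → 1 ≤ m → m ≤ n → G.Walk (f (n - m)) (f 0)
  | 1, _, hm =>
      Walk.cons (by
        have h := hadj (n - 1) (by omega)
        have e : (n - 1 + 1) % n = 0 := by
          have : n - 1 + 1 = n := by omega
          rw [this, Nat.mod_self]
        rwa [e] at h) Walk.nil
  | (m + 2), _, hm =>
      Walk.cons (by
        have h := hadj (n - (m + 2)) (by omega)
        have e : (n - (m + 2) + 1) % n = n - (m + 2) + 1 := Nat.mod_eq_of_lt (by omega)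
        rwa [e] at h)
      ((climb G n f hadj (m + 1) (by omega) (by omega)).copy
        (congrArg f (by omega)) rfl)

lemma length_climb (n : ℕ) (f : ℕ → V) (hadj : ∀ i < n, G.Adj (f i) (f ((i + 1) % n)))
    (m : ℕ) (h1 : 1 ≤ m) (hm : m ≤ n) : (climb G n f hadj m h1 hm).length = m := by
  induction m with
  | zero => omega
  | succ m ih =>
    cases m with
    | zero => simp [climb]
    | succ m =>
      simp only [climb, Walk.length_cons, Walk.length_copy]
      rw [ih (by omega) (by omega)]

lemma getVert_climb (n : ℕ) (f : ℕ → V) (hadj : ∀ i < n, G.Adj (f i) (f ((i + 1) % n)))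
    (m : ℕ) (h1 : 1 ≤ m) (hm : m ≤ n) (j : ℕ) :
    (climb G n f hadj m h1 hm).getVert j = if j < m then f (n - m + j) else f 0 := by
  induction m generalizing j with
  | zero => omega
  | succ m ih =>
    cases m with
    | zero =>
      cases j with
      | zero => simp [climb]
      | succ j => simp [climb, Walk.getVert_cons_succ, Walk.getVert_of_length_le]
    | succ m =>
      cases j with
      | zero => simp [climb]
      | succ j =>
        simp only [climb, Walk.getVert_cons_succ, Walk.getVert_copy]
        rw [ih (by omega) (by omega) j]
        by_cases hj : j < m + 1
        · rw [if_pos hj, if_pos (by omega)]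
          congr 1
          omega
        · rw [if_neg hj, if_neg (by omega)]

/-- The walk of a ring. -/
def ringWalk {n : ℕ} {f : ℕ → V} (hr : IsRing G n f) : G.Walk (f 0) (f 0) :=
  (climb G n f hr.adj n (by have := hr.three_le; omega) le_rfl).copy
    (congrArg f (by omega)) rfl

lemma length_ringWalk {n : ℕ} {f : ℕ → V} (hr : IsRing G n f) :
    (ringWalk hr).length = n := by
  simp [ringWalk, length_climb]

lemma getVert_ringWalk {n : ℕ} {f : ℕ → V} (hr : IsRing G n f) (j : ℕ) :
    (ringWalk hr).getVert j = if j < n then f j else f 0 := by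
  simp only [ringWalk, Walk.getVert_copy]
  rw [getVert_climb]
  simp

lemma getVert_ringWalk_mod {n : ℕ} {f : ℕ → V} (hr : IsRing G n f) (j : ℕ) (hj : j ≤ n) :
    (ringWalk hr).getVert j = f (j % n) := by
  rw [getVert_ringWalk]
  rcases lt_or_ge j n with h | h
  · rw [if_pos h, Nat.mod_eq_of_lt h]
  · have : j = n := le_antisymm hj h
    subst this
    rw [if_neg (lt_irrefl _), Nat.mod_self]

lemma ring_hasInducedCycle {n : ℕ} {f : ℕ → V} (hr : IsRing G n f) :
    G.HasInducedCycle n := by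
  classical
  have h3 := hr.three_le
  refine ⟨f 0, ringWalk hr, ?_, length_ringWalk hr, ?_⟩
  · rw [Walk.isCycle_def]
    refine ⟨?_, ?_, ?_⟩
    · -- IsTrail : edges nodup
      rw [Walk.isTrail_def, edges_eq_map_getVert, length_ringWalk hr]
      rw [List.nodup_map_iff_inj_on List.nodup_range]
      intro i hi j hj heq
      rw [List.mem_range] at hi hj
      rw [getVert_ringWalk_mod hr i (by omega), getVert_ringWalk_mod hr (i+1) (by omega),
        getVert_ringWalk_mod hr j (by omega), getVert_ringWalk_mod hr (j+1) (by omega)] at heq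
      rw [Nat.mod_eq_of_lt hi, Nat.mod_eq_of_lt hj] at heq
      rw [Sym2.eq_iff] at heq
      rcases heq with ⟨h1, h2⟩ | ⟨h1, h2⟩
      · exact hr.inj i hi j hj h1
      · -- f i = f ((j+1)%n), f ((i+1)%n) = f j
        have e1 : i = (j + 1) % n := hr.inj i hi _ (Nat.mod_lt _ (by omega)) h1
        have e2 : (i + 1) % n = j := hr.inj _ (Nat.mod_lt _ (by omega)) j hj h2
        -- then j ≡ j + 2 [MOD n], contradiction with n ≥ 3 unless i = j anyway
        rcases lt_or_ge (j + 1) n with hj1 | hj1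
        · rw [Nat.mod_eq_of_lt hj1] at e1
          subst e1
          rcases lt_or_ge (j + 2) n with hj2 | hj2
          · rw [show j + 1 + 1 = j + 2 from rfl, Nat.mod_eq_of_lt hj2] at e2
            omega
          · have : (j + 1 + 1) % n = j + 2 - n := by
              have : j + 2 - n < n := by omega
              rw [show j + 1 + 1 = j + 2 from rfl]
              rw [Nat.mod_eq_sub_mod (by omega), Nat.mod_eq_of_lt this]
            omega
        · have hj1' : j + 1 = n := by omega
          rw [hj1', Nat.mod_self] at e1
          subst e1
          simp only [Nat.zero_add] at e2
          rw [Nat.mod_eq_of_lt (by omega)] at e2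
          omega
    · -- ≠ nil
      intro hnil
      have := length_ringWalk hr
      rw [hnil] at this
      simp at this
      omega
    · -- support tail nodup
      rw [support_eq_map_getVert, length_ringWalk hr, List.range_succ_eq_map,
        List.map_cons, List.tail_cons, List.map_map]
      rw [List.nodup_map_iff_inj_on List.nodup_range]
      intro i hi j hj heq
      rw [List.mem_range] at hi hj
      simp only [Function.comp_apply] at heq
      rw [getVert_ringWalk_mod hr _ (by omega), getVert_ringWalk_mod hr _ (by omega)] at heq
      simp only [Nat.succ_eq_add_one] at heq
      rcases lt_or_ge (i + 1) n with hi1 | hi1 <;> rcases lt_or_ge (j + 1) n with hj1 | hj1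
      · rw [Nat.mod_eq_of_lt hi1, Nat.mod_eq_of_lt hj1] at heq
        have := hr.inj _ hi1 _ hj1 heq
        omega
      · have : j + 1 = n := by omega
        rw [Nat.mod_eq_of_lt hi1, this, Nat.mod_self] at heq
        have := hr.inj _ hi1 0 (by omega) heq
        omega
      · have : i + 1 = n := by omega
        rw [Nat.mod_eq_of_lt hj1, this, Nat.mod_self] at heq
        have := hr.inj 0 (by omega) _ hj1 heq
        omega
      · omega
  · -- induced
    intro a ha b hb hab
    rw [Walk.mem_verts_toSubgraph, support_eq_map_getVert, List.mem_map] at ha hb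
    obtain ⟨i, hi, ha⟩ := ha
    obtain ⟨j, hj, hb⟩ := hb
    rw [List.mem_range, length_ringWalk hr] at hi hj
    rw [getVert_ringWalk_mod hr i (by omega)] at ha
    rw [getVert_ringWalk_mod hr j (by omega)] at hb
    set i' := i % n with hi'
    set j' := j % n with hj'
    have hi'n : i' < n := Nat.mod_lt _ (by omega)
    have hj'n : j' < n := Nat.mod_lt _ (by omega)
    subst ha hb
    have hch := hr.chord i' hi'n j' hj'n hab
    rw [Walk.toSubgraph_adj_iff]
    rcases hch with h | h
    · refine ⟨i', ?_, ?_⟩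
      · rw [getVert_ringWalk_mod hr i' (by omega), getVert_ringWalk_mod hr (i'+1) (by omega),
          Nat.mod_eq_of_lt hi'n, h]
      · rw [length_ringWalk hr]; exact hi'n
    · refine ⟨j', ?_, ?_⟩
      · rw [getVert_ringWalk_mod hr j' (by omega), getVert_ringWalk_mod hr (j'+1) (by omega),
          Nat.mod_eq_of_lt hj'n, h, Sym2.eq_swap]
      · rw [length_ringWalk hr]; exact hj'n

lemma length_drop {u v : V} (w : G.Walk u v) (n : ℕ) :
    (w.drop n).length = w.length - n := by
  induction w generalizing n with
  | nil => cases n <;> simp [SimpleGraph.Walk.drop]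
  | @cons a b c h q ih =>
    cases n with
    | zero => simp [SimpleGraph.Walk.drop]
    | succ n => simp [SimpleGraph.Walk.drop, ih]

lemma no_triangle (hg : (5:ℕ∞) ≤ G.egirth) {a b c : V}
    (hab : G.Adj a b) (hbc : G.Adj b c) (hca : G.Adj c a) : False := by
  have hw : (Walk.cons hab (Walk.cons hbc (Walk.cons hca Walk.nil))).IsCycle := by
    have h1 := hab.ne
    have h2 := hbc.ne
    have h3 := hca.ne
    have h4 : a ≠ c := fun h => h3 (h.symm)
    simp [Walk.isCycle_def, Walk.isTrail_def, List.Nodup, Sym2.eq_iff]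
    aesop
  have := le_egirth.mp hg a _ hw
  simp [Walk.length_cons] at this
  exact absurd this (by norm_num)

lemma no_quad (hg : (5:ℕ∞) ≤ G.egirth) {a b c d : V}
    (hab : G.Adj a b) (hbc : G.Adj b c) (hcd : G.Adj c d) (hda : G.Adj d a)
    (hac : a ≠ c) (hbd : b ≠ d) : False := by
  have hw : (Walk.cons hab (Walk.cons hbc (Walk.cons hcd (Walk.cons hda Walk.nil)))).IsCycle := by
    have h1 := hab.ne
    have h2 := hbc.ne
    have h3 := hcd.ne
    have h4 := hda.ne
    simp [Walk.isCycle_def, Walk.isTrail_def, List.Nodup, Sym2.eq_iff]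
    aesop
  have := le_egirth.mp hg a _ hw
  simp [Walk.length_cons] at this
  exact absurd this (by norm_num)

lemma length_rotate {u v : V} [DecidableEq V] (c : G.Walk v v) (h : u ∈ c.support) :
    (c.rotate _ h).length = c.length := by
  have h2 := congrArg Walk.length (c.take_spec h)
  rw [Walk.length_append] at h2
  simp only [Walk.rotate, Walk.length_append]
  omega

lemma edges_of_length_one {x y : V} {p : G.Walk x y} (h : p.length = 1) :
    p.edges = [s(x, y)] := by
  have h1 : p.getVert 1 = y := by
    conv_lhs => rw [show (1:ℕ) = p.length from h.symm]
    exact Walk.getVert_length p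
  rw [edges_eq_map_getVert, h]
  simp [List.range_succ, Walk.getVert_zero, h1]

lemma mem_tail_support_of_mem {u : V} (w : G.Walk u u) (hN : 1 ≤ w.length) {b : V}
    (hb : b ∈ w.support) : b ∈ w.support.tail := by
  rw [Walk.mem_support_iff_exists_getVert] at hb
  obtain ⟨i, hgv, hile⟩ := hb
  have : ∃ j, 1 ≤ j ∧ j ≤ w.length ∧ w.getVert j = b := by
    rcases Nat.eq_zero_or_pos i with h0 | h0
    · subst h0
      rw [Walk.getVert_zero] at hgv
      exact ⟨w.length, hN, le_rfl, by rw [Walk.getVert_length, hgv]⟩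
    · exact ⟨i, h0, hile, hgv⟩
  obtain ⟨j, hj1, hjle, hgv⟩ := this
  rw [support_eq_map_getVert, List.range_succ_eq_map, List.map_cons, List.tail_cons,
    List.map_map]
  rw [List.mem_map]
  refine ⟨j - 1, by rw [List.mem_range]; omega, ?_⟩
  simp only [Function.comp_apply, Nat.succ_eq_add_one]
  rw [show j - 1 + 1 = j by omega]
  exact hgv

lemma odd_closed_walk_ring :
    ∀ N : ℕ, Odd N → ∀ {u : V} (w : G.Walk u u), w.length = N →
    ∃ n g, Odd n ∧ IsRing G n g := by
  intro N
  induction N using Nat.strong_induction_on with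
  | _ N ih =>
  intro hodd u w hlen
  classical
  -- N ≠ 1
  have hN1 : N ≠ 1 := by
    intro h1
    subst h1
    cases w with
    | nil => simp at hlen
    | cons h q =>
      rw [Walk.length_cons] at hlen
      have h0 : q.length = 0 := by omega
      have := Walk.eq_of_length_eq_zero h0
      subst this
      exact h.ne rfl
  have hN3 : 3 ≤ N := by
    rcases hodd with ⟨t, rfl⟩
    omega
  by_cases hnod : w.support.tail.Nodup
  · by_cases hch : ∃ a b, a ∈ w.support ∧ b ∈ w.support ∧ G.Adj a b ∧ s(a, b) ∉ w.edges
    · -- chord surgery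
      obtain ⟨a, b, ha, hb, hadj, hne⟩ := hch
      have w1 := w.rotate _ ha
      set w1 : G.Walk a a := w.rotate _ ha with hw1
      have hlen1 : w1.length = N := by rw [hw1, length_rotate, hlen]
      have hedges1 : ∀ e, e ∈ w1.edges ↔ e ∈ w.edges := by
        intro e
        exact (Walk.rotate_edges w _ ha).perm.mem_iff
      have hb1 : b ∈ w1.support := by
        have htail : w1.support.tail ~r w.support.tail := Walk.support_rotate w _ ha
        have hbt : b ∈ w.support.tail := mem_tail_support_of_mem w (by omega) hb
        have : b ∈ w1.support.tail := htail.perm.mem_iff.mpr hbt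
        have := List.mem_of_mem_tail this
        exact this
      set q1 : G.Walk a b := w1.takeUntil b hb1 with hq1
      set q2 : G.Walk b a := w1.dropUntil b hb1 with hq2
      have hspec : q1.append q2 = w1 := w1.take_spec hb1
      have hsum : q1.length + q2.length = N := by
        have := congrArg Walk.length hspec
        rw [Walk.length_append] at this
        omega
      have hab : a ≠ b := hadj.ne
      have ha2 : 2 ≤ q1.length := by
        rcases Nat.lt_or_ge q1.length 2 with h | h
        · interval_cases h' : q1.length
          · exact absurd (Walk.eq_of_length_eq_zero h') hab
          · exfalso
            apply hne
            rw [← hedges1]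
            apply Walk.edges_takeUntil_subset w1 hb1
            rw [← hq1] at *
            rw [edges_of_length_one h']
            simp
        · exact h
      have hb2 : 2 ≤ q2.length := by
        rcases Nat.lt_or_ge q2.length 2 with h | h
        · interval_cases h' : q2.length
          · exact absurd (Walk.eq_of_length_eq_zero h').symm hab
          · exfalso
            apply hne
            rw [← hedges1]
            apply Walk.edges_dropUntil_subset w1 hb1
            rw [← hq2] at *
            rw [edges_of_length_one h']
            rw [Sym2.eq_swap]
            simp
        · exact h
      set c1 : G.Walk a a := q1.concat hadj.symm with hc1
      set c2 : G.Walk b b := q2.concat hadj with hc2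
      have hlc1 : c1.length = q1.length + 1 := Walk.length_concat _ _
      have hlc2 : c2.length = q2.length + 1 := Walk.length_concat _ _
      rcases Nat.even_or_odd c1.length with he | ho
      · have hco : Odd c2.length := by
          rcases he with ⟨s, hs⟩
          rcases hodd with ⟨t, ht⟩
          exact ⟨t - s + 1, by omega⟩
        exact ih c2.length (by omega) hco c2 rfl
      · exact ih c1.length (by omega) ho c1 rfl
    · -- no chord: build ring
      push_neg at hch
      have hinj : ∀ i' < N, ∀ j' < N, w.getVert i' = w.getVert j' → i' = j' := by
        have htail : w.support.tail = (List.range N).map (fun t => w.getVert (t + 1)) := by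
          rw [support_eq_map_getVert, hlen, List.range_succ_eq_map, List.map_cons,
            List.tail_cons, List.map_map]
          rfl
        rw [htail] at hnod
        have hinj0 := (List.nodup_map_iff_inj_on List.nodup_range).mp hnod
        intro i hi j hj heq
        have hgvN : w.getVert N = u := by rw [← hlen]; exact Walk.getVert_length w
        rcases Nat.eq_zero_or_pos i with hi0 | hi0 <;> rcases Nat.eq_zero_or_pos j with hj0 | hj0
        · omega
        · subst hi0
          rw [Walk.getVert_zero] at heq
          have := hinj0 (N - 1) (by rw [List.mem_range]; omega) (j - 1)
            (by rw [List.mem_range]; omega)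
          rw [show N - 1 + 1 = N by omega, show j - 1 + 1 = j by omega, hgvN] at this
          have := this heq
          omega
        · subst hj0
          rw [Walk.getVert_zero] at heq
          have := hinj0 (N - 1) (by rw [List.mem_range]; omega) (i - 1)
            (by rw [List.mem_range]; omega)
          rw [show N - 1 + 1 = N by omega, show i - 1 + 1 = i by omega, hgvN] at this
          have := this heq.symm
          omega
        · have := hinj0 (i - 1) (by rw [List.mem_range]; omega) (j - 1)
            (by rw [List.mem_range]; omega)
          rw [show i - 1 + 1 = i by omega, show j - 1 + 1 = j by omega] at this
          have := this heq
          omega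
      refine ⟨N, w.getVert, hodd, ?_, ?_, ?_, ?_⟩
      · exact hN3
      · exact hinj
      · -- adjacency
        intro i hi
        have hadj1 := w.adj_getVert_succ (by omega : i < w.length)
        rcases Nat.lt_or_ge (i + 1) N with h | h
        · rwa [Nat.mod_eq_of_lt h]
        · have hiN : i + 1 = N := by omega
          have h3 : w.getVert N = u := by rw [← hlen]; exact w.getVert_length
          rw [show (i + 1) % N = 0 by rw [hiN, Nat.mod_self], Walk.getVert_zero]
          rw [hiN, h3] at hadj1
          exact hadj1
      · -- chordless
        intro i hi j hj hadj
        have hmem : ∀ t, t ≤ N → w.getVert t ∈ w.support := by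
          intro t ht
          rw [Walk.mem_support_iff_exists_getVert]
          exact ⟨t, rfl, by omega⟩
        have hedge : s(w.getVert i, w.getVert j) ∈ w.edges :=
          hch _ _ (hmem i (by omega)) (hmem j (by omega)) hadj
        rw [edges_eq_map_getVert, List.mem_map] at hedge
        obtain ⟨t, htm, hts⟩ := hedge
        rw [List.mem_range, hlen] at htm
        have hgv1 : w.getVert (t + 1) = w.getVert ((t + 1) % N) := by
          rcases Nat.lt_or_ge (t + 1) N with h | h
          · rw [Nat.mod_eq_of_lt h]
          · have : t + 1 = N := by omega
            rw [this, Nat.mod_self, Walk.getVert_zero, ← hlen, Walk.getVert_length]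
        rw [hgv1] at hts
        rw [Sym2.eq_iff] at hts
        rcases hts with ⟨h1, h2⟩ | ⟨h1, h2⟩
        · left
          have e1 : t = i := hinj t (by omega) i hi h1
          have e2 : (t + 1) % N = j := hinj _ (Nat.mod_lt _ (by omega)) j hj h2
          rw [← e1]
          exact e2.symm
        · right
          have e1 : t = j := hinj t (by omega) j hj h1
          have e2 : (t + 1) % N = i := hinj _ (Nat.mod_lt _ (by omega)) i hi h2
          rw [← e1]
          exact e2.symm
  · -- has duplicate vertex: split
    rw [← List.exists_duplicate_iff_not_nodup] at hnod
    obtain ⟨x, hdup⟩ := hnod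
    have hcount : 2 ≤ w.support.tail.count x := List.duplicate_iff_two_le_count.mp hdup
    have hxsup : x ∈ w.support := List.mem_of_mem_tail hdup.mem
    set w1 : G.Walk x x := w.rotate _ hxsup with hw1
    have hlen1 : w1.length = N := by rw [hw1, length_rotate, hlen]
    have hcount1 : 2 ≤ w1.support.tail.count x := by
      have htail : w1.support.tail ~r w.support.tail := Walk.support_rotate w _ hxsup
      rw [htail.perm.count_eq]
      exact hcount
    cases hw : w1 with
    | nil =>
      rw [hw] at hlen1
      simp at hlen1
      omega
    | @cons _ y _ h p =>
      have hsupp : w1.support.tail = p.support := by rw [hw, Walk.support_cons, List.tail_cons]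
      have hxp : x ∈ p.support := by
        have : 0 < p.support.count x := by
          rw [← hsupp]
          omega
        exact List.count_pos_iff.mp this
      set q1 : G.Walk y x := p.takeUntil x hxp with hq1
      set q2 : G.Walk x x := p.dropUntil x hxp with hq2
      have hspec : q1.append q2 = p := p.take_spec hxp
      have hsum : q1.length + q2.length = p.length := by
        have := congrArg Walk.length hspec
        rwa [Walk.length_append] at this
      have hplen : p.length + 1 = N := by
        have := congrArg Walk.length hw
        rw [Walk.length_cons] at this
        omega
      have hq2pos : 1 ≤ q2.length := by
        by_contra hcon
        have h0 : q2.length = 0 := by omega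
        have hq2nil : q2 = Walk.nil := Walk.nil_iff_eq_nil.mp (Walk.length_eq_zero_iff.mp h0)
        have hps : p.support = q1.support ++ q2.support.tail := by
          rw [← hspec, Walk.support_append]
        rw [hsupp, hps, hq2nil] at hcount1
        simp [List.count_append] at hcount1
        have hcnt1 : q1.support.count x = 1 := p.count_support_takeUntil_eq_one hxp
        omega
      set c1 : G.Walk x x := Walk.cons h q1 with hc1
      have hlc1 : c1.length = q1.length + 1 := Walk.length_cons _ _
      rcases Nat.even_or_odd c1.length with he | ho
      · have hco : Odd q2.length := by
          rcases he with ⟨s2, hs2⟩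
          rcases hodd with ⟨t2, ht2⟩
          exact ⟨t2 - s2, by omega⟩
        exact ih q2.length (by omega) hco q2 rfl
      · exact ih c1.length (by omega) ho c1 rfl

end Basics

lemma colorable_of_no_odd_ring {W : Type*} (Γ : SimpleGraph W)
    (h : ∀ n (g : ℕ → W), Odd n → ¬ IsRing Γ n g) : Γ.Colorable 2 := by
  classical
  have hnow : ∀ (u : W) (w : Γ.Walk u u), ¬ Odd w.length := by
    intro u w hw
    obtain ⟨n, g, hn, hring⟩ := odd_closed_walk_ring w.length hw w rfl
    exact h n g hn hring
  refine ⟨⟨fun v => if ∃ w : Γ.Walk (Γ.connectedComponentMk v).out v, Even w.length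
      then (0 : Fin 2) else 1, ?_⟩⟩
  intro u v huv
  beta_reduce
  have hcomp : Γ.connectedComponentMk u = Γ.connectedComponentMk v :=
    ConnectedComponent.sound huv.reachable
  have hru : Γ.Reachable (Γ.connectedComponentMk u).out u := by
    have := (Γ.connectedComponentMk u).out_eq
    exact ConnectedComponent.exact this
  have hrv : Γ.Reachable (Γ.connectedComponentMk u).out v := by
    rw [hcomp]
    have := (Γ.connectedComponentMk v).out_eq
    exact ConnectedComponent.exact this
  set r := (Γ.connectedComponentMk u).out with hr
  rw [← hcomp]
  by_cases h1 : ∃ w : Γ.Walk r u, Even w.length <;>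
    by_cases h2 : ∃ w : Γ.Walk r v, Even w.length
  · -- both even: contradiction
    exfalso
    obtain ⟨p, hp⟩ := h1
    obtain ⟨q, hq⟩ := h2
    have hwalk : Γ.Walk u u := p.reverse.append (q.append (Walk.cons huv.symm Walk.nil))
    apply hnow u (p.reverse.append (q.append (Walk.cons huv.symm Walk.nil)))
    rw [Walk.length_append, Walk.length_append, Walk.length_reverse, Walk.length_cons,
      Walk.length_nil]
    rcases hp with ⟨a, ha⟩
    rcases hq with ⟨b, hb⟩
    exact ⟨a + b, by omega⟩
  · rw [if_pos h1, if_neg h2]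
    simp
  · rw [if_neg h1, if_pos h2]
    simp
  · exfalso
    obtain ⟨p⟩ := hru
    obtain ⟨q⟩ := hrv
    push_neg at h1 h2
    have hp : Odd p.length := Nat.not_even_iff_odd.mp (h1 p)
    have hq : Odd q.length := Nat.not_even_iff_odd.mp (h2 q)
    apply hnow u (p.reverse.append (q.append (Walk.cons huv.symm Walk.nil)))
    rw [Walk.length_append, Walk.length_append, Walk.length_reverse, Walk.length_cons,
      Walk.length_nil]
    rcases hp with ⟨a, ha⟩
    rcases hq with ⟨b, hb⟩
    exact ⟨a + b + 1, by omega⟩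

section Levels

variable {V : Type*} {G : SimpleGraph V} {L : ℕ → Set V} {k : ℕ}

/-- uniqueness of levels -/
lemma level_unique (hL : G.IsStableLevelling L k) {u : V} {a b : ℕ}
    (ha : u ∈ L a) (hb : u ∈ L b) (hak : a ≤ k) (hbk : b ≤ k) : a = b := by
  by_contra hne
  exact Set.disjoint_left.mp (hL.1.1 a hak b hbk hne) ha hb

/-- adjacent vertices in levels `≤ k` are in consecutive levels (if one is `< k`). -/
lemma adj_level_step (hL : G.IsStableLevelling L k) {u v : V} {a b : ℕ}
    (ha : u ∈ L a) (hb : v ∈ L b) (hak : a ≤ k) (hbk : b ≤ k)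
    (hlt : a < k ∨ b < k)
    (hadj : G.Adj u v) : b = a + 1 ∨ a = b + 1 := by
  rcases lt_trichotomy a b with h | h | h
  · left
    by_contra hne
    have h2 : a + 2 ≤ b := by omega
    exact ((hL.1.2.2 b (by omega) hbk v hb).2 a h2 u ha) hadj
  · exfalso
    subst h
    have : a < k := by omega
    exact hL.2 a this u ha v hb hadj
  · right
    by_contra hne
    have h2 : b + 2 ≤ a := by omega
    exact ((hL.1.2.2 a (by omega) hak u ha).2 b h2 v hb) hadj.symm

/-- every vertex in a level `1 ≤ h` has a parent -/
lemma exists_parent (hL : G.IsStableLevelling L k) {u : V} {h : ℕ}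
    (hu : u ∈ L h) (h1 : 1 ≤ h) (hk : h ≤ k) : ∃ p ∈ L (h - 1), G.Adj p u :=
  (hL.1.2.2 h h1 hk u hu).1


lemma pair_lemma (hgirth : (5:ℕ∞) ≤ G.egirth)
    (hodd : ∀ n : ℕ, Odd n → 9 ≤ n → ¬ G.HasInducedCycle n)
    (hL : G.IsStableLevelling L k) (hk : 2 ≤ k)
    {z x y c1 c2 c3 c4 : V}
    (hz : z ∈ L k) (hx : x ∈ L (k-1)) (hy : y ∈ L (k-1))
    (hc1 : c1 ∈ L k) (hc2 : c2 ∈ L k) (hc3 : c3 ∈ L k) (hc4 : c4 ∈ L k)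
    (hxz : G.Adj x z) (hyz : G.Adj y z) (hxy : x ≠ y)
    (hcne : c1 ≠ c3 ∧ c1 ≠ c4 ∧ c2 ≠ c4)
    (e0 : G.Adj x c1) (e1 : G.Adj c1 c2) (e2 : G.Adj c2 c3) (e3 : G.Adj c3 c4)
    (e4 : G.Adj c4 y)
    (n0 : ¬ G.Adj x c2) (n1 : ¬ G.Adj x c3) (n2 : ¬ G.Adj x c4)
    (n3 : ¬ G.Adj c1 c3) (n4 : ¬ G.Adj c1 c4) (n5 : ¬ G.Adj c1 y)
    (n6 : ¬ G.Adj c2 c4) (n7 : ¬ G.Adj c2 y) (n8 : ¬ G.Adj c3 y) : False := by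
  classical
  have hk1 : k - 1 < k := by omega
  have hnxy : ¬ G.Adj x y := hL.2 (k-1) hk1 x hx y hy
  -- the set of lower levels together with x and y
  set U : Set V := {v | (∃ h, h ≤ k-2 ∧ v ∈ L h) ∨ v = x ∨ v = y} with hU
  have hxU : x ∈ U := by right; left; rfl
  have hyU : y ∈ U := by right; right; rfl
  set Γ : SimpleGraph ↥U := G.induce U with hΓ
  have hΓadj : ∀ (a b : ↥U), Γ.Adj a b ↔ G.Adj a.val b.val := by
    intro a b; rfl
  -- level of every element of U
  have ulevel : ∀ u : ↥U, ∃ h, h ≤ k - 1 ∧ (u : V) ∈ L h := by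
    rintro ⟨u, hu | hu | hu⟩
    · obtain ⟨h, hh, hmem⟩ := hu
      exact ⟨h, by omega, hmem⟩
    · subst hu; exact ⟨k-1, le_rfl, hx⟩
    · subst hu; exact ⟨k-1, le_rfl, hy⟩
  -- walk parity in Γ
  have parity : ∀ (p q : ↥U) (w : Γ.Walk p q) (a b : ℕ),
      (p : V) ∈ L a → (q : V) ∈ L b → a ≤ k-1 → b ≤ k-1 →
      (w.length + a + b) % 2 = 0 := by
    intro p q w
    induction w with
    | nil =>
      intro a b hpa hqb hak hbk
      have := level_unique hL hpa hqb (by omega) (by omega)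
      subst this
      simp [Nat.add_mul_mod_self_left]
      omega
    | @cons p p' q e w ih =>
      intro a b hpa hqb hak hbk
      obtain ⟨a', ha'k, hpa'⟩ := ulevel p'
      have hadj : G.Adj (p : V) (p' : V) := (hΓadj _ _).mp e
      have hstep := adj_level_step hL hpa hpa' (by omega) (by omega) (by omega) hadj
      have hr := ih a' b hpa' hqb ha'k hbk
      rw [Walk.length_cons]
      omega
  -- reachability from any low level to x
  have hv₀ := hL.1.2.1
  obtain ⟨v₀, hv₀⟩ := hv₀
  have hreach : ∀ h, ∀ u, h ≤ k - 2 → u ∈ L h → ∀ (hu : u ∈ U),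
      Γ.Reachable ⟨u, hu⟩ ⟨v₀, by left; exact ⟨0, by omega, by rw [hv₀]; rfl⟩⟩ := by
    intro h
    induction h with
    | zero =>
      intro u hh hu huU
      have : u = v₀ := by rw [hv₀] at hu; exact hu
      subst this
      rfl
    | succ m ihm =>
      intro u hh hu huU
      obtain ⟨p, hp, hpadj⟩ := exists_parent hL hu (by omega) (by omega)
      simp only [Nat.add_sub_cancel] at hp
      have hpU : p ∈ U := by left; exact ⟨m, by omega, hp⟩
      have : Γ.Adj ⟨u, huU⟩ ⟨p, hpU⟩ := (hΓadj _ _).mpr hpadj.symm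
      exact this.reachable.trans (ihm p (by omega) hp hpU)
  -- x and y are reachable in Γ
  have hxyreach : Γ.Reachable ⟨x, hxU⟩ ⟨y, hyU⟩ := by
    obtain ⟨px, hpx, hpxadj⟩ := exists_parent hL hx (by omega) (by omega)
    obtain ⟨py, hpy, hpyadj⟩ := exists_parent hL hy (by omega) (by omega)
    have hk11 : k - 1 - 1 = k - 2 := by omega
    rw [hk11] at hpx hpy
    have hpxU : px ∈ U := by left; exact ⟨k-2, le_rfl, hpx⟩
    have hpyU : py ∈ U := by left; exact ⟨k-2, le_rfl, hpy⟩
    have ha : Γ.Adj ⟨x, hxU⟩ ⟨px, hpxU⟩ := (hΓadj _ _).mpr hpxadj.symm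
    have hb : Γ.Adj ⟨y, hyU⟩ ⟨py, hpyU⟩ := (hΓadj _ _).mpr hpyadj.symm
    exact (ha.reachable.trans (hreach _ _ le_rfl hpx hpxU)).trans
      ((hb.reachable.trans (hreach _ _ le_rfl hpy hpyU)).symm)
  set x' : ↥U := ⟨x, hxU⟩ with hx'
  set y' : ↥U := ⟨y, hyU⟩ with hy'
  obtain ⟨w, hwlen⟩ := hxyreach.exists_walk_length_eq_dist
  set d := Γ.dist x' y' with hd
  have hdeven : d % 2 = 0 := by
    have := parity x' y' w (k-1) (k-1) hx hy le_rfl le_rfl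
    rw [hwlen] at this
    omega
  -- prefix walks
  have hpre : ∀ i, i ≤ d → ∃ p : Γ.Walk x' (w.getVert i), p.length = i := by
    intro i hi
    have he : w.reverse.getVert (d - i) = w.getVert i := by
      rw [Walk.getVert_reverse]
      congr 1
      omega
    refine ⟨((w.reverse.drop (d - i)).copy he rfl).reverse, ?_⟩
    rw [Walk.length_reverse, Walk.length_copy, length_drop, Walk.length_reverse, hwlen]
    omega
  have hgd : ∀ i, i ≤ d → Γ.dist x' (w.getVert i) = i := by
    intro i hi
    obtain ⟨p, hp⟩ := hpre i hi
    have hle : Γ.dist x' (w.getVert i) ≤ i := by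
      have := SimpleGraph.dist_le p
      omega
    have hge : i ≤ Γ.dist x' (w.getVert i) := by
      by_contra hcon
      push_neg at hcon
      obtain ⟨p2, hp2len⟩ :=
        SimpleGraph.Reachable.exists_walk_length_eq_dist (⟨p⟩ : Γ.Reachable x' (w.getVert i))
      have h3 : Γ.dist x' y' ≤ p2.length + (w.drop i).length := by
        have := SimpleGraph.dist_le (p2.append (w.drop i))
        rwa [Walk.length_append] at this
      rw [length_drop, hwlen, hp2len] at h3
      omega
    omega
  -- d ≥ 4
  have hd0 : d ≠ 0 := by
    intro h0
    have : x' = y' := (hxyreach.dist_eq_zero_iff).mp h0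
    exact hxy (congrArg Subtype.val this)
  have hd2 : d ≠ 2 := by
    intro h2
    have h01 : Γ.Adj (w.getVert 0) (w.getVert 1) := w.adj_getVert_succ (by omega)
    have h12 : Γ.Adj (w.getVert 1) (w.getVert 2) := w.adj_getVert_succ (by omega)
    have hgv0 : w.getVert 0 = x' := w.getVert_zero
    have hgv2 : w.getVert 2 = y' := by
      rw [show (2:ℕ) = w.length by omega]
      exact w.getVert_length
    rw [hgv0] at h01
    rw [hgv2] at h12
    set m := w.getVert 1 with hm
    have hmx : m ≠ x' := fun h => (h ▸ h01).ne rfl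
    have hmy : m ≠ y' := fun h => (h ▸ h12).ne' rfl
    have hmU := m.property
    have hmlow : ∃ h, h ≤ k - 2 ∧ (m : V) ∈ L h := by
      rcases hmU with h | h | h
      · exact h
      · exact absurd (Subtype.ext h) hmx
      · exact absurd (Subtype.ext h) hmy
    obtain ⟨hm1, hm1k, hm1mem⟩ := hmlow
    have hmz : (m : V) ≠ z := by
      intro heq
      have := level_unique hL (heq ▸ hm1mem) hz (by omega) le_rfl
      omega
    exact no_quad hgirth ((hΓadj _ _).mp h01) ((hΓadj _ _).mp h12) hyz hxz.symm hxy hmz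
  have hd4 : 4 ≤ d := by omega
  -- the bottom path as a function
  set g : ℕ → V := fun i => ((w.getVert i : ↥U) : V) with hgdef
  have g0 : g 0 = x := by
    show ((w.getVert 0 : ↥U) : V) = x
    rw [w.getVert_zero]
  have gdy : g d = y := by
    show ((w.getVert d : ↥U) : V) = y
    rw [← hwlen, w.getVert_length]
  have ginj : ∀ i, i ≤ d → ∀ j, j ≤ d → g i = g j → i = j := by
    intro i hi j hj heq
    have heq2 : w.getVert i = w.getVert j := Subtype.ext heq
    have h1 := hgd i hi
    have h2 := hgd j hj
    rw [heq2] at h1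
    omega
  have gadj : ∀ i, i < d → G.Adj (g i) (g (i+1)) := by
    intro i hi
    exact (hΓadj _ _).mp (w.adj_getVert_succ (by omega))
  have gchord : ∀ i j, i + 1 < j → j ≤ d → ¬ G.Adj (g i) (g j) := by
    intro i j hij hj hadj
    obtain ⟨p, hp⟩ := hpre i (by omega)
    have hd1 : Γ.dist x' (w.getVert j) ≤ i + 1 := by
      have := SimpleGraph.dist_le (p.concat ((hΓadj _ _).mpr hadj))
      rw [Walk.length_concat, hp] at this
      exact this
    have := hgd j hj
    omega
  have glow : ∀ i, 1 ≤ i → i < d → ∃ h, h ≤ k - 2 ∧ g i ∈ L h := by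
    intro i h1 h2
    rcases (w.getVert i).property with h | h | h
    · exact h
    · exfalso
      have hgx : w.getVert i = x' := Subtype.ext h
      have hdd := hgd i (by omega)
      rw [hgx, SimpleGraph.dist_self] at hdd
      omega
    · exfalso
      have hgy : w.getVert i = y' := Subtype.ext h
      have hdd := hgd i (by omega)
      rw [hgy, ← hd] at hdd
      omega
  -- inequality helpers
  have hneLev : ∀ {u v : V} {a b : ℕ}, u ∈ L a → v ∈ L b → a ≤ k → b ≤ k → a ≠ b → u ≠ v := by
    intro u v a b hu hv hak hbk hab heq
    exact hab (level_unique hL (heq ▸ hu) hv hak hbk)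
  have xc1 : x ≠ c1 := hneLev hx hc1 (by omega) le_rfl (by omega)
  have xc2 : x ≠ c2 := hneLev hx hc2 (by omega) le_rfl (by omega)
  have xc3 : x ≠ c3 := hneLev hx hc3 (by omega) le_rfl (by omega)
  have xc4 : x ≠ c4 := hneLev hx hc4 (by omega) le_rfl (by omega)
  have yc1 : c1 ≠ y := hneLev hc1 hy le_rfl (by omega) (by omega)
  have yc2 : c2 ≠ y := hneLev hc2 hy le_rfl (by omega) (by omega)
  have yc3 : c3 ≠ y := hneLev hc3 hy le_rfl (by omega) (by omega)
  have yc4 : c4 ≠ y := hneLev hc4 hy le_rfl (by omega) (by omega)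
  have hbot_ne : ∀ m, m < d → g (d - m) ≠ x ∧ g (d - m) ≠ c1 ∧ g (d - m) ≠ c2 ∧
      g (d - m) ≠ c3 ∧ g (d - m) ≠ c4 := by
    intro m hm
    rcases Nat.eq_zero_or_pos m with h0 | h0
    · subst h0
      rw [Nat.sub_zero, gdy]
      exact ⟨hxy.symm, yc1.symm, yc2.symm, yc3.symm, yc4.symm⟩
    · obtain ⟨h, hh, hmem⟩ := glow (d - m) (by omega) (by omega)
      exact ⟨hneLev hmem hx (by omega) (by omega) (by omega),
        hneLev hmem hc1 (by omega) le_rfl (by omega),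
        hneLev hmem hc2 (by omega) le_rfl (by omega),
        hneLev hmem hc3 (by omega) le_rfl (by omega),
        hneLev hmem hc4 (by omega) le_rfl (by omega)⟩
  have hnoadj_bot : ∀ {u : V}, u ∈ L k → ∀ m, 1 ≤ m → m < d → ¬ G.Adj u (g (d - m)) := by
    intro u hu m h1 h2 hadj
    obtain ⟨h, hh, hmem⟩ := glow (d - m) (by omega) (by omega)
    exact (hL.1.2.2 k (by omega) le_rfl u hu).2 h (by omega) (g (d - m)) hmem hadj.symm
  -- the big odd ring
  set nn := d + 5 with hnn
  set F : ℕ → V := fun i => match i with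
    | 0 => x
    | 1 => c1
    | 2 => c2
    | 3 => c3
    | 4 => c4
    | (m+5) => g (d - m)
    with hFdef
  have Finj : ∀ i, i < nn → ∀ j, j < nn → F i = F j → i = j := by
    intro i hi j hj heq
    rcases i with _|_|_|_|_|mi <;> rcases j with _|_|_|_|_|mj <;>
      first
      | rfl
      | (exact absurd heq xc1)
      | (exact absurd heq xc2)
      | (exact absurd heq xc3)
      | (exact absurd heq xc4)
      | (exact absurd heq.symm xc1)
      | (exact absurd heq.symm xc2)
      | (exact absurd heq.symm xc3)
      | (exact absurd heq.symm xc4)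
      | (exact absurd heq e1.ne)
      | (exact absurd heq.symm e1.ne)
      | (exact absurd heq e2.ne)
      | (exact absurd heq.symm e2.ne)
      | (exact absurd heq e3.ne)
      | (exact absurd heq.symm e3.ne)
      | (exact absurd heq hcne.1)
      | (exact absurd heq.symm hcne.1)
      | (exact absurd heq hcne.2.1)
      | (exact absurd heq.symm hcne.2.1)
      | (exact absurd heq hcne.2.2)
      | (exact absurd heq.symm hcne.2.2)
      | (exact absurd heq.symm (hbot_ne _ (by omega)).1)
      | (exact absurd heq.symm (hbot_ne _ (by omega)).2.1)
      | (exact absurd heq.symm (hbot_ne _ (by omega)).2.2.1)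
      | (exact absurd heq.symm (hbot_ne _ (by omega)).2.2.2.1)
      | (exact absurd heq.symm (hbot_ne _ (by omega)).2.2.2.2)
      | (exact absurd heq (hbot_ne _ (by omega)).1)
      | (exact absurd heq (hbot_ne _ (by omega)).2.1)
      | (exact absurd heq (hbot_ne _ (by omega)).2.2.1)
      | (exact absurd heq (hbot_ne _ (by omega)).2.2.2.1)
      | (exact absurd heq (hbot_ne _ (by omega)).2.2.2.2)
      | (have := ginj (d - mi) (by omega) (d - mj) (by omega) heq; omega)
  have Fadj : ∀ i, i < nn → G.Adj (F i) (F ((i + 1) % nn)) := by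
    intro i hi
    rcases i with _|_|_|_|_|mi
    · rw [Nat.mod_eq_of_lt (by omega)]; exact e0
    · rw [Nat.mod_eq_of_lt (by omega)]; exact e1
    · rw [Nat.mod_eq_of_lt (by omega)]; exact e2
    · rw [Nat.mod_eq_of_lt (by omega)]; exact e3
    · rw [Nat.mod_eq_of_lt (by omega)]
      show G.Adj c4 (g (d - 0))
      rw [Nat.sub_zero, gdy]
      exact e4
    · rcases Nat.lt_or_ge (mi + 5 + 1) nn with hlt | hge
      · rw [Nat.mod_eq_of_lt hlt]
        show G.Adj (g (d - mi)) (g (d - (mi + 1)))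
        have := gadj (d - mi - 1) (by omega)
        rw [show d - mi - 1 + 1 = d - mi by omega] at this
        rw [show d - (mi + 1) = d - mi - 1 by omega]
        exact this.symm
      · rw [show (mi + 5 + 1) % nn = 0 by
          rw [show mi + 5 + 1 = nn by omega, Nat.mod_self]]
        show G.Adj (g (d - mi)) x
        have := gadj 0 (by omega)
        rw [g0] at this
        rw [show d - mi = 1 by omega]
        exact this.symm
  have claimLT : ∀ i j, i < j → j < nn → G.Adj (F i) (F j) →
      j = i + 1 ∨ (i = 0 ∧ j = nn - 1) := by
    intro i j hij hj hadj
    rcases i with _|_|_|_|_|mi <;> rcases j with _|_|_|_|_|mj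
    all_goals try omega
    -- (0,2)
    · exact absurd hadj n0
    -- (0,3)
    · exact absurd hadj n1
    -- (0,4)
    · exact absurd hadj n2
    -- (0, mj+5)
    · have hadj' : G.Adj x (g (d - mj)) := hadj
      rcases Nat.eq_zero_or_pos mj with h0 | h0
      · subst h0
        rw [Nat.sub_zero, gdy] at hadj'
        exact absurd hadj' hnxy
      · rcases Nat.lt_or_ge mj (d - 1) with hlt | hge
        · have hch := gchord 0 (d - mj) (by omega) (by omega)
          rw [g0] at hch
          exact absurd hadj' hch
        · right
          exact ⟨rfl, by omega⟩
    -- (1,3)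
    · exact absurd hadj n3
    -- (1,4)
    · exact absurd hadj n4
    -- (1, mj+5)
    · have hadj' : G.Adj c1 (g (d - mj)) := hadj
      rcases Nat.eq_zero_or_pos mj with h0 | h0
      · subst h0
        rw [Nat.sub_zero, gdy] at hadj'
        exact absurd hadj' n5
      · exact absurd hadj' (hnoadj_bot hc1 mj h0 (by omega))
    -- (2,4)
    · exact absurd hadj n6
    -- (2, mj+5)
    · have hadj' : G.Adj c2 (g (d - mj)) := hadj
      rcases Nat.eq_zero_or_pos mj with h0 | h0
      · subst h0
        rw [Nat.sub_zero, gdy] at hadj'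
        exact absurd hadj' n7
      · exact absurd hadj' (hnoadj_bot hc2 mj h0 (by omega))
    -- (3, mj+5)
    · have hadj' : G.Adj c3 (g (d - mj)) := hadj
      rcases Nat.eq_zero_or_pos mj with h0 | h0
      · subst h0
        rw [Nat.sub_zero, gdy] at hadj'
        exact absurd hadj' n8
      · exact absurd hadj' (hnoadj_bot hc3 mj h0 (by omega))
    -- (4, mj+5)
    · have hadj' : G.Adj c4 (g (d - mj)) := hadj
      rcases Nat.eq_zero_or_pos mj with h0 | h0
      · subst h0
        left
        omega
      · exact absurd hadj' (hnoadj_bot hc4 mj h0 (by omega))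
    -- (mi+5, mj+5)
    · have hadj' : G.Adj (g (d - mi)) (g (d - mj)) := hadj
      rcases Nat.lt_or_ge (d - mj + 1) (d - mi) with hlt | hge
      · exact absurd hadj'.symm (gchord (d - mj) (d - mi) (by omega) (by omega))
      · left
        omega
  have Fchord : ∀ i, i < nn → ∀ j, j < nn → G.Adj (F i) (F j) →
      j = (i + 1) % nn ∨ i = (j + 1) % nn := by
    intro i hi j hj hadj
    rcases lt_trichotomy i j with h | h | h
    · rcases claimLT i j h hj hadj with h1 | ⟨h1, h2⟩
      · left
        rw [Nat.mod_eq_of_lt (by omega)]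
        omega
      · right
        subst h1
        rw [show j + 1 = nn by omega, Nat.mod_self]
    · subst h
      exact absurd hadj (G.loopless.irrefl _)
    · rcases claimLT j i h hi hadj.symm with h1 | ⟨h1, h2⟩
      · right
        rw [Nat.mod_eq_of_lt (by omega)]
        omega
      · left
        subst h1
        rw [show i + 1 = nn by omega, Nat.mod_self]
  have hring : IsRing G nn F :=
    ⟨by omega, Finj, Fadj, Fchord⟩
  exact hodd nn ⟨d / 2 + 2, by omega⟩ (by omega) (ring_hasInducedCycle hring)




end Levels

end Stmt8Aux

open Stmt8Aux in
/-- If `(L 0, …, L k)` is a stable levelling of a graph `G` of girth at least 5 with no odd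
hole of length at least 9, `H` is an induced subgraph of `G[L k]`, `z ∈ V(H)`, and `A` is the
set of vertices of `H` at distance exactly 3 from `z` in `H` all of whose parents in `L (k-1)`
are adjacent to `z`, then `H[A]` is 2-colorable. -/
theorem stmt_8 {V : Type*} [Fintype V] (G : SimpleGraph V)
    (hgirth : (5 : ℕ∞) ≤ G.egirth)
    (hodd : ∀ n : ℕ, Odd n → 9 ≤ n → ¬ G.HasInducedCycle n)
    (L : ℕ → Set V) (k : ℕ) (hL : G.IsStableLevelling L k)
    (S : Set V) (hS : S ⊆ L k) (z : ↥S) :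
    ((G.induce S).induce {v : ↥S | (G.induce S).dist z v = 3 ∧
        ∀ u ∈ L (k - 1), G.Adj u (v : V) → G.Adj u (z : V)}).chromaticNumber ≤ 2 := by
  classical
  set A : Set ↥S := {v : ↥S | (G.induce S).dist z v = 3 ∧
      ∀ u ∈ L (k - 1), G.Adj u (v : V) → G.Adj u (z : V)} with hA
  set J : SimpleGraph ↥A := (G.induce S).induce A with hJ
  have h2 : ((2 : ℕ) : ℕ∞) = (2 : ℕ∞) := rfl
  rw [← h2]
  apply Colorable.chromaticNumber_le
  apply colorable_of_no_odd_ring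
  intro m f hm hring
  -- push the ring down to G
  set v : ℕ → V := fun i => (((f i : ↥A) : ↥S) : V) with hv
  have hvS : ∀ i, v i ∈ S := fun i => ((f i : ↥A) : ↥S).property
  have hvL : ∀ i, v i ∈ L k := fun i => hS (hvS i)
  have hJadj : ∀ a b : ↥A, J.Adj a b ↔ G.Adj ((a : ↥S) : V) ((b : ↥S) : V) := fun a b => Iff.rfl
  have hm3 := hring.three_le
  have hinj : ∀ i < m, ∀ j < m, v i = v j → i = j := by
    intro i hi j hj heq
    exact hring.inj i hi j hj (Subtype.ext (Subtype.ext heq))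
  have hadj : ∀ i < m, G.Adj (v i) (v ((i + 1) % m)) := by
    intro i hi
    exact (hJadj _ _).mp (hring.adj i hi)
  have hchord : ∀ i < m, ∀ j < m, G.Adj (v i) (v j) → j = (i + 1) % m ∨ i = (j + 1) % m := by
    intro i hi j hj hadj'
    exact hring.chord i hi j hj ((hJadj _ _).mpr hadj')
  have hnon : ∀ i < m, ∀ j < m, j ≠ (i + 1) % m → i ≠ (j + 1) % m → ¬ G.Adj (v i) (v j) := by
    intro i hi j hj h1 h2 hadj'
    rcases hchord i hi j hj hadj' with h | h
    · exact h1 h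
    · exact h2 h
  -- membership facts of the ring vertices in A
  have hAprop : ∀ i, (G.induce S).dist z (f i : ↥A) = 3 ∧
      ∀ u ∈ L (k - 1), G.Adj u (v i) → G.Adj u (z : V) := fun i => (f i : ↥A).property
  have hvz : ∀ i, v i ≠ (z : V) := by
    intro i heq
    have h3 := (hAprop i).1
    have : ((f i : ↥A) : ↥S) = z := Subtype.ext heq
    rw [this, SimpleGraph.dist_self] at h3
    exact absurd h3 (by norm_num)
  -- k = 0 is impossible
  rcases Nat.eq_zero_or_pos k with hk0 | hk0
  · obtain ⟨v₀, hv₀⟩ := hL.1.2.1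
    have h0 : v 0 = v₀ := by have := hvL 0; rw [hk0, hv₀] at this; exact this
    have h1 : v 1 = v₀ := by have := hvL 1; rw [hk0, hv₀] at this; exact this
    have := hinj 0 (by omega) 1 (by omega) (h0.trans h1.symm)
    omega
  -- now k ≥ 1; parents of ring vertices
  have hpar : ∀ i, ∃ p, p ∈ L (k-1) ∧ G.Adj p (v i) ∧ G.Adj p (z : V) := by
    intro i
    obtain ⟨p, hp, hpadj⟩ := exists_parent hL (hvL i) (by omega) le_rfl
    exact ⟨p, hp, hpadj, (hAprop i).2 p hp hpadj⟩
  have hneLev : ∀ {a b : V} {s t : ℕ}, a ∈ L s → b ∈ L t → s ≤ k → t ≤ k → s ≠ t → a ≠ b := by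
    intro a b s t hu hw hsk htk hst heq
    exact hst (level_unique hL (heq ▸ hu) hw hsk htk)
  have hk2 : ∀ {p q : V}, p ∈ L (k-1) → q ∈ L (k-1) → p ≠ q → 2 ≤ k := by
    intro p q hp hq hpq
    by_contra hcon
    have hk1 : k = 1 := by omega
    obtain ⟨v₀, hv₀⟩ := hL.1.2.1
    rw [hk1, Nat.sub_self, hv₀] at hp hq
    exact hpq (hp.trans hq.symm)
  have hzL : (z : V) ∈ L k := hS z.property
  have hringG : IsRing G m v := ⟨hm3, hinj, hadj, hchord⟩
  have dne : ∀ i, i < m → ∀ j, j < m → i ≠ j → v i ≠ v j := by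
    intro i hi j hj hne heq
    exact hne (hinj i hi j hj heq)
  by_cases hm3' : m = 3
  · subst hm3'
    have a0 : G.Adj (v 0) (v 1) := by have := hadj 0 (by omega); norm_num at this; exact this
    have a1 : G.Adj (v 1) (v 2) := by have := hadj 1 (by omega); norm_num at this; exact this
    have a2 : G.Adj (v 2) (v 0) := by have := hadj 2 (by omega); norm_num at this; exact this
    exact no_triangle hgirth a0 a1 a2
  by_cases hm5 : m = 5
  · subst hm5
    have a0 : G.Adj (v 0) (v 1) := by have := hadj 0 (by omega); norm_num at this; exact this
    have a1 : G.Adj (v 1) (v 2) := by have := hadj 1 (by omega); norm_num at this; exact this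
    have a2 : G.Adj (v 2) (v 3) := by have := hadj 2 (by omega); norm_num at this; exact this
    have a3 : G.Adj (v 3) (v 4) := by have := hadj 3 (by omega); norm_num at this; exact this
    have a4 : G.Adj (v 4) (v 0) := by have := hadj 4 (by omega); norm_num at this; exact this
    obtain ⟨x, hxL, hxv, hxz⟩ := hpar 0
    obtain ⟨y, hyL, hyv, hyz⟩ := hpar 2
    have d02 : v 0 ≠ v 2 := dne 0 (by omega) 2 (by omega) (by omega)
    have d03 : v 0 ≠ v 3 := dne 0 (by omega) 3 (by omega) (by omega)
    have d42 : v 4 ≠ v 2 := dne 4 (by omega) 2 (by omega) (by omega)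
    have hxv1 : x ≠ v 1 := hneLev hxL (hvL 1) (by omega) le_rfl (by omega)
    have hxv4 : x ≠ v 4 := hneLev hxL (hvL 4) (by omega) le_rfl (by omega)
    have hyv1 : y ≠ v 1 := hneLev hyL (hvL 1) (by omega) le_rfl (by omega)
    have hyv3 : y ≠ v 3 := hneLev hyL (hvL 3) (by omega) le_rfl (by omega)
    have hxy : x ≠ y := by
      intro heq
      subst heq
      exact no_quad hgirth hxv a0 a1 hyv.symm hxv1 d02
    have hk2' : 2 ≤ k := hk2 hxL hyL hxy
    exact pair_lemma hgirth hodd hL hk2' hzL hxL hyL (hvL 0) (hvL 4) (hvL 3) (hvL 2)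
      hxz hyz hxy ⟨d03, d02, d42⟩
      hxv a4.symm a3.symm a2.symm hyv.symm
      (fun h => no_triangle hgirth hxv a4.symm h.symm)
      (fun h => no_quad hgirth hxv a4.symm a3.symm h.symm hxv4 d03)
      (fun h => no_quad hgirth hxv a0 a1 h.symm hxv1 d02)
      (hnon 0 (by omega) 3 (by omega) (by norm_num) (by norm_num))
      (hnon 0 (by omega) 2 (by omega) (by norm_num) (by norm_num))
      (fun h => no_quad hgirth h.symm a0 a1 hyv.symm hyv1 d02)
      (hnon 4 (by omega) 2 (by omega) (by norm_num) (by norm_num))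
      (fun h => no_quad hgirth h.symm a3.symm a2.symm hyv.symm hyv3 d42)
      (fun h => no_triangle hgirth h.symm a2.symm hyv.symm)
  by_cases hm7 : m = 7
  · subst hm7
    have a0 : G.Adj (v 0) (v 1) := by have := hadj 0 (by omega); norm_num at this; exact this
    have a1 : G.Adj (v 1) (v 2) := by have := hadj 1 (by omega); norm_num at this; exact this
    have a2 : G.Adj (v 2) (v 3) := by have := hadj 2 (by omega); norm_num at this; exact this
    have a3 : G.Adj (v 3) (v 4) := by have := hadj 3 (by omega); norm_num at this; exact this
    have a4 : G.Adj (v 4) (v 5) := by have := hadj 4 (by omega); norm_num at this; exact this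
    have a5 : G.Adj (v 5) (v 6) := by have := hadj 5 (by omega); norm_num at this; exact this
    have a6 : G.Adj (v 6) (v 0) := by have := hadj 6 (by omega); norm_num at this; exact this
    obtain ⟨x, hxL, hxv, hxz⟩ := hpar 0
    by_cases hB : G.Adj x (v 3)
    · obtain ⟨y, hyL, hyv, hyz⟩ := hpar 6
      have hxy : x ≠ y := by
        intro heq
        exact no_triangle hgirth (heq ▸ hyv) a6 hxv.symm
      have hk2' : 2 ≤ k := hk2 hxL hyL hxy
      by_cases hw : G.Adj y (v 3)
      · exact no_quad hgirth hB hw.symm hyz hxz.symm hxy (hvz 3)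
      · exact pair_lemma hgirth hodd hL hk2' hzL hxL hyL (hvL 3) (hvL 4) (hvL 5) (hvL 6)
          hxz hyz hxy
          ⟨dne 3 (by omega) 5 (by omega) (by omega), dne 3 (by omega) 6 (by omega) (by omega),
            dne 4 (by omega) 6 (by omega) (by omega)⟩
          hB a3 a4 a5 hyv.symm
          (fun h => no_triangle hgirth hB a3 h.symm)
          (fun h => no_quad hgirth hB a3 a4 h.symm
            (hneLev hxL (hvL 4) (by omega) le_rfl (by omega))
            (dne 3 (by omega) 5 (by omega) (by omega)))
          (fun h => no_triangle hgirth h a6 hxv.symm)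
          (hnon 3 (by omega) 5 (by omega) (by norm_num) (by norm_num))
          (hnon 3 (by omega) 6 (by omega) (by norm_num) (by norm_num))
          (fun h => hw h.symm)
          (hnon 4 (by omega) 6 (by omega) (by norm_num) (by norm_num))
          (fun h => no_quad hgirth h.symm a4 a5 hyv.symm
            (hneLev hyL (hvL 5) (by omega) le_rfl (by omega))
            (dne 4 (by omega) 6 (by omega) (by omega)))
          (fun h => no_triangle hgirth h.symm a5 hyv.symm)
    · by_cases hC : G.Adj x (v 4)
      · obtain ⟨y, hyL, hyv, hyz⟩ := hpar 1
        have hxy : x ≠ y := by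
          intro heq
          exact no_triangle hgirth hxv a0 (heq ▸ hyv).symm
        have hk2' : 2 ≤ k := hk2 hxL hyL hxy
        by_cases hw : G.Adj y (v 4)
        · exact no_quad hgirth hC hw.symm hyz hxz.symm hxy (hvz 4)
        · exact pair_lemma hgirth hodd hL hk2' hzL hxL hyL (hvL 4) (hvL 3) (hvL 2) (hvL 1)
            hxz hyz hxy
            ⟨dne 4 (by omega) 2 (by omega) (by omega), dne 4 (by omega) 1 (by omega) (by omega),
              dne 3 (by omega) 1 (by omega) (by omega)⟩
            hC a3.symm a2.symm a1.symm hyv.symm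
            (fun h => no_triangle hgirth hC a3.symm h.symm)
            (fun h => no_quad hgirth hC a3.symm a2.symm h.symm
              (hneLev hxL (hvL 3) (by omega) le_rfl (by omega))
              (dne 4 (by omega) 2 (by omega) (by omega)))
            (fun h => no_triangle hgirth h a0.symm hxv.symm)
            (hnon 4 (by omega) 2 (by omega) (by norm_num) (by norm_num))
            (hnon 4 (by omega) 1 (by omega) (by norm_num) (by norm_num))
            (fun h => hw h.symm)
            (hnon 3 (by omega) 1 (by omega) (by norm_num) (by norm_num))
            (fun h => no_quad hgirth h.symm a2.symm a1.symm hyv.symm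
              (hneLev hyL (hvL 2) (by omega) le_rfl (by omega))
              (dne 3 (by omega) 1 (by omega) (by omega)))
            (fun h => no_triangle hgirth h.symm a1.symm hyv.symm)
      · obtain ⟨y, hyL, hyv, hyz⟩ := hpar 4
        have hxy : x ≠ y := fun heq => hC (heq ▸ hyv)
        have hk2' : 2 ≤ k := hk2 hxL hyL hxy
        by_cases hw : G.Adj y (v 0)
        · exact no_quad hgirth hxv hw.symm hyz hxz.symm hxy (hvz 0)
        · exact pair_lemma hgirth hodd hL hk2' hzL hxL hyL (hvL 0) (hvL 6) (hvL 5) (hvL 4)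
            hxz hyz hxy
            ⟨dne 0 (by omega) 5 (by omega) (by omega), dne 0 (by omega) 4 (by omega) (by omega),
              dne 6 (by omega) 4 (by omega) (by omega)⟩
            hxv a6.symm a5.symm a4.symm hyv.symm
            (fun h => no_triangle hgirth hxv a6.symm h.symm)
            (fun h => no_quad hgirth hxv a6.symm a5.symm h.symm
              (hneLev hxL (hvL 6) (by omega) le_rfl (by omega))
              (dne 0 (by omega) 5 (by omega) (by omega)))
            hC
            (hnon 0 (by omega) 5 (by omega) (by norm_num) (by norm_num))
            (hnon 0 (by omega) 4 (by omega) (by norm_num) (by norm_num))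
            (fun h => hw h.symm)
            (hnon 6 (by omega) 4 (by omega) (by norm_num) (by norm_num))
            (fun h => no_quad hgirth h.symm a5.symm a4.symm hyv.symm
              (hneLev hyL (hvL 5) (by omega) le_rfl (by omega))
              (dne 6 (by omega) 4 (by omega) (by omega)))
            (fun h => no_triangle hgirth h.symm a4.symm hyv.symm)
  · have h9 : 9 ≤ m := by
      rcases hm with ⟨t, ht⟩
      omega
    exact hodd m hm h9 (ring_hasInducedCycle hringG)
end
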